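/- arXiv:1611.04420 — 6 statements merged into one kernel-verified Lean document; each statement's English description precedes it below -/
import Mathlib

section
/- Let d ≥ 1. For arbitrary points x, y ∈ S^d, ∫_{−1}^{1} σ( C(x,t) ∩ C(y,t) ) dt = 1 − C_d ‖x − y‖, where ‖·‖ is the Euclidean norm in ℝ^{d+1}. -/
open MeasureTheory Metric Set
open scoped RealInnerProductSpace ENNReal

noncomputable section

/-- The unit sphere `S^d` in `ℝ^(d+1)`, realized as `EuclideanSpace ℝ (Fin (d+1))`. -/
abbrev Sphere (d : ℕ) : Type _ := Metric.sphere (0 : EuclideanSpace ℝ (Fin (d + 1))) 1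

/-- The uniform probability measure `σ` on `S^d` (the normalized surface measure):
the normalization of the cone (surface) measure associated to the Lebesgue measure. -/
def sphereMeasure (d : ℕ) : Measure (Sphere d) :=
  ((volume : Measure (EuclideanSpace ℝ (Fin (d + 1)))).toSphere univ)⁻¹ •
    (volume : Measure (EuclideanSpace ℝ (Fin (d + 1)))).toSphere

/-- Euclidean inner product `x · y` of two points on the sphere. -/
def ip {d : ℕ} (x y : Sphere d) : ℝ :=
  ⟪(x : EuclideanSpace ℝ (Fin (d + 1))), (y : EuclideanSpace ℝ (Fin (d + 1)))⟫

/-- Euclidean distance `‖x - y‖` between two points on the sphere. -/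
def eucl {d : ℕ} (x y : Sphere d) : ℝ :=
  ‖(x : EuclideanSpace ℝ (Fin (d + 1))) - (y : EuclideanSpace ℝ (Fin (d + 1)))‖

/-- The normalized geodesic distance `d(x,y) = arccos(x·y)/π` on the sphere. -/
def geo {d : ℕ} (x y : Sphere d) : ℝ := Real.arccos (ip x y) / Real.pi

/-- The open spherical cap `C(x,t) = {z ∈ S^d : z · x > t}`. -/
def cap {d : ℕ} (x : Sphere d) (t : ℝ) : Set (Sphere d) := {z | t < ip x z}

/-- The open hemisphere `H(x) = {z ∈ S^d : z · x > 0}`. -/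
def hemi {d : ℕ} (x : Sphere d) : Set (Sphere d) := {z | 0 < ip x z}

namespace CapAux

open scoped Pointwise

variable {d : ℕ}

local notation "E" => EuclideanSpace ℝ (Fin (d + 1))

lemma norm_coe (x : Sphere d) : ‖(x : E)‖ = 1 := mem_sphere_zero_iff_norm.mp x.2

lemma abs_ip_le_one (x z : Sphere d) : |ip x z| ≤ 1 := by
  have := abs_real_inner_le_norm (x : E) (z : E)
  rwa [norm_coe, norm_coe, one_mul] at this

/-- The map on the sphere induced by a linear isometry equivalence. -/
def sMap (e : E ≃ₗᵢ[ℝ] E) (z : Sphere d) : Sphere d :=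
  ⟨e z, by simp [mem_sphere_zero_iff_norm, e.norm_map, norm_coe]⟩

lemma continuous_sMap (e : E ≃ₗᵢ[ℝ] E) : Continuous (sMap (d := d) e) :=
  Continuous.subtype_mk (e.continuous.comp continuous_subtype_val) _

/-- The measurable equivalence on the sphere induced by a linear isometry equivalence. -/
def sEquiv (e : E ≃ₗᵢ[ℝ] E) : Sphere d ≃ᵐ Sphere d where
  toFun := sMap e
  invFun := sMap e.symm
  left_inv := fun z => Subtype.ext (e.symm_apply_apply _)
  right_inv := fun z => Subtype.ext (e.apply_symm_apply _)
  measurable_toFun := (continuous_sMap e).measurable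
  measurable_invFun := (continuous_sMap e.symm).measurable

lemma volume_image (e : E ≃ₗᵢ[ℝ] E) (B : Set E) :
    volume (e '' B) = volume B := by
  have h1 : e '' B = e.symm ⁻¹' B := by
    ext u
    constructor
    · rintro ⟨v, hv, rfl⟩; simpa using hv
    · intro hu; exact ⟨e.symm u, hu, by simp⟩
  rw [h1]
  have hmp : MeasurePreserving e.symm.toHomeomorph.toMeasurableEquiv volume volume :=
    e.symm.measurePreserving
  exact hmp.measure_preimage_equiv B

lemma toSphere_image (e : E ≃ₗᵢ[ℝ] E) {s : Set (Sphere d)} (hs : MeasurableSet s) :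
    (volume : Measure E).toSphere (sMap e '' s) = (volume : Measure E).toSphere s := by
  have himg : sMap (d := d) e '' s = sMap e.symm ⁻¹' s := by
    ext z
    constructor
    · rintro ⟨w, hw, rfl⟩
      simpa [sMap, Subtype.ext_iff] using hw
    · intro hz
      exact ⟨sMap e.symm z, hz, Subtype.ext (e.apply_symm_apply _)⟩
  have hs' : MeasurableSet (sMap (d := d) e '' s) := by
    rw [himg]; exact (continuous_sMap e.symm).measurable hs
  rw [Measure.toSphere_apply' _ hs', Measure.toSphere_apply' _ hs]
  congr 1
  have hcoe : (Subtype.val '' (sMap (d := d) e '' s) : Set E) = e '' (Subtype.val '' s) := by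
    rw [image_image, image_image]; rfl
  rw [hcoe, ← volume_image e (Ioo (0:ℝ) 1 • (Subtype.val '' s : Set E))]
  congr 1
  rw [← Set.image2_smul, ← Set.image2_smul, Set.image2_image_right, Set.image_image2]
  refine Set.image2_congr fun c _ u _ => ?_
  exact (e.map_smul c u).symm

lemma sphereMeasure_preimage (e : E ≃ₗᵢ[ℝ] E) {s : Set (Sphere d)} (hs : MeasurableSet s) :
    sphereMeasure d (sMap e ⁻¹' s) = sphereMeasure d s := by
  have h1 : sMap (d := d) e ⁻¹' s = sMap e.symm '' s := by
    ext z
    constructor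
    · intro hz
      exact ⟨sMap e z, hz, Subtype.ext (e.symm_apply_apply _)⟩
    · rintro ⟨w, hw, rfl⟩
      have : sMap e (sMap e.symm w) = w := Subtype.ext (e.apply_symm_apply _)
      simpa [Set.mem_preimage, this] using hw
  unfold sphereMeasure
  rw [Measure.smul_apply, Measure.smul_apply, h1, toSphere_image e.symm hs]

lemma measurePreserving_sEquiv (e : E ≃ₗᵢ[ℝ] E) :
    MeasurePreserving (sEquiv (d := d) e) (sphereMeasure d) (sphereMeasure d) := by
  refine ⟨(sEquiv e).measurable, ?_⟩
  refine Measure.ext fun s hs => ?_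
  rw [MeasurableEquiv.map_apply]
  exact sphereMeasure_preimage e hs

lemma integral_sMap (e : E ≃ₗᵢ[ℝ] E) (g : Sphere d → ℝ) :
    ∫ z, g (sMap e z) ∂(sphereMeasure d) = ∫ z, g z ∂(sphereMeasure d) :=
  (measurePreserving_sEquiv e).integral_comp (sEquiv e).measurableEmbedding g

instance : IsProbabilityMeasure (sphereMeasure d) := by
  constructor
  unfold sphereMeasure
  rw [Measure.smul_apply, smul_eq_mul]
  refine ENNReal.inv_mul_cancel ?_ (measure_ne_top _ _)
  rw [Measure.toSphere_apply_univ]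
  refine mul_ne_zero ?_ ?_
  · simp [finrank_euclideanSpace_fin]
  · exact (measure_ball_pos volume (0 : E) one_pos).ne'

lemma integrable_cont {g : Sphere d → ℝ} (hg : Continuous g) :
    Integrable g (sphereMeasure d) :=
  hg.integrable_of_hasCompactSupport (HasCompactSupport.of_compactSpace g)

lemma continuous_ip (x : Sphere d) : Continuous fun z : Sphere d => ip x z :=
  Continuous.inner continuous_const continuous_subtype_val

lemma integral_ip (x : Sphere d) : ∫ z, ip x z ∂(sphereMeasure d) = 0 := by
  have h := integral_sMap (d := d) (LinearIsometryEquiv.neg ℝ) (fun z => ip x z)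
  have h2 : ∀ z : Sphere d, ip x (sMap (LinearIsometryEquiv.neg ℝ) z) = -(ip x z) := by
    intro z
    simp [ip, sMap, inner_neg_right]
  simp only [h2] at h
  rw [integral_neg] at h
  linarith

lemma integral_abs_ip (q p : Sphere d) :
    ∫ z, |ip q z| ∂(sphereMeasure d) = ∫ z, |ip p z| ∂(sphereMeasure d) := by
  have hnorm : ‖(p : E)‖ = ‖(q : E)‖ := by rw [norm_coe, norm_coe]
  set e := Submodule.reflection (ℝ ∙ ((p : E) - (q : E)))ᗮ with he
  have hpq : e (p : E) = (q : E) := Submodule.reflection_sub hnorm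
  have h := integral_sMap (d := d) e (fun z => |ip q z|)
  have h2 : ∀ z : Sphere d, |ip q (sMap e z)| = |ip p z| := by
    intro z
    have : ip q (sMap e z) = ip p z := by
      simp only [ip, sMap, ← hpq]
      exact e.inner_map_map _ _
    rw [this]
  simp only [h2] at h
  exact h.symm

lemma min_formula (a b : ℝ) : min a b = (a + b - |a - b|) / 2 := by
  rcases le_total a b with h | h
  · rw [min_eq_left h, abs_of_nonpos (by linarith)]; ring
  · rw [min_eq_right h, abs_of_nonneg (by linarith)]; ring

end CapAux

open CapAux in
/-- The average (over heights `t ∈ [-1,1]`) of the measure of the intersection of two spherical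
caps `C(x,t) ∩ C(y,t)` equals `1 - C_d ‖x - y‖`, where
`C_d = (1/2) ∫_{S^d} |p·w| dσ(w)` (for any fixed `p ∈ S^d`). -/
theorem cap_intersection_integral (d : ℕ) (hd : 1 ≤ d) (x y p : Sphere d) :
    (∫ t in (-1 : ℝ)..1, (sphereMeasure d (cap x t ∩ cap y t)).toReal)
      = 1 - (1 / 2 * ∫ w, |ip p w| ∂(sphereMeasure d)) * eucl x y := by
  classical
  set f : Sphere d → ℝ := fun z => min (ip x z) (ip y z) with hf
  have hfc : Continuous f := (continuous_ip x).min (continuous_ip y)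
  have hf_le : ∀ z, f z ≤ 1 := fun z =>
    le_trans (min_le_left _ _) ((abs_le.mp (abs_ip_le_one x z)).2)
  have hf_ge : ∀ z, -1 ≤ f z := fun z =>
    le_min ((abs_le.mp (abs_ip_le_one x z)).1) ((abs_le.mp (abs_ip_le_one y z)).1)
  have hcap : ∀ t : ℝ, cap x t ∩ cap y t = {z | t < f z} := by
    intro t; ext z; simp [cap, hf, lt_min_iff]
  -- the product set
  have hS : MeasurableSet {q : ℝ × Sphere d | q.1 < f q.2} :=
    measurableSet_lt measurable_fst (hfc.measurable.comp measurable_snd)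
  -- Step 1: rewrite LHS as toReal of a lintegral
  have step1 : (∫ t in (-1 : ℝ)..1, (sphereMeasure d (cap x t ∩ cap y t)).toReal)
      = (∫⁻ t in Ioc (-1 : ℝ) 1, sphereMeasure d {z | t < f z}).toReal := by
    rw [intervalIntegral.integral_of_le (by norm_num : (-1:ℝ) ≤ 1)]
    simp only [hcap]
    refine integral_toReal ?_ ?_
    · exact (measurable_measure_prodMk_left (ν := sphereMeasure d) hS).aemeasurable.restrict
    · exact Filter.Eventually.of_forall fun t => measure_lt_top _ _
  -- Step 2: Tonelli
  have step2 : (∫⁻ t in Ioc (-1 : ℝ) 1, sphereMeasure d {z | t < f z})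
      = ∫⁻ z, ENNReal.ofReal (f z + 1) ∂sphereMeasure d := by
    have hind : ∀ t : ℝ, sphereMeasure d {z | t < f z}
        = ∫⁻ z, ({q : ℝ × Sphere d | q.1 < f q.2}.indicator (fun _ => (1:ℝ≥0∞))) (t, z) ∂sphereMeasure d := by
      intro t
      have hmt : MeasurableSet {z : Sphere d | t < f z} :=
        measurableSet_lt measurable_const hfc.measurable
      have hpt : ∀ z : Sphere d,
          ({q : ℝ × Sphere d | q.1 < f q.2}.indicator (fun _ => (1:ℝ≥0∞))) (t, z)
          = ({z : Sphere d | t < f z}).indicator (fun _ => (1:ℝ≥0∞)) z := by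
        intro z
        by_cases h : t < f z <;> simp [Set.indicator, h]
      simp only [hpt]
      rw [lintegral_indicator_const hmt, one_mul]
    simp only [hind]
    have hmeas : AEMeasurable
        (Function.uncurry fun (t : ℝ) (z : Sphere d) =>
          ({q : ℝ × Sphere d | q.1 < f q.2}.indicator (fun _ => (1:ℝ≥0∞))) (t, z))
        ((volume.restrict (Ioc (-1 : ℝ) 1)).prod (sphereMeasure d)) :=
      (measurable_const.indicator hS).aemeasurable
    rw [lintegral_lintegral_swap hmeas]
    refine lintegral_congr fun z => ?_
    have hpt2 : ∀ t : ℝ, ({q : ℝ × Sphere d | q.1 < f q.2}.indicator (fun _ => (1:ℝ≥0∞))) (t, z)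
        = (Iio (f z)).indicator (fun _ => (1:ℝ≥0∞)) t := by
      intro t
      by_cases h : t < f z <;> simp [Set.indicator, h]
    simp only [hpt2]
    rw [lintegral_indicator_const measurableSet_Iio, one_mul,
      Measure.restrict_apply measurableSet_Iio]
    have hset : Iio (f z) ∩ Ioc (-1 : ℝ) 1 = Ioo (-1 : ℝ) (f z) := by
      ext t
      constructor
      · rintro ⟨h1, h2, _⟩; exact ⟨h2, h1⟩
      · rintro ⟨h1, h2⟩; exact ⟨h2, h1, le_trans h2.le (hf_le z)⟩
    rw [hset, Real.volume_Ioo, sub_neg_eq_add]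
  -- Step 3: back to a Bochner integral
  have step3 : (∫⁻ z, ENNReal.ofReal (f z + 1) ∂sphereMeasure d).toReal = ∫ z, (f z + 1) ∂sphereMeasure d := by
    refine (integral_eq_lintegral_of_nonneg_ae ?_ ?_).symm
    · refine Filter.Eventually.of_forall fun z => ?_
      simp only [Pi.zero_apply]
      linarith [hf_ge z]
    · exact (hfc.add continuous_const).aestronglyMeasurable
  -- integrability facts
  have ia : Integrable (fun z => ip x z) (sphereMeasure d) := integrable_cont (continuous_ip x)
  have ib : Integrable (fun z => ip y z) (sphereMeasure d) := integrable_cont (continuous_ip y)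
  have iab : Integrable (fun z => |ip x z - ip y z|) (sphereMeasure d) :=
    integrable_cont ((continuous_ip x).sub (continuous_ip y)).abs
  have iapb : Integrable (fun z => ip x z + ip y z) (sphereMeasure d) :=
    integrable_cont ((continuous_ip x).add (continuous_ip y))
  have hintf : Integrable f (sphereMeasure d) := integrable_cont hfc
  -- Step 4: compute the integral of f
  have hmin : ∀ z, f z = (ip x z + ip y z - |ip x z - ip y z|) / 2 :=
    fun z => min_formula _ _
  have step4 : ∫ z, f z ∂sphereMeasure d
      = (0 + 0 - ∫ z, |ip x z - ip y z| ∂sphereMeasure d) / 2 := by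
    calc ∫ z, f z ∂sphereMeasure d = ∫ z, (ip x z + ip y z - |ip x z - ip y z|) / 2 ∂sphereMeasure d := by
          simp only [hmin]
      _ = (∫ z, (ip x z + ip y z - |ip x z - ip y z|) ∂sphereMeasure d) / 2 := integral_div 2 _
      _ = ((∫ z, ip x z ∂sphereMeasure d) + (∫ z, ip y z ∂sphereMeasure d) - ∫ z, |ip x z - ip y z| ∂sphereMeasure d) / 2 := by
          rw [integral_sub iapb iab, integral_add ia ib]
      _ = (0 + 0 - ∫ z, |ip x z - ip y z| ∂sphereMeasure d) / 2 := by
          rw [integral_ip, integral_ip]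
  -- Step 5: relate |ip x z - ip y z| to eucl x y and the fixed point p
  have step5 : ∫ z, |ip x z - ip y z| ∂sphereMeasure d = (eucl x y) * ∫ w, |ip p w| ∂sphereMeasure d := by
    by_cases hxy : (x : EuclideanSpace ℝ (Fin (d + 1))) = (y : EuclideanSpace ℝ (Fin (d + 1)))
    · have : eucl x y = 0 := by simp [eucl, hxy]
      simp [ip, hxy, this]
    · set v : EuclideanSpace ℝ (Fin (d + 1)) := (x : _) - (y : _) with hv
      have hv0 : v ≠ 0 := sub_ne_zero.mpr hxy
      have hnv : ‖v‖ ≠ 0 := norm_ne_zero_iff.mpr hv0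
      set q : Sphere d := ⟨‖v‖⁻¹ • v, by
        rw [mem_sphere_zero_iff_norm, norm_smul, norm_inv, norm_norm, inv_mul_cancel₀ hnv]⟩ with hq
      have key : ∀ z : Sphere d, |ip x z - ip y z| = ‖v‖ * |ip q z| := by
        intro z
        have h1 : ip x z - ip y z = ⟪v, (z : EuclideanSpace ℝ (Fin (d + 1)))⟫ := by
          simp [ip, hv, inner_sub_left]
        have h2 : ip q z = ‖v‖⁻¹ * ⟪v, (z : EuclideanSpace ℝ (Fin (d + 1)))⟫ :=
          real_inner_smul_left v (z : EuclideanSpace ℝ (Fin (d + 1))) ‖v‖⁻¹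
        rw [h1, h2, abs_mul, abs_inv, abs_norm]
        field_simp
      simp only [key]
      rw [integral_const_mul]
      have : eucl x y = ‖v‖ := rfl
      rw [this, integral_abs_ip q p]
  -- put everything together
  rw [step1, step2, step3]
  rw [integral_add hintf (integrable_const 1), integral_const]
  simp only [probReal_univ, ENNReal.toReal_one, one_smul, smul_eq_mul]
  rw [step4, step5]
  ring
end
end

section
/- Let d ≥ 1. For any point p ∈ S^d, ∫_{−1}^{1} ( σ(C(p,t)) )² dt = 1 − C_d ∫_{S^d} ‖x − p‖ dσ(x), where ‖·‖ is the Euclidean norm in ℝ^{d+1}. -/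
open MeasureTheory Metric Set
open scoped RealInnerProductSpace ENNReal

noncomputable section

namespace CapQM

open scoped Pointwise

abbrev Euc (d : ℕ) := EuclideanSpace ℝ (Fin (d + 1))

variable {d : ℕ}

lemma norm_coe (x : Sphere d) : ‖(x : Euc d)‖ = 1 := mem_sphere_zero_iff_norm.1 x.2

def smap (e : Euc d ≃ₗᵢ[ℝ] Euc d) (x : Sphere d) : Sphere d :=
  ⟨e x, by simp [mem_sphere_zero_iff_norm, e.norm_map, norm_coe]⟩

@[simp] lemma smap_coe (e : Euc d ≃ₗᵢ[ℝ] Euc d) (x : Sphere d) :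
    ((smap e x : Sphere d) : Euc d) = e (x : Euc d) := rfl

lemma continuous_smap (e : Euc d ≃ₗᵢ[ℝ] Euc d) : Continuous (smap e) :=
  Continuous.subtype_mk (e.continuous.comp continuous_subtype_val) _

def shomeo (e : Euc d ≃ₗᵢ[ℝ] Euc d) : Sphere d ≃ₜ Sphere d where
  toFun := smap e
  invFun := smap e.symm
  left_inv x := Subtype.ext <| by simp
  right_inv x := Subtype.ext <| by simp
  continuous_toFun := continuous_smap e
  continuous_invFun := continuous_smap e.symm

lemma image_coe_preimage_smap (e : Euc d ≃ₗᵢ[ℝ] Euc d) (s : Set (Sphere d)) :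
    ((↑) '' (smap e ⁻¹' s) : Set (Euc d)) = ⇑e ⁻¹' ((↑) '' s) := by
  ext v
  constructor
  · rintro ⟨x, hx, rfl⟩
    exact ⟨smap e x, hx, rfl⟩
  · rintro ⟨z, hz, hez⟩
    have hv : v ∈ Metric.sphere (0 : Euc d) 1 := by
      rw [mem_sphere_zero_iff_norm, ← e.norm_map v, ← hez, norm_coe]
    refine ⟨⟨v, hv⟩, ?_, rfl⟩
    show smap e ⟨v, hv⟩ ∈ s
    have : smap e ⟨v, hv⟩ = z := Subtype.ext hez.symm
    rwa [this]

lemma smul_preimage (e : Euc d ≃ₗᵢ[ℝ] Euc d) (A : Set (Euc d)) :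
    (Ioo (0:ℝ) 1) • (⇑e ⁻¹' A) = ⇑e ⁻¹' ((Ioo (0:ℝ) 1) • A) := by
  ext v
  constructor
  · rintro ⟨c, hc, y, hy, rfl⟩
    exact ⟨c, hc, e y, hy, (e.map_smul c y).symm⟩
  · rintro ⟨c, hc, a, ha, hca⟩
    refine ⟨c, hc, e.symm a, by simpa using ha, ?_⟩
    apply e.injective
    rw [e.map_smul]
    simpa using hca

lemma map_toSphere (e : Euc d ≃ₗᵢ[ℝ] Euc d) :
    Measure.map (smap e) (volume : Measure (Euc d)).toSphere
      = (volume : Measure (Euc d)).toSphere := by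
  refine Measure.ext fun s hs => ?_
  rw [Measure.map_apply (continuous_smap e).measurable hs,
    Measure.toSphere_apply' _ (hs.preimage (continuous_smap e).measurable),
    Measure.toSphere_apply' _ hs, image_coe_preimage_smap, smul_preimage]
  congr 1
  exact e.measurePreserving.measure_preimage_emb e.toHomeomorph.measurableEmbedding _

lemma measurePreserving_smap (e : Euc d ≃ₗᵢ[ℝ] Euc d) :
    MeasurePreserving (smap e) (sphereMeasure d) (sphereMeasure d) := by
  refine ⟨(continuous_smap e).measurable, ?_⟩
  unfold sphereMeasure
  rw [Measure.map_smul, map_toSphere]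

instance : IsProbabilityMeasure (sphereMeasure d) := by
  constructor
  have h1 : (volume : Measure (Euc d)).toSphere univ ≠ 0 := by
    rw [Measure.toSphere_apply_univ]
    refine mul_ne_zero ?_ (measure_ball_pos _ _ one_pos).ne'
    simp [finrank_euclideanSpace]
  have h2 : (volume : Measure (Euc d)).toSphere univ ≠ ⊤ := measure_ne_top _ _
  rw [sphereMeasure, Measure.smul_apply, smul_eq_mul, ENNReal.inv_mul_cancel h1 h2]

lemma integral_smap (e : Euc d ≃ₗᵢ[ℝ] Euc d) (f : Sphere d → ℝ) :
    ∫ x, f (smap e x) ∂(sphereMeasure d) = ∫ x, f x ∂(sphereMeasure d) :=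
  (measurePreserving_smap e).integral_comp (shomeo e).measurableEmbedding f

lemma integral_smap2 (e : Euc d ≃ₗᵢ[ℝ] Euc d) (f : Sphere d × Sphere d → ℝ) :
    ∫ z, f (smap e z.1, smap e z.2) ∂((sphereMeasure d).prod (sphereMeasure d))
      = ∫ z, f z ∂((sphereMeasure d).prod (sphereMeasure d)) :=
  ((measurePreserving_smap e).prod (measurePreserving_smap e)).integral_comp
    ((shomeo e).prodCongr (shomeo e)).measurableEmbedding f

lemma exists_smap (u v : Sphere d) : ∃ e : Euc d ≃ₗᵢ[ℝ] Euc d, e (u : Euc d) = (v : Euc d) :=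
  ⟨Submodule.reflection (ℝ ∙ ((u : Euc d) - v))ᗮ, Submodule.reflection_sub (by rw [norm_coe, norm_coe])⟩

lemma continuous_ip (p : Sphere d) : Continuous (fun x : Sphere d => ip p x) :=
  Continuous.inner continuous_const continuous_subtype_val

lemma abs_ip_le (p x : Sphere d) : |ip p x| ≤ 1 := by
  have := abs_real_inner_le_norm (p : Euc d) (x : Euc d)
  rwa [norm_coe, norm_coe, one_mul] at this

lemma integrable_of_bdd {α : Type*} [MeasurableSpace α] {μ : Measure α} [IsFiniteMeasure μ]
    {f : α → ℝ} (hm : AEStronglyMeasurable f μ) {C : ℝ} (h : ∀ x, |f x| ≤ C) :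
    Integrable f μ :=
  Integrable.mono' (integrable_const C) hm (ae_of_all _ fun x => by simpa using h x)

end CapQM

namespace CapQM

variable {d : ℕ}

lemma integral_ip_zero (p : Sphere d) : ∫ x, ip p x ∂(sphereMeasure d) = 0 := by
  have h := integral_smap (d := d) (LinearIsometryEquiv.neg ℝ) (fun x => ip p x)
  have h2 : (fun x : Sphere d => ip p (smap (LinearIsometryEquiv.neg ℝ) x))
      = fun x : Sphere d => -(ip p x) := by
    funext x
    simp [ip, smap, inner_neg_right]
  rw [h2, integral_neg] at h
  linarith

def Kfun (d : ℕ) (v : Euc d) : ℝ := ∫ w, |⟪v, (w : Euc d)⟫| ∂(sphereMeasure d)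

lemma Kfun_sphere (u q : Sphere d) : Kfun d (u : Euc d) = Kfun d (q : Euc d) := by
  obtain ⟨e, he⟩ := exists_smap q u
  have h := integral_smap e (fun w : Sphere d => |⟪(u : Euc d), (w : Euc d)⟫|)
  have h2 : (fun w : Sphere d => |⟪(u : Euc d), ((smap e w : Sphere d) : Euc d)⟫|)
      = fun w : Sphere d => |⟪(q : Euc d), (w : Euc d)⟫| := by
    funext w
    rw [smap_coe, ← he, e.inner_map_map]
  rw [h2] at h
  exact h.symm

lemma Kfun_eq (q : Sphere d) (v : Euc d) : Kfun d v = ‖v‖ * Kfun d (q : Euc d) := by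
  rcases eq_or_ne v 0 with rfl | hv
  · simp [Kfun]
  · have hn : ‖v‖ ≠ 0 := norm_ne_zero_iff.2 hv
    set u : Sphere d := ⟨‖v‖⁻¹ • v, by
      rw [mem_sphere_zero_iff_norm, norm_smul, norm_inv, norm_norm, inv_mul_cancel₀ hn]⟩ with hu
    have hvu : v = ‖v‖ • (u : Euc d) := by
      rw [hu]
      simp [smul_smul, mul_inv_cancel₀ hn]
    calc Kfun d v = ∫ w, ‖v‖ * |⟪(u : Euc d), (w : Euc d)⟫| ∂(sphereMeasure d) := by
          unfold Kfun
          congr 1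
          funext w
          have key : ⟪v, (w : Euc d)⟫ = ‖v‖ * ⟪(u : Euc d), (w : Euc d)⟫ := by
            conv_lhs => rw [hvu]
            rw [real_inner_smul_left]
          rw [key, abs_mul, abs_of_nonneg (norm_nonneg v)]
      _ = ‖v‖ * Kfun d (u : Euc d) := by rw [MeasureTheory.integral_const_mul]; rfl
      _ = ‖v‖ * Kfun d (q : Euc d) := by rw [Kfun_sphere u q]

lemma integral_eucl_const (y p : Sphere d) :
    ∫ x, eucl x y ∂(sphereMeasure d) = ∫ x, eucl x p ∂(sphereMeasure d) := by
  obtain ⟨e, he⟩ := exists_smap p y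
  have h := integral_smap e (fun x : Sphere d => eucl x y)
  have h2 : (fun x : Sphere d => eucl (smap e x) y) = fun x : Sphere d => eucl x p := by
    funext x
    unfold eucl
    rw [smap_coe, ← he, ← e.map_sub, e.norm_map]
  rw [h2] at h
  exact h.symm

end CapQM

open CapQM

/-- The mean square (over heights `t ∈ [-1,1]`) of the measure of the spherical cap `C(p,t)`
equals `1 - C_d ∫_{S^d} ‖x - p‖ dσ(x)`, where
`C_d = (1/2) ∫_{S^d} |q·w| dσ(w)` (for any fixed `q ∈ S^d`). -/
theorem cap_quadratic_mean (d : ℕ) (hd : 1 ≤ d) (p q : Sphere d) :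
    (∫ t in (-1 : ℝ)..1, ((sphereMeasure d (cap p t)).toReal) ^ 2)
      = 1 - (1 / 2 * ∫ w, |ip q w| ∂(sphereMeasure d)) * ∫ x, eucl x p ∂(sphereMeasure d) := by
  classical
  set σ : Measure (Sphere d) := sphereMeasure d with hσdef
  haveI : IsProbabilityMeasure σ := by rw [hσdef]; infer_instance
  set σ2 : Measure (Sphere d × Sphere d) := σ.prod σ with hσ2
  haveI : IsProbabilityMeasure σ2 := by rw [hσ2]; infer_instance
  have capmeas : ∀ t : ℝ, MeasurableSet (cap p t) := fun t =>
    (isOpen_lt continuous_const (continuous_ip p)).measurableSet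
  have hip_le : ∀ x : Sphere d, ip p x ≤ 1 := fun x => (abs_le.1 (abs_ip_le p x)).2
  have hip_ge : ∀ x : Sphere d, -1 ≤ ip p x := fun x => (abs_le.1 (abs_ip_le p x)).1
  -- the measure of a cap as an integral
  have hcap : ∀ t : ℝ, (σ (cap p t)).toReal = ∫ x, (if t < ip p x then (1:ℝ) else 0) ∂σ := by
    intro t
    have h1 : ∫ x, (cap p t).indicator (fun _ => (1:ℝ)) x ∂σ = (σ (cap p t)).toReal • (1:ℝ) :=
      integral_indicator_const (1:ℝ) (capmeas t)
    have h2 : ∀ x : Sphere d, (cap p t).indicator (fun _ => (1:ℝ)) x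
        = if t < ip p x then (1:ℝ) else 0 := fun x => by
      by_cases h : t < ip p x <;> simp [Set.indicator_apply, cap, h, Set.mem_setOf_eq]
    simp only [h2] at h1
    rw [h1, smul_eq_mul, mul_one]
  have hle : (-1 : ℝ) ≤ 1 := by norm_num
  rw [intervalIntegral.integral_of_le hle]
  set ν : Measure ℝ := volume.restrict (Ioc (-1 : ℝ) 1) with hν
  haveI : IsFiniteMeasure ν := by
    constructor
    rw [hν, Measure.restrict_apply_univ]
    simp [Real.volume_Ioc]
  set F : ℝ → Sphere d × Sphere d → ℝ :=
    fun t z => (if t < ip p z.1 then (1:ℝ) else 0) * (if t < ip p z.2 then (1:ℝ) else 0) with hF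
  have hFmeas : Measurable (Function.uncurry F) := by
    show Measurable fun w : ℝ × (Sphere d × Sphere d) =>
      (if w.1 < ip p w.2.1 then (1:ℝ) else 0) * (if w.1 < ip p w.2.2 then (1:ℝ) else 0)
    apply Measurable.mul
    · exact Measurable.ite (measurableSet_lt measurable_fst
        ((continuous_ip p).measurable.comp (measurable_fst.comp measurable_snd)))
        measurable_const measurable_const
    · exact Measurable.ite (measurableSet_lt measurable_fst
        ((continuous_ip p).measurable.comp (measurable_snd.comp measurable_snd)))
        measurable_const measurable_const
  have hFint : Integrable (Function.uncurry F) (ν.prod σ2) := by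
    refine integrable_of_bdd hFmeas.aestronglyMeasurable (C := 1) fun w => ?_
    obtain ⟨t, z⟩ := w
    show |(if t < ip p z.1 then (1:ℝ) else 0) * (if t < ip p z.2 then (1:ℝ) else 0)| ≤ 1
    split_ifs <;> norm_num
  have step1 : ∫ t, (σ (cap p t)).toReal ^ 2 ∂ν = ∫ t, (∫ z, F t z ∂σ2) ∂ν := by
    refine integral_congr_ae (ae_of_all _ fun t => ?_)
    have hmul := integral_prod_mul (μ := σ) (ν := σ)
      (f := fun x : Sphere d => if t < ip p x then (1:ℝ) else 0)
      (g := fun x : Sphere d => if t < ip p x then (1:ℝ) else 0)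
    show (σ (cap p t)).toReal ^ 2 = ∫ z : Sphere d × Sphere d,
      (if t < ip p z.1 then (1:ℝ) else 0) * (if t < ip p z.2 then (1:ℝ) else 0) ∂(σ.prod σ)
    rw [hcap t, sq, hmul]
  -- the inner time integral
  have hinner : ∀ z : Sphere d × Sphere d, ∫ t, F t z ∂ν = min (ip p z.1) (ip p z.2) + 1 := by
    intro z
    set m := min (ip p z.1) (ip p z.2) with hm
    have hm1 : m ≤ 1 := le_trans (min_le_left _ _) (hip_le _)
    have hm2 : -1 ≤ m := le_min (hip_ge _) (hip_ge _)
    have h1 : ∀ t : ℝ, F t z = (Iio m).indicator (fun _ => (1:ℝ)) t := by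
      intro t
      by_cases hta : t < ip p z.1 <;> by_cases htb : t < ip p z.2 <;>
        simp [hF, Set.indicator_apply, hta, htb, hm, lt_min_iff]
    calc ∫ t, F t z ∂ν = ∫ t in Ioc (-1:ℝ) 1, (Iio m).indicator (fun _ => (1:ℝ)) t := by
          rw [hν]; exact integral_congr_ae (ae_of_all _ h1)
      _ = ∫ t in Ioc (-1:ℝ) 1 ∩ Iio m, (1:ℝ) := setIntegral_indicator measurableSet_Iio
      _ = (volume (Ioc (-1:ℝ) 1 ∩ Iio m)).toReal • (1:ℝ) := setIntegral_const 1
      _ = m + 1 := by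
          have hset : Ioc (-1:ℝ) 1 ∩ Iio m = Ioo (-1:ℝ) m := by
            ext t
            simp only [mem_inter_iff, mem_Ioc, mem_Iio, mem_Ioo]
            constructor
            · rintro ⟨⟨h1', _⟩, h3'⟩; exact ⟨h1', h3'⟩
            · rintro ⟨h1', h3'⟩; exact ⟨⟨h1', le_trans (le_of_lt h3') hm1⟩, h3'⟩
          rw [hset, Real.volume_Ioo, smul_eq_mul, mul_one,
            ENNReal.toReal_ofReal (by linarith)]
          ring
  -- integrability helpers on σ2
  have cont1 : Continuous fun z : Sphere d × Sphere d => ip p z.1 :=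
    (continuous_ip p).comp continuous_fst
  have cont2 : Continuous fun z : Sphere d × Sphere d => ip p z.2 :=
    (continuous_ip p).comp continuous_snd
  have int1 : Integrable (fun z : Sphere d × Sphere d => ip p z.1) σ2 :=
    integrable_of_bdd cont1.aestronglyMeasurable (C := 1) fun z => abs_ip_le p z.1
  have int2 : Integrable (fun z : Sphere d × Sphere d => ip p z.2) σ2 :=
    integrable_of_bdd cont2.aestronglyMeasurable (C := 1) fun z => abs_ip_le p z.2
  have intabs : Integrable (fun z : Sphere d × Sphere d => |ip p z.1 - ip p z.2|) σ2 := by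
    refine integrable_of_bdd ((cont1.sub cont2).abs).aestronglyMeasurable (C := 2) fun z => ?_
    rw [abs_abs]
    calc |ip p z.1 - ip p z.2| ≤ |ip p z.1| + |ip p z.2| := abs_sub _ _
      _ ≤ 1 + 1 := add_le_add (abs_ip_le p z.1) (abs_ip_le p z.2)
      _ = 2 := by norm_num
  have hfst : ∫ z, ip p z.1 ∂σ2 = 0 := by
    have h := integral_prod_mul (μ := σ) (ν := σ) (f := fun x : Sphere d => ip p x)
      (g := fun _ : Sphere d => (1:ℝ))
    simp only [mul_one] at h
    rw [hσ2, h, integral_const, probReal_univ, one_smul, mul_one,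
      hσdef, integral_ip_zero]
  have hsnd : ∫ z, ip p z.2 ∂σ2 = 0 := by
    have h := integral_prod_mul (μ := σ) (ν := σ) (f := fun _ : Sphere d => (1:ℝ))
      (g := fun x : Sphere d => ip p x)
    simp only [one_mul] at h
    rw [hσ2, h, integral_const, probReal_univ, one_smul, one_mul,
      hσdef, integral_ip_zero]
  have hminid : ∀ z : Sphere d × Sphere d, min (ip p z.1) (ip p z.2) + 1
      = (ip p z.1 + ip p z.2 - |ip p z.1 - ip p z.2|) / 2 + 1 := by
    intro z
    rcases le_total (ip p z.1) (ip p z.2) with h | h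
    · rw [min_eq_left h, abs_of_nonpos (by linarith)]; ring
    · rw [min_eq_right h, abs_of_nonneg (by linarith)]; ring
  have houter : ∫ z, (min (ip p z.1) (ip p z.2) + 1) ∂σ2
      = 1 - (1/2) * ∫ z, |ip p z.1 - ip p z.2| ∂σ2 := by
    have hcongr := integral_congr_ae (μ := σ2) (ae_of_all _ hminid)
    rw [hcongr]
    have int12 : Integrable (fun z : Sphere d × Sphere d => ip p z.1 + ip p z.2) σ2 :=
      int1.add int2
    have intsub : Integrable
        (fun z : Sphere d × Sphere d => ip p z.1 + ip p z.2 - |ip p z.1 - ip p z.2|) σ2 :=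
      int12.sub intabs
    have intdiv : Integrable
        (fun z : Sphere d × Sphere d => (ip p z.1 + ip p z.2 - |ip p z.1 - ip p z.2|) / 2) σ2 :=
      intsub.div_const 2
    have hadd1 : ∫ z, ((ip p z.1 + ip p z.2 - |ip p z.1 - ip p z.2|) / 2 + 1) ∂σ2
        = (∫ z, (ip p z.1 + ip p z.2 - |ip p z.1 - ip p z.2|) / 2 ∂σ2) + ∫ _z, (1:ℝ) ∂σ2 :=
      integral_add intdiv (integrable_const 1)
    have hdiv : ∫ z, (ip p z.1 + ip p z.2 - |ip p z.1 - ip p z.2|) / 2 ∂σ2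
        = (∫ z, (ip p z.1 + ip p z.2 - |ip p z.1 - ip p z.2|) ∂σ2) / 2 :=
      integral_div 2 _
    have hsub : ∫ z, (ip p z.1 + ip p z.2 - |ip p z.1 - ip p z.2|) ∂σ2
        = (∫ z, (ip p z.1 + ip p z.2) ∂σ2) - ∫ z, |ip p z.1 - ip p z.2| ∂σ2 :=
      integral_sub int12 intabs
    have hadd2 : ∫ z, (ip p z.1 + ip p z.2) ∂σ2
        = (∫ z, ip p z.1 ∂σ2) + ∫ z, ip p z.2 ∂σ2 :=
      integral_add int1 int2
    rw [hadd1, integral_const, probReal_univ, one_smul,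
      hdiv, hsub, hadd2, hfst, hsnd]
    ring
  -- the J computation
  set g : Sphere d → Sphere d × Sphere d → ℝ :=
    fun r z => |⟪(z.1 : Euc d) - (z.2 : Euc d), (r : Euc d)⟫| with hg
  have hip_sub : ∀ z : Sphere d × Sphere d, |ip p z.1 - ip p z.2| = g p z := by
    intro z
    rw [hg]
    show |ip p z.1 - ip p z.2| = |⟪(z.1 : Euc d) - (z.2 : Euc d), (p : Euc d)⟫|
    rw [real_inner_comm, inner_sub_right]
    rfl
  have hginv : ∀ r : Sphere d, ∫ z, g r z ∂σ2 = ∫ z, g p z ∂σ2 := by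
    intro r
    obtain ⟨e, he⟩ := exists_smap p r
    have h := integral_smap2 e (g r)
    have h2 : (fun z : Sphere d × Sphere d => g r (smap e z.1, smap e z.2))
        = fun z => g p z := by
      funext z
      show |⟪e (z.1 : Euc d) - e (z.2 : Euc d), (r : Euc d)⟫| = _
      rw [← he, ← e.map_sub, e.inner_map_map]
    rw [h2] at h
    rw [hσ2, hσdef]
    exact h.symm
  have contg : Continuous (Function.uncurry g) := by
    show Continuous fun w : Sphere d × (Sphere d × Sphere d) =>
      |⟪(w.2.1 : Euc d) - (w.2.2 : Euc d), (w.1 : Euc d)⟫|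
    exact (Continuous.inner
      ((continuous_subtype_val.comp (continuous_fst.comp continuous_snd)).sub
        (continuous_subtype_val.comp (continuous_snd.comp continuous_snd)))
      (continuous_subtype_val.comp continuous_fst)).abs
  have hgbdd : ∀ w : Sphere d × (Sphere d × Sphere d), |Function.uncurry g w| ≤ 2 := by
    intro w
    show abs (abs ⟪(w.2.1 : Euc d) - (w.2.2 : Euc d), (w.1 : Euc d)⟫) ≤ 2
    rw [abs_abs]
    calc |⟪(w.2.1 : Euc d) - (w.2.2 : Euc d), (w.1 : Euc d)⟫|
        ≤ ‖(w.2.1 : Euc d) - (w.2.2 : Euc d)‖ * ‖(w.1 : Euc d)‖ := abs_real_inner_le_norm _ _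
      _ ≤ 2 := by
          rw [norm_coe, mul_one]
          calc ‖(w.2.1 : Euc d) - (w.2.2 : Euc d)‖ ≤ ‖(w.2.1 : Euc d)‖ + ‖(w.2.2 : Euc d)‖ :=
                norm_sub_le _ _
            _ = 2 := by rw [norm_coe, norm_coe]; norm_num
  have hgint : Integrable (Function.uncurry g) (σ.prod σ2) :=
    integrable_of_bdd contg.measurable.aestronglyMeasurable (C := 2) hgbdd
  have inteucl : Integrable (fun z : Sphere d × Sphere d => eucl z.1 z.2) σ2 := by
    refine integrable_of_bdd ?_ (C := 2) ?_
    · exact (Continuous.norm ((continuous_subtype_val.comp continuous_fst).sub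
        (continuous_subtype_val.comp continuous_snd))).aestronglyMeasurable
    · intro z
      show |‖(z.1 : Euc d) - (z.2 : Euc d)‖| ≤ 2
      rw [abs_of_nonneg (norm_nonneg _)]
      calc ‖(z.1 : Euc d) - (z.2 : Euc d)‖ ≤ ‖(z.1 : Euc d)‖ + ‖(z.2 : Euc d)‖ := norm_sub_le _ _
        _ = 2 := by rw [norm_coe, norm_coe]; norm_num
  have hKq : Kfun d (q : Euc d) = ∫ w, |ip q w| ∂σ := by rw [hσdef]; rfl
  have heucl2 : ∫ z, eucl z.1 z.2 ∂σ2 = ∫ x, eucl x p ∂σ := by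
    rw [hσ2, integral_prod _ inteucl]
    have hin : ∀ x : Sphere d, ∫ y, eucl x y ∂σ = ∫ y, eucl y p ∂σ := by
      intro x
      have hsym : (fun y : Sphere d => eucl x y) = fun y => eucl y x := by
        funext y; unfold eucl; rw [norm_sub_rev]
      rw [hsym, hσdef]
      exact integral_eucl_const x p
    calc ∫ x, ∫ y, eucl x y ∂σ ∂σ = ∫ _x, ∫ y, eucl y p ∂σ ∂σ :=
          integral_congr_ae (ae_of_all _ hin)
      _ = ∫ y, eucl y p ∂σ := by
          rw [integral_const, probReal_univ, one_smul]
  have hJ : ∫ z, |ip p z.1 - ip p z.2| ∂σ2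
      = (∫ w, |ip q w| ∂σ) * ∫ x, eucl x p ∂σ := by
    have e1 : ∫ z, |ip p z.1 - ip p z.2| ∂σ2 = ∫ z, g p z ∂σ2 :=
      integral_congr_ae (ae_of_all _ hip_sub)
    have e2 : ∫ z, g p z ∂σ2 = ∫ r, (∫ z, g r z ∂σ2) ∂σ := by
      rw [integral_congr_ae (ae_of_all _ hginv), integral_const, probReal_univ,
        one_smul]
    have e3 : ∫ r, (∫ z, g r z ∂σ2) ∂σ = ∫ z, (∫ r, g r z ∂σ) ∂σ2 :=
      integral_integral_swap hgint
    have e4 : ∀ z : Sphere d × Sphere d,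
        ∫ r, g r z ∂σ = eucl z.1 z.2 * Kfun d (q : Euc d) := by
      intro z
      have : ∫ r, g r z ∂σ = Kfun d ((z.1 : Euc d) - (z.2 : Euc d)) := by
        rw [hσdef]; rfl
      rw [this, Kfun_eq q]
      rfl
    have e5 : ∫ z, (∫ r, g r z ∂σ) ∂σ2
        = (∫ z, eucl z.1 z.2 ∂σ2) * Kfun d (q : Euc d) := by
      rw [integral_congr_ae (ae_of_all _ e4), integral_mul_const]
    rw [e1, e2, e3, e5, heucl2, hKq]
    ring
  calc ∫ t, (σ (cap p t)).toReal ^ 2 ∂ν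
      = ∫ t, (∫ z, F t z ∂σ2) ∂ν := step1
    _ = ∫ z, (∫ t, F t z ∂ν) ∂σ2 := integral_integral_swap hFint
    _ = ∫ z, (min (ip p z.1) (ip p z.2) + 1) ∂σ2 :=
        integral_congr_ae (ae_of_all _ fun z => hinner z)
    _ = 1 - (1/2) * ∫ z, |ip p z.1 - ip p z.2| ∂σ2 := houter
    _ = 1 - (1/2) * ((∫ w, |ip q w| ∂σ) * ∫ x, eucl x p ∂σ) := by rw [hJ]
    _ = 1 - (1 / 2 * ∫ w, |ip q w| ∂σ) * ∫ x, eucl x p ∂σ := by ring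
end
end

section
/- Let d ≥ 1 and let Z = {z_1, …, z_N} be an N-point multiset on S^d. Then the squared L² hemisphere discrepancy satisfies [D_{L²,hem}(Z)]² = (1/2) · ( ∬_{S^d×S^d} d(x,y) dσ(x)dσ(y) − (1/N²) Σ_{i,j=1}^N d(z_i, z_j) ), where moreover ∬_{S^d×S^d} d(x,y) dσ(x)dσ(y) = 1/2. -/
open MeasureTheory Metric Set
open scoped RealInnerProductSpace ENNReal

noncomputable section

open scoped Pointwise
namespace Stolarsky

variable {d : ℕ}

local notation "E" => EuclideanSpace ℝ (Fin (d + 1))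

lemma norm_coe (y : Sphere d) : ‖(y : E)‖ = 1 := by
  have := y.2
  rwa [mem_sphere_zero_iff_norm] at this

/-- The map on the sphere induced by a linear isometry equivalence. -/
def smap (e : E ≃ₗᵢ[ℝ] E) (y : Sphere d) : Sphere d :=
  ⟨e y, by rw [mem_sphere_zero_iff_norm, e.norm_map]; exact norm_coe y⟩

lemma continuous_smap (e : E ≃ₗᵢ[ℝ] E) : Continuous (smap e) :=
  Continuous.subtype_mk (e.continuous.comp continuous_subtype_val) _

/-- The induced sphere map as a homeomorphism. -/
def smapHomeo (e : E ≃ₗᵢ[ℝ] E) : Sphere d ≃ₜ Sphere d where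
  toFun := smap e
  invFun := smap e.symm
  left_inv y := by simp [smap]
  right_inv y := by simp [smap]
  continuous_toFun := continuous_smap e
  continuous_invFun := continuous_smap e.symm

lemma smul_coe_image (s : Set (Sphere d)) :
    Ioo (0:ℝ) 1 • (Subtype.val '' s) =
      (fun x : E => ‖x‖⁻¹ • x) ⁻¹' (Subtype.val '' s) ∩ (ball (0:E) 1 \ {0}) := by
  ext x
  constructor
  · rintro ⟨r, hr, y, hy, rfl⟩
    obtain ⟨w, hw, rfl⟩ := hy
    have h1 : ‖(w : E)‖ = 1 := norm_coe w
    have hr0 : (0:ℝ) < r := hr.1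
    have hn : ‖r • (w : E)‖ = r := by
      rw [norm_smul, h1, mul_one, Real.norm_eq_abs, abs_of_pos hr0]
    refine ⟨?_, ?_, ?_⟩
    · show ‖r • (w : E)‖⁻¹ • (r • (w : E)) ∈ Subtype.val '' s
      rw [hn, smul_smul, inv_mul_cancel₀ hr0.ne', one_smul]
      exact ⟨w, hw, rfl⟩
    · rw [mem_ball_zero_iff, hn]; exact hr.2
    · simp only [mem_singleton_iff]
      intro h
      rw [h, norm_zero] at hn
      exact hr0.ne hn
  · rintro ⟨h1, h2, h3⟩
    simp only [mem_singleton_iff] at h3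
    have hx0 : ‖x‖ ≠ 0 := fun h => h3 (norm_eq_zero.mp h)
    have hxpos : 0 < ‖x‖ := lt_of_le_of_ne (norm_nonneg x) (Ne.symm hx0)
    refine ⟨‖x‖, ⟨hxpos, mem_ball_zero_iff.mp h2⟩, ‖x‖⁻¹ • x, h1, ?_⟩
    show ‖x‖ • ‖x‖⁻¹ • x = x
    rw [smul_smul, mul_inv_cancel₀ hx0, one_smul]

lemma measurableSet_coe_image {s : Set (Sphere d)} (hs : MeasurableSet s) :
    MeasurableSet (Subtype.val '' s) :=
  (MeasurableEmbedding.subtype_coe (isClosed_sphere.measurableSet)).measurableSet_image.2 hs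

lemma measurableSet_cone {s : Set (Sphere d)} (hs : MeasurableSet s) :
    MeasurableSet (Ioo (0:ℝ) 1 • (Subtype.val '' s)) := by
  rw [smul_coe_image]
  have hm : Measurable (fun x : E => ‖x‖⁻¹ • x) := (measurable_norm.inv).smul measurable_id
  exact (hm (measurableSet_coe_image hs)).inter
    (measurableSet_ball.diff (measurableSet_singleton 0))


lemma coe_image_smap_preimage (e : E ≃ₗᵢ[ℝ] E) (s : Set (Sphere d)) :
    Subtype.val '' (smap e ⁻¹' s) = ⇑e ⁻¹' (Subtype.val '' s) := by
  ext u
  constructor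
  · rintro ⟨y, hy, rfl⟩
    exact ⟨smap e y, hy, rfl⟩
  · rintro ⟨w, hw, hwe⟩
    have hu : ‖u‖ = 1 := by
      have : ‖e u‖ = 1 := by rw [← hwe]; exact norm_coe w
      rwa [e.norm_map] at this
    refine ⟨⟨u, mem_sphere_zero_iff_norm.mpr hu⟩, ?_, rfl⟩
    show smap e ⟨u, _⟩ ∈ s
    have : smap e ⟨u, mem_sphere_zero_iff_norm.mpr hu⟩ = w := Subtype.ext hwe.symm
    rw [this]; exact hw

lemma toSphere_smap_preimage (e : E ≃ₗᵢ[ℝ] E) {s : Set (Sphere d)} (hs : MeasurableSet s) :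
    (volume : Measure E).toSphere (smap e ⁻¹' s) = (volume : Measure E).toSphere s := by
  rw [Measure.toSphere_apply' _ (hs.preimage (continuous_smap e).measurable),
      Measure.toSphere_apply' _ hs]
  congr 1
  rw [smul_coe_image, smul_coe_image, coe_image_smap_preimage]
  have key : (fun x : E => ‖x‖⁻¹ • x) ⁻¹' (⇑e ⁻¹' (Subtype.val '' s)) ∩ (ball (0:E) 1 \ {0})
      = ⇑e ⁻¹' ((fun x : E => ‖x‖⁻¹ • x) ⁻¹' (Subtype.val '' s) ∩ (ball (0:E) 1 \ {0})) := by
    ext x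
    simp only [mem_inter_iff, mem_preimage, mem_diff, mem_ball_zero_iff, mem_singleton_iff]
    constructor
    · rintro ⟨h1, h2, h3⟩
      refine ⟨?_, by rwa [e.norm_map], fun h => h3 (by simpa using congrArg e.symm h)⟩
      show ‖e x‖⁻¹ • e x ∈ Subtype.val '' s
      rw [e.norm_map, ← e.map_smul]
      exact h1
    · rintro ⟨h1, h2, h3⟩
      refine ⟨?_, by rwa [e.norm_map] at h2, fun h => h3 (by rw [h, map_zero])⟩
      rw [e.norm_map, ← e.map_smul] at h1
      exact h1
  rw [key]
  have hm : Measurable (fun x : E => ‖x‖⁻¹ • x) := (measurable_norm.inv).smul measurable_id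
  have hB : MeasurableSet ((fun x : E => ‖x‖⁻¹ • x) ⁻¹' (Subtype.val '' s) ∩ (ball (0:E) 1 \ {0})) :=
    (hm (measurableSet_coe_image hs)).inter
      (measurableSet_ball.diff (measurableSet_singleton 0))
  exact e.measurePreserving.measure_preimage hB.nullMeasurableSet

lemma sphereMeasure_smap_preimage (e : E ≃ₗᵢ[ℝ] E) {s : Set (Sphere d)} (hs : MeasurableSet s) :
    sphereMeasure d (smap e ⁻¹' s) = sphereMeasure d s := by
  simp only [sphereMeasure, Measure.smul_apply, smul_eq_mul]
  rw [toSphere_smap_preimage e hs]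

lemma measurePreserving_smap (e : E ≃ₗᵢ[ℝ] E) :
    MeasurePreserving (smap e) (sphereMeasure d) (sphereMeasure d) := by
  refine ⟨(continuous_smap e).measurable, ?_⟩
  ext s hs
  rw [Measure.map_apply (continuous_smap e).measurable hs, sphereMeasure_smap_preimage e hs]

lemma toSphere_univ_ne_zero :
    (volume : Measure E).toSphere univ ≠ 0 := by
  rw [Measure.toSphere_apply_univ]
  refine mul_ne_zero ?_ ?_
  · simp [finrank_euclideanSpace_fin]
  · exact (measure_ball_pos _ _ one_pos).ne'

lemma toSphere_univ_ne_top :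
    (volume : Measure E).toSphere univ ≠ ∞ :=
  (measure_lt_top _ _).ne

instance : IsProbabilityMeasure (sphereMeasure d) := by
  constructor
  simp only [sphereMeasure, Measure.smul_apply, smul_eq_mul]
  exact ENNReal.inv_mul_cancel toSphere_univ_ne_zero toSphere_univ_ne_top

lemma sphereMeasure_null_of_subspace {s : Set (Sphere d)} (hs : MeasurableSet s)
    (W : Submodule ℝ E) (hW : W ≠ ⊤) (h : ∀ y : Sphere d, y ∈ s → (y : E) ∈ W) :
    sphereMeasure d s = 0 := by
  simp only [sphereMeasure, Measure.smul_apply, smul_eq_mul]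
  rw [Measure.toSphere_apply' _ hs]
  have hsub : Ioo (0:ℝ) 1 • (Subtype.val '' s) ⊆ (W : Set E) := by
    rintro x ⟨r, hr, y, ⟨w, hw, rfl⟩, rfl⟩
    exact W.smul_mem r (h w hw)
  have : volume (Ioo (0:ℝ) 1 • (Subtype.val '' s)) = 0 :=
    measure_mono_null hsub (Measure.addHaar_submodule _ W hW)
  rw [this, mul_zero, mul_zero]

lemma measurableSet_equator (x : Sphere d) : MeasurableSet {y : Sphere d | ip x y = 0} := by
  have : Continuous fun y : Sphere d => ip x y :=
    Continuous.inner continuous_const continuous_subtype_val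
  exact this.measurable (measurableSet_singleton 0)

lemma sphereMeasure_equator (x : Sphere d) : sphereMeasure d {y : Sphere d | ip x y = 0} = 0 := by
  refine sphereMeasure_null_of_subspace (measurableSet_equator x)
    ((ℝ ∙ (x:E))ᗮ) ?_ ?_
  · intro h
    have hx : (x:E) ∈ ((ℝ ∙ (x:E))ᗮ) := h ▸ Submodule.mem_top
    have := hx ((x:E)) (Submodule.mem_span_singleton_self _)
    rw [real_inner_self_eq_norm_sq, norm_coe] at this
    norm_num at this
  · intro y hy
    rw [Submodule.mem_orthogonal]
    intro u hu
    obtain ⟨c, rfl⟩ := Submodule.mem_span_singleton.mp hu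
    rw [real_inner_smul_left]
    have : ip x y = 0 := hy
    rw [ip] at this
    rw [this, mul_zero]


lemma continuous_ip_right (x : Sphere d) : Continuous fun y : Sphere d => ip x y :=
  Continuous.inner continuous_const continuous_subtype_val

lemma isOpen_hemi (x : Sphere d) : IsOpen (hemi x) :=
  isOpen_lt continuous_const (continuous_ip_right x)

lemma measurableSet_hemi (x : Sphere d) : MeasurableSet (hemi x) :=
  (isOpen_hemi x).measurableSet

lemma measurableSet_le_zero (x : Sphere d) : MeasurableSet {y : Sphere d | ip x y ≤ 0} :=
  (isClosed_le (continuous_ip_right x) continuous_const).measurableSet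

lemma sphereMeasure_hemi (x : Sphere d) : sphereMeasure d (hemi x) = 1 / 2 := by
  set σ := sphereMeasure d
  have hneg : σ {y : Sphere d | ip x y < 0} = σ (hemi x) := by
    have hpre : smap ((LinearIsometryEquiv.neg ℝ : E ≃ₗᵢ[ℝ] E)) ⁻¹' (hemi x)
        = {y : Sphere d | ip x y < 0} := by
      ext y
      show 0 < ip x (smap _ y) ↔ ip x y < 0
      have : ip x (smap ((LinearIsometryEquiv.neg ℝ : E ≃ₗᵢ[ℝ] E)) y) = -(ip x y) := by
        show ⟪(x:E), -(y:E)⟫ = -(⟪(x:E), (y:E)⟫)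
        rw [inner_neg_right]
      rw [this]
      constructor <;> intro h <;> linarith
    rw [← hpre, sphereMeasure_smap_preimage _ (measurableSet_hemi x)]
  have hcompl : (hemi x)ᶜ = {y : Sphere d | ip x y < 0} ∪ {y : Sphere d | ip x y = 0} := by
    ext y
    simp only [hemi, mem_compl_iff, mem_setOf_eq, mem_union, not_lt]
    constructor
    · intro h
      rcases lt_or_eq_of_le h with h' | h'
      · exact Or.inl h'
      · exact Or.inr h'
    · rintro (h | h) <;> [exact le_of_lt h; exact le_of_eq h]
  have h1 : σ (hemi x) + σ ((hemi x)ᶜ) = 1 := by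
    rw [measure_add_measure_compl (measurableSet_hemi x)]
    exact measure_univ
  have h2 : σ ((hemi x)ᶜ) = σ (hemi x) := by
    rw [hcompl]
    have := measure_union_le (μ := σ) {y : Sphere d | ip x y < 0} {y : Sphere d | ip x y = 0}
    have hle : σ ({y : Sphere d | ip x y < 0} ∪ {y : Sphere d | ip x y = 0})
        ≤ σ {y : Sphere d | ip x y < 0} := by
      refine le_trans this ?_
      rw [sphereMeasure_equator x, add_zero]
    have hge : σ {y : Sphere d | ip x y < 0}
        ≤ σ ({y : Sphere d | ip x y < 0} ∪ {y : Sphere d | ip x y = 0}) :=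
      measure_mono subset_union_left
    rw [le_antisymm hle hge, hneg]
  rw [h2, ← two_mul] at h1
  rw [ENNReal.eq_div_iff (by norm_num) (by norm_num)]
  exact h1


lemma exists_isometry_single (x x' : E) (hx : ‖x‖ = 1) (hx' : ‖x'‖ = 1) :
    ∃ e : E ≃ₗᵢ[ℝ] E, e x = x' := by
  have card_eq : Module.finrank ℝ E = Fintype.card (Fin (d+1)) := by
    simp [finrank_euclideanSpace_fin]
  have horth : ∀ u : E, ‖u‖ = 1 →
      Orthonormal ℝ (Set.restrict ({0} : Set (Fin (d+1))) (fun _ => u)) := by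
    intro u hu
    constructor
    · intro i; exact hu
    · intro i j hij
      exfalso
      exact hij (Subtype.ext (by rw [i.2.out, j.2.out]))
  obtain ⟨b, hb⟩ := Orthonormal.exists_orthonormalBasis_extension_of_card_eq
    card_eq (horth x hx)
  obtain ⟨b', hb'⟩ := Orthonormal.exists_orthonormalBasis_extension_of_card_eq
    card_eq (horth x' hx')
  refine ⟨b.repr.trans b'.repr.symm, ?_⟩
  have h1 : b 0 = x := hb 0 rfl
  have h2 : b' 0 = x' := hb' 0 rfl
  simp only [LinearIsometryEquiv.trans_apply]
  rw [← h1, b.repr_self, b'.repr_symm_single, h2]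

lemma exists_isometry_pair' (hd : 1 ≤ d) (x w x' w' : E)
    (hx : ‖x‖ = 1) (hw : ‖w‖ = 1) (hx' : ‖x'‖ = 1) (hw' : ‖w'‖ = 1)
    (ho : ⟪x, w⟫ = 0) (ho' : ⟪x', w'⟫ = 0) :
    ∃ e : E ≃ₗᵢ[ℝ] E, e x = x' ∧ e w = w' := by
  have card_eq : Module.finrank ℝ E = Fintype.card (Fin (d+1)) := by
    simp [finrank_euclideanSpace_fin]
  set i0 : Fin (d+1) := ⟨0, by omega⟩
  set i1 : Fin (d+1) := ⟨1, by omega⟩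
  have hne : i0 ≠ i1 := by simp [i0, i1, Fin.ext_iff]
  have horth : ∀ u v : E, ‖u‖ = 1 → ‖v‖ = 1 → ⟪u, v⟫ = 0 →
      Orthonormal ℝ (Set.restrict ({i0, i1} : Set (Fin (d+1)))
        (fun i => if i = i0 then u else v)) := by
    intro u v hu hv huv
    constructor
    · rintro ⟨i, hi⟩
      rcases hi with hi | hi
      · subst hi; simp [Set.restrict, hu]
      · rw [mem_singleton_iff] at hi
        subst hi
        simp only [Set.restrict]
        show ‖(if i1 = i0 then u else v)‖ = 1
        rw [if_neg (Ne.symm hne)]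
        exact hv
    · rintro ⟨i, hi⟩ ⟨j, hj⟩ hij
      have hij' : i ≠ j := fun h => hij (Subtype.ext h)
      simp only [Set.restrict]
      simp only [mem_insert_iff, mem_singleton_iff] at hi hj
      rcases hi with hi | hi <;> rcases hj with hj | hj <;> subst hi <;> subst hj
      · exact absurd rfl hij'
      · show ⟪(if i0 = i0 then u else v), (if i1 = i0 then u else v)⟫ = 0
        rw [if_pos rfl, if_neg (Ne.symm hne)]
        exact huv
      · show ⟪(if i1 = i0 then u else v), (if i0 = i0 then u else v)⟫ = 0
        rw [if_pos rfl, if_neg (Ne.symm hne), real_inner_comm]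
        exact huv
      · exact absurd rfl hij'
  obtain ⟨b, hb⟩ := Orthonormal.exists_orthonormalBasis_extension_of_card_eq
    card_eq (horth x w hx hw ho)
  obtain ⟨b', hb'⟩ := Orthonormal.exists_orthonormalBasis_extension_of_card_eq
    card_eq (horth x' w' hx' hw' ho')
  have hb0 : b i0 = x := by simpa using hb i0 (by simp)
  have hb1 : b i1 = w := by
    have := hb i1 (by simp)
    rwa [if_neg (Ne.symm hne)] at this
  have hb0' : b' i0 = x' := by simpa using hb' i0 (by simp)
  have hb1' : b' i1 = w' := by
    have := hb' i1 (by simp)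
    rwa [if_neg (Ne.symm hne)] at this
  refine ⟨b.repr.trans b'.repr.symm, ?_, ?_⟩
  · simp only [LinearIsometryEquiv.trans_apply]
    rw [← hb0, b.repr_self, b'.repr_symm_single, hb0']
  · simp only [LinearIsometryEquiv.trans_apply]
    rw [← hb1, b.repr_self, b'.repr_symm_single, hb1']

lemma exists_isometry_pair (hd : 1 ≤ d) (x z x' z' : Sphere d) (h : ip x z = ip x' z') :
    ∃ e : E ≃ₗᵢ[ℝ] E, e (x:E) = (x':E) ∧ e (z:E) = (z':E) := by
  set c := ip x z with hc
  have hip' : ⟪(x':E), (z':E)⟫ = c := h.symm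
  have hip : ⟪(x:E), (z:E)⟫ = c := rfl
  have key : ∀ (a b : Sphere d), ⟪(a:E), (b:E)⟫ = c →
      ⟪(b:E) - c • (a:E), (b:E) - c • (a:E)⟫ = 1 - c^2 := by
    intro a b hab
    have hba : ⟪(b:E), (a:E)⟫ = c := by rw [real_inner_comm]; exact hab
    have haa : ⟪(a:E), (a:E)⟫ = (1:ℝ) := by
      rw [real_inner_self_eq_norm_sq, norm_coe]; norm_num
    have hbb : ⟪(b:E), (b:E)⟫ = (1:ℝ) := by
      rw [real_inner_self_eq_norm_sq, norm_coe]; norm_num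
    simp only [inner_sub_left, inner_sub_right, real_inner_smul_left, real_inner_smul_right,
      hab, hba, haa, hbb]
    ring
  by_cases hdeg : c^2 = 1
  · have hz : ∀ (a b : Sphere d), ⟪(a:E), (b:E)⟫ = c → (b:E) = c • (a:E) := by
      intro a b hab
      have h0 : ⟪(b:E) - c • (a:E), (b:E) - c • (a:E)⟫ = (0:ℝ) := by
        rw [key a b hab, hdeg]; ring
      have := inner_self_eq_zero.mp h0
      exact sub_eq_zero.mp this
    obtain ⟨e, he⟩ := exists_isometry_single (x:E) (x':E) (norm_coe x) (norm_coe x')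
    refine ⟨e, he, ?_⟩
    rw [hz x z hip, hz x' z' hip', LinearIsometryEquiv.map_smul, he]
  · have hc1 : |c| ≤ 1 := by
      have := abs_real_inner_le_norm (x:E) (z:E)
      rwa [norm_coe, norm_coe, mul_one] at this
    have hc2 : c^2 < 1 := lt_of_le_of_ne
      (by nlinarith [sq_abs c, abs_nonneg c, sq_nonneg (1 - |c|)]) hdeg
    set s := Real.sqrt (1 - c^2) with hs
    have hspos : 0 < s := Real.sqrt_pos.mpr (by linarith)
    have hs2 : s^2 = 1 - c^2 := Real.sq_sqrt (by linarith)
    have mkw : ∀ (a b : Sphere d), ⟪(a:E), (b:E)⟫ = c →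
        ‖s⁻¹ • ((b:E) - c • (a:E))‖ = 1 ∧ ⟪(a:E), s⁻¹ • ((b:E) - c • (a:E))⟫ = 0 := by
      intro a b hab
      constructor
      · have hn2 : ‖(b:E) - c • (a:E)‖^2 = 1 - c^2 := by
          rw [← real_inner_self_eq_norm_sq]; exact key a b hab
        have hn : ‖(b:E) - c • (a:E)‖ = s := by
          rw [hs]
          rw [← hn2]
          rw [Real.sqrt_sq (norm_nonneg _)]
        rw [norm_smul, hn, Real.norm_eq_abs, abs_of_pos (inv_pos.mpr hspos),
          inv_mul_cancel₀ hspos.ne']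
      · rw [real_inner_smul_right, inner_sub_right, real_inner_smul_right, hab,
          real_inner_self_eq_norm_sq, norm_coe]
        ring
    obtain ⟨hw1, hw2⟩ := mkw x z hip
    obtain ⟨hw1', hw2'⟩ := mkw x' z' hip'
    obtain ⟨e, he1, he2⟩ := exists_isometry_pair' hd (x:E) (s⁻¹ • ((z:E) - c • (x:E)))
      (x':E) (s⁻¹ • ((z':E) - c • (x':E))) (norm_coe x) hw1 (norm_coe x') hw1' hw2 hw2'
    refine ⟨e, he1, ?_⟩
    have he2' : e ((z:E) - c • (x:E)) = (z':E) - c • (x':E) := by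
      have h1 : (z:E) - c • (x:E) = s • (s⁻¹ • ((z:E) - c • (x:E))) := by
        rw [smul_smul, mul_inv_cancel₀ hspos.ne', one_smul]
      rw [h1, LinearIsometryEquiv.map_smul, he2, smul_smul, mul_inv_cancel₀ hspos.ne', one_smul]
    have hsplit : e ((z:E)) = e (c • (x:E)) + e ((z:E) - c • (x:E)) := by
      rw [← map_add, add_sub_cancel]
    rw [hsplit, LinearIsometryEquiv.map_smul, he1, he2']
    abel


/-! ### The canonical geodesic curve -/

def va : E := EuclideanSpace.single (⟨0, Nat.succ_pos d⟩ : Fin (d+1)) (1:ℝ)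

def vb (hd : 1 ≤ d) : E := EuclideanSpace.single (⟨1, by omega⟩ : Fin (d+1)) (1:ℝ)

variable {hd : 1 ≤ d}

lemma inner_va_va : ⟪(va : E), (va : E)⟫ = (1:ℝ) := by
  simp [va, EuclideanSpace.inner_single_left, EuclideanSpace.single_apply]

lemma inner_vb_vb : ⟪(vb hd : E), (vb hd : E)⟫ = (1:ℝ) := by
  simp [vb, EuclideanSpace.inner_single_left, EuclideanSpace.single_apply]

lemma inner_va_vb : ⟪(va : E), (vb hd : E)⟫ = (0:ℝ) := by
  simp only [va, vb, EuclideanSpace.inner_single_left, EuclideanSpace.single_apply]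
  norm_num [Fin.ext_iff]

lemma inner_vb_va : ⟪(vb hd : E), (va : E)⟫ = (0:ℝ) := by
  simp only [va, vb, EuclideanSpace.inner_single_left, EuclideanSpace.single_apply]
  norm_num [Fin.ext_iff]

lemma uvec_inner (hd : 1 ≤ d) (θ₁ θ₂ : ℝ) :
    ⟪(Real.cos θ₁ • va + Real.sin θ₁ • vb hd : E),
      (Real.cos θ₂ • va + Real.sin θ₂ • vb hd : E)⟫ = Real.cos (θ₁ - θ₂) := by
  rw [inner_add_left, inner_add_right, inner_add_right, real_inner_smul_left,
    real_inner_smul_left, real_inner_smul_left, real_inner_smul_left, real_inner_smul_right,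
    real_inner_smul_right, real_inner_smul_right, real_inner_smul_right,
    inner_va_va, inner_vb_vb, inner_va_vb, inner_vb_va, Real.cos_sub]
  ring

def uu (hd : 1 ≤ d) (θ : ℝ) : Sphere d :=
  ⟨Real.cos θ • va + Real.sin θ • vb hd, by
    rw [mem_sphere_zero_iff_norm, ← Real.sqrt_sq (norm_nonneg _), ← real_inner_self_eq_norm_sq,
      uvec_inner hd θ θ, sub_self, Real.cos_zero, Real.sqrt_one]⟩

lemma ip_uu_uu (θ₁ θ₂ : ℝ) : ip (uu hd θ₁) (uu hd θ₂) = Real.cos (θ₁ - θ₂) :=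
  uvec_inner hd θ₁ θ₂

lemma ip_uu_apply (θ : ℝ) (y : Sphere d) :
    ip (uu hd θ) y = Real.cos θ * ⟪(va:E), (y:E)⟫ + Real.sin θ * ⟪(vb hd:E), (y:E)⟫ := by
  show ⟪(Real.cos θ • va + Real.sin θ • vb hd : E), (y:E)⟫ = _
  rw [inner_add_left, real_inner_smul_left, real_inner_smul_left]

/-! ### The wedge sets and their measures -/

def Dset (x z : Sphere d) : Set (Sphere d) := {y | 0 < ip x y ∧ ip z y ≤ 0}

lemma measurableSet_Dset (x z : Sphere d) : MeasurableSet (Dset x z) :=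
  ((isOpen_lt continuous_const (continuous_ip_right x)).measurableSet).inter
    (measurableSet_le_zero z)

lemma Dset_measure_congr (hd : 1 ≤ d) (x z x' z' : Sphere d) (h : ip x z = ip x' z') :
    sphereMeasure d (Dset x z) = sphereMeasure d (Dset x' z') := by
  obtain ⟨e, he1, he2⟩ := exists_isometry_pair hd x z x' z' h
  have hpre : smap e ⁻¹' Dset x' z' = Dset x z := by
    ext y
    show (0 < ip x' (smap e y) ∧ ip z' (smap e y) ≤ 0) ↔ _
    have h1 : ip x' (smap e y) = ip x y := by
      show ⟪(x':E), e (y:E)⟫ = ⟪(x:E), (y:E)⟫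
      rw [← he1, e.inner_map_map]
    have h2 : ip z' (smap e y) = ip z y := by
      show ⟪(z':E), e (y:E)⟫ = ⟪(z:E), (y:E)⟫
      rw [← he2, e.inner_map_map]
    rw [h1, h2]
    rfl
  rw [← hpre, sphereMeasure_smap_preimage e (measurableSet_Dset x' z')]

def G (hd : 1 ≤ d) (θ : ℝ) : ℝ := (sphereMeasure d (Dset (uu hd 0) (uu hd θ))).toReal

lemma G_eq (hd : 1 ≤ d) (x z : Sphere d) (θ : ℝ) (h : ip x z = Real.cos θ) :
    (sphereMeasure d (Dset x z)).toReal = G hd θ := by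
  have h' : ip x z = ip (uu hd 0) (uu hd θ) := by
    rw [ip_uu_uu, zero_sub, Real.cos_neg, h]
  rw [G, Dset_measure_congr hd x z (uu hd 0) (uu hd θ) h']

lemma G_nonneg (θ : ℝ) : 0 ≤ G hd θ := ENNReal.toReal_nonneg

lemma G_zero : G hd 0 = 0 := by
  have : Dset (uu hd 0) (uu hd 0) = (∅ : Set (Sphere d)) := by
    ext y
    simp only [Dset, mem_setOf_eq, mem_empty_iff_false, iff_false, not_and, not_le]
    intro h
    exact h
  rw [G, this, measure_empty]
  simp

lemma toReal_half : ((1:ℝ≥0∞) / 2).toReal = 1 / 2 := by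
  rw [ENNReal.toReal_div]
  simp

lemma G_pi : G hd Real.pi = 1 / 2 := by
  have hset : Dset (uu hd 0) (uu hd Real.pi) = hemi (uu hd 0) := by
    ext y
    simp only [Dset, hemi, mem_setOf_eq]
    have h1 : ip (uu hd Real.pi) y = -(ip (uu hd 0) y) := by
      rw [ip_uu_apply, ip_uu_apply]
      simp [Real.cos_pi, Real.sin_pi]
    rw [h1]
    constructor
    · rintro ⟨h, _⟩; exact h
    · intro h; exact ⟨h, by linarith⟩
  rw [G, hset, sphereMeasure_hemi, toReal_half]


lemma G_add (hd : 1 ≤ d) {a b : ℝ} (ha : 0 ≤ a) (hb : 0 ≤ b) (hab : a + b ≤ Real.pi) :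
    G hd (a + b) = G hd a + G hd b := by
  have hpi : 0 < Real.pi := Real.pi_pos
  set σ := sphereMeasure d
  set x := uu hd 0
  set zz := uu hd a
  set w := uu hd (a + b)
  set A := Dset x zz
  set B := Dset zz w
  set C := Dset x w
  set Nset : Set (Sphere d) := {y : Sphere d | ip x y = 0}
  have sa : 0 ≤ Real.sin a := Real.sin_nonneg_of_nonneg_of_le_pi ha (by linarith)
  have sb : 0 ≤ Real.sin b := Real.sin_nonneg_of_nonneg_of_le_pi hb (by linarith)
  have sab : 0 ≤ Real.sin (a + b) := Real.sin_nonneg_of_nonneg_of_le_pi (by linarith) hab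
  -- coordinate descriptions
  have hx0 : ∀ y : Sphere d, ip x y = ⟪(va:E), (y:E)⟫ := by
    intro y
    rw [show x = uu hd 0 from rfl, ip_uu_apply]
    simp
  have hza : ∀ y : Sphere d,
      ip zz y = Real.cos a * ⟪(va:E), (y:E)⟫ + Real.sin a * ⟪(vb hd:E), (y:E)⟫ := fun y =>
    ip_uu_apply a y
  have hwab : ∀ y : Sphere d,
      ip w y = Real.cos (a+b) * ⟪(va:E), (y:E)⟫ + Real.sin (a+b) * ⟪(vb hd:E), (y:E)⟫ :=
    fun y => ip_uu_apply (a+b) y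
  -- pointwise inclusions
  have hAC : A ⊆ C := by
    rintro y ⟨hy1, hy2⟩
    rw [hx0] at hy1
    rw [hza] at hy2
    set p := (⟪(va:E), (y:E)⟫ : ℝ)
    set q := (⟪(vb hd:E), (y:E)⟫ : ℝ)
    refine ⟨by rw [hx0]; exact hy1, ?_⟩
    rw [hwab]
    have key : Real.sin a * (Real.cos (a+b) * p + Real.sin (a+b) * q)
        = Real.sin (a+b) * (Real.cos a * p + Real.sin a * q) - Real.sin ((a+b) - a) * p := by
      rw [Real.sin_sub]; ring
    rw [show a + b - a = b from by ring] at key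
    rcases eq_or_lt_of_le sa with hsa | hsa
    · -- sin a = 0 : a = 0 (contradiction) or a = π (then b = 0)
      have hcases : a = 0 ∨ a = Real.pi := by
        rcases lt_or_eq_of_le (show a ≤ Real.pi from by linarith) with h' | h'
        · left
          exact (Real.sin_eq_zero_iff_of_lt_of_lt (by linarith) h').mp hsa.symm
        · right; exact h'
      rcases hcases with h' | h'
      · exfalso
        rw [h'] at hy2
        simp at hy2
        linarith
      · have hb0 : b = 0 := by rw [h'] at hab; linarith
        rw [hb0, add_zero]
        exact hy2
    · have h1 : Real.sin a * (Real.cos (a+b) * p + Real.sin (a+b) * q) ≤ 0 := by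
        nlinarith [mul_nonneg sb hy1.le, mul_nonpos_of_nonneg_of_nonpos sab hy2]
      nlinarith
  have hCB : C ⊆ A ∪ B := by
    rintro y ⟨h1, h2⟩
    by_cases hz : ip zz y ≤ 0
    · exact Or.inl ⟨h1, hz⟩
    · exact Or.inr ⟨lt_of_not_ge hz, h2⟩
  have hBCN : B ⊆ C ∪ Nset := by
    rintro y ⟨h1, h2⟩
    rw [hza] at h1
    rw [hwab] at h2
    set p := (⟪(va:E), (y:E)⟫ : ℝ)
    set q := (⟪(vb hd:E), (y:E)⟫ : ℝ)
    have key2 : Real.sin ((a+b) - a) * p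
        = Real.sin (a+b) * (Real.cos a * p + Real.sin a * q)
          - Real.sin a * (Real.cos (a+b) * p + Real.sin (a+b) * q) := by
      rw [Real.sin_sub]; ring
    rw [show a + b - a = b from by ring] at key2
    rcases eq_or_lt_of_le sb with hsb | hsb
    · -- sin b = 0 : b = 0 (contradiction) or b = π (then a = 0)
      have hcases : b = 0 ∨ b = Real.pi := by
        rcases lt_or_eq_of_le (show b ≤ Real.pi from by linarith) with h' | h'
        · left
          exact (Real.sin_eq_zero_iff_of_lt_of_lt (by linarith) h').mp hsb.symm
        · right; exact h'
      rcases hcases with h' | h'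
      · exfalso
        rw [h'] at h2
        rw [add_zero] at h2
        linarith
      · have ha0 : a = 0 := by rw [h'] at hab; linarith
        left
        refine ⟨?_, by rw [hwab]; exact h2⟩
        rw [hx0]
        rw [ha0] at h1
        simp at h1
        exact h1
    · have hp : 0 ≤ Real.sin b * p := by
        nlinarith [mul_nonneg sab h1.le, mul_nonpos_of_nonneg_of_nonpos sa h2]
      have hp' : 0 ≤ p := by nlinarith
      rcases eq_or_lt_of_le hp' with hp0 | hp0
      · right
        show ip x y = 0
        rw [hx0]
        exact hp0.symm
      · left
        exact ⟨by rw [hx0]; exact hp0, by rw [hwab]; exact h2⟩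
  have hABdisj : Disjoint A B := by
    rw [Set.disjoint_left]
    rintro y ⟨_, hy2⟩ ⟨hy1', _⟩
    exact absurd hy1' (not_lt.mpr hy2)
  -- measures
  have hNzero : σ Nset = 0 := sphereMeasure_equator x
  have hUnion : σ A + σ B = σ (A ∪ B) :=
    (measure_union hABdisj (measurableSet_Dset zz w)).symm
  have hle1 : σ C ≤ σ A + σ B := by
    rw [hUnion]
    exact measure_mono hCB
  have hle2 : σ A + σ B ≤ σ C := by
    rw [hUnion]
    calc σ (A ∪ B) ≤ σ (C ∪ Nset) := by
          refine measure_mono ?_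
          refine union_subset (hAC.trans subset_union_left) hBCN
    _ ≤ σ C + σ Nset := measure_union_le _ _
    _ = σ C := by rw [hNzero, add_zero]
  have hCeq : σ C = σ A + σ B := le_antisymm hle1 hle2
  have hfin : ∀ s : Set (Sphere d), σ s ≠ ∞ := fun s => measure_ne_top σ s
  have hG1 : G hd (a+b) = (σ C).toReal := rfl
  have hG2 : G hd a = (σ A).toReal := rfl
  have hG3 : (σ B).toReal = G hd b := by
    refine G_eq hd zz w b ?_
    rw [ip_uu_uu, show a - (a+b) = -b from by ring, Real.cos_neg]
  rw [hG1, hG2, ← hG3, hCeq, ENNReal.toReal_add (hfin A) (hfin B)]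


lemma G_mono (hd : 1 ≤ d) {a b : ℝ} (ha : 0 ≤ a) (hab : a ≤ b) (hb : b ≤ Real.pi) :
    G hd a ≤ G hd b := by
  have h := G_add hd ha (show (0:ℝ) ≤ b - a from by linarith)
    (show a + (b - a) ≤ Real.pi from by linarith)
  rw [show a + (b - a) = b from by ring] at h
  have := G_nonneg (hd := hd) (b - a)
  linarith

lemma G_nsmul (hd : 1 ≤ d) (k : ℕ) {t : ℝ} (ht : 0 ≤ t) (hk : (k:ℝ) * t ≤ Real.pi) :
    G hd ((k:ℝ) * t) = (k:ℝ) * G hd t := by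
  induction k with
  | zero => simpa using G_zero (hd := hd)
  | succ n ih =>
    have hn : (n:ℝ) * t ≤ Real.pi := by
      have h1 : (n:ℝ) * t ≤ ((n:ℝ)+1) * t := by nlinarith
      push_cast at hk
      linarith
    have hnn : 0 ≤ (n:ℝ) * t := by positivity
    have h2 : ((n:ℝ) + 1) * t = (n:ℝ) * t + t := by ring
    push_cast
    rw [h2, G_add hd hnn ht (by push_cast at hk; linarith), ih hn]
    ring

lemma G_rat (hd : 1 ≤ d) (n k : ℕ) (hn : 0 < n) (hk : k ≤ n) :
    G hd ((k:ℝ) * Real.pi / n) = (k:ℝ) / (2 * n) := by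
  have hpi : 0 < Real.pi := Real.pi_pos
  have hn' : (0:ℝ) < n := by exact_mod_cast hn
  have htn : 0 ≤ Real.pi / n := by positivity
  have hcancel : (n:ℝ) * (Real.pi / n) = Real.pi := by field_simp
  have h1 : G hd ((n:ℝ) * (Real.pi / n)) = (n:ℝ) * G hd (Real.pi / n) :=
    G_nsmul hd n htn (by rw [hcancel])
  rw [hcancel, G_pi] at h1
  have hGn : G hd (Real.pi / n) = 1 / (2 * n) := by
    field_simp at h1 ⊢
    linarith
  have h2 : G hd ((k:ℝ) * (Real.pi / n)) = (k:ℝ) * G hd (Real.pi / n) := by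
    refine G_nsmul hd k htn ?_
    have : (k:ℝ) ≤ n := by exact_mod_cast hk
    calc (k:ℝ) * (Real.pi / n) ≤ (n:ℝ) * (Real.pi / n) := by
          apply mul_le_mul_of_nonneg_right this htn
    _ = Real.pi := hcancel
  rw [show (k:ℝ) * Real.pi / n = (k:ℝ) * (Real.pi / n) from by ring, h2, hGn]
  ring

lemma G_linear (hd : 1 ≤ d) {θ : ℝ} (h0 : 0 ≤ θ) (hπ : θ ≤ Real.pi) :
    G hd θ = θ / (2 * Real.pi) := by
  have hpi : 0 < Real.pi := Real.pi_pos
  rcases eq_or_lt_of_le hπ with hθπ | hθπ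
  · rw [hθπ, G_pi]
    field_simp
  -- θ < π
  have key : ∀ n : ℕ, 0 < n → |G hd θ - θ / (2 * Real.pi)| ≤ 1 / n := by
    intro n hn
    have hn' : (0:ℝ) < n := by exact_mod_cast hn
    set k := ⌊(n:ℝ) * θ / Real.pi⌋₊ with hkdef
    have hfl_nonneg : 0 ≤ (n:ℝ) * θ / Real.pi := by positivity
    have hk1 : (k:ℝ) ≤ (n:ℝ) * θ / Real.pi := Nat.floor_le hfl_nonneg
    have hk2 : (n:ℝ) * θ / Real.pi < (k:ℝ) + 1 := Nat.lt_floor_add_one _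
    have hklt : (n:ℝ) * θ / Real.pi < n := by
      rw [div_lt_iff₀ hpi]
      nlinarith
    have hkn : k < n := by
      by_contra hcon
      push_neg at hcon
      have : (n:ℝ) ≤ (k:ℝ) := by exact_mod_cast hcon
      linarith
    have hkn' : k + 1 ≤ n := hkn
    have hlow : (k:ℝ) * Real.pi / n ≤ θ := by
      rw [div_le_iff₀ hn']
      rw [le_div_iff₀ hpi] at hk1
      linarith
    have hhigh : θ ≤ ((k:ℝ) + 1) * Real.pi / n := by
      rw [le_div_iff₀ hn']
      rw [div_lt_iff₀ hpi] at hk2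
      nlinarith
    have hGlow : (k:ℝ) / (2*n) ≤ G hd θ := by
      rw [← G_rat hd n k hn hkn.le]
      exact G_mono hd (by positivity) hlow hπ
    have hGhigh : G hd θ ≤ ((k:ℝ)+1) / (2*n) := by
      have := G_rat hd n (k+1) hn hkn'
      push_cast at this
      rw [← this]
      refine G_mono hd h0 hhigh ?_
      rw [div_le_iff₀ hn']
      have : (k:ℝ) + 1 ≤ n := by exact_mod_cast hkn'
      nlinarith
    have hlow' : (k:ℝ) * Real.pi ≤ θ * n := by
      rw [div_le_iff₀ hn'] at hlow
      linarith
    have hhigh' : θ * n ≤ ((k:ℝ)+1) * Real.pi := by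
      rw [le_div_iff₀ hn'] at hhigh
      linarith
    rw [abs_le]
    constructor
    · have hθb : θ / (2*Real.pi) ≤ ((k:ℝ)+1) / (2*n) := by
        rw [div_le_div_iff₀ (by positivity) (by positivity)]
        nlinarith
      have : ((k:ℝ)+1)/(2*n) - (k:ℝ)/(2*n) = 1/(2*n) := by field_simp; ring
      have h1n : 1/(2*(n:ℝ)) ≤ 1/n := by
        rw [div_le_div_iff₀ (by positivity) hn']
        linarith
      linarith
    · have hθb : (k:ℝ) / (2*n) ≤ θ / (2*Real.pi) := by
        rw [div_le_div_iff₀ (by positivity) (by positivity)]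
        nlinarith
      have : ((k:ℝ)+1)/(2*n) - (k:ℝ)/(2*n) = 1/(2*n) := by field_simp; ring
      have h1n : 1/(2*(n:ℝ)) ≤ 1/n := by
        rw [div_le_div_iff₀ (by positivity) hn']
        linarith
      linarith
  by_contra hne
  have hpos : 0 < |G hd θ - θ / (2 * Real.pi)| := by
    rcases lt_or_eq_of_le (abs_nonneg (G hd θ - θ / (2*Real.pi))) with h | h
    · exact h
    · exfalso
      apply hne
      have := abs_eq_zero.mp h.symm
      linarith
  obtain ⟨n, hlt⟩ := exists_nat_one_div_lt hpos
  have := key (n+1) (Nat.succ_pos n)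
  push_cast at this hlt
  linarith


lemma ip_bounds (x z : Sphere d) : -1 ≤ ip x z ∧ ip x z ≤ 1 := by
  have h := abs_real_inner_le_norm (x : E) (z : E)
  rw [norm_coe, norm_coe, mul_one] at h
  have := abs_le.mp h
  exact this

lemma Dset_toReal (hd : 1 ≤ d) (x z : Sphere d) :
    (sphereMeasure d (Dset x z)).toReal = geo x z / 2 := by
  have hpi : 0 < Real.pi := Real.pi_pos
  obtain ⟨hb1, hb2⟩ := ip_bounds x z
  set θ := Real.arccos (ip x z) with hθ
  have h0 : 0 ≤ θ := Real.arccos_nonneg _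
  have hπ : θ ≤ Real.pi := Real.arccos_le_pi _
  have hcos : Real.cos θ = ip x z := Real.cos_arccos hb1 hb2
  rw [G_eq hd x z θ hcos.symm, G_linear hd h0 hπ, geo, hθ]
  ring

lemma toReal_hemi (x : Sphere d) : (sphereMeasure d (hemi x)).toReal = 1 / 2 := by
  rw [sphereMeasure_hemi, toReal_half]

lemma lune_toReal (hd : 1 ≤ d) (x z : Sphere d) :
    (sphereMeasure d (hemi x ∩ hemi z)).toReal = 1 / 2 - geo x z / 2 := by
  set σ := sphereMeasure d
  have hdiff : hemi x \ hemi z = Dset x z := by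
    ext y
    simp only [hemi, Dset, mem_diff, mem_setOf_eq, not_lt]
  have hsplit : σ (hemi x ∩ hemi z) + σ (hemi x \ hemi z) = σ (hemi x) :=
    measure_inter_add_diff _ (measurableSet_hemi z)
  have h1 : (σ (hemi x ∩ hemi z)).toReal + (σ (hemi x \ hemi z)).toReal = (σ (hemi x)).toReal := by
    rw [← ENNReal.toReal_add (measure_ne_top σ _) (measure_ne_top σ _), hsplit]
  rw [hdiff, Dset_toReal hd, toReal_hemi] at h1
  linarith


/-! ### Integrals -/

lemma continuous_geo (x : Sphere d) : Continuous (fun y : Sphere d => geo x y) :=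
  (Real.continuous_arccos.comp (continuous_ip_right x)).div_const _

lemma integrable_geo (x : Sphere d) : Integrable (fun y => geo x y) (sphereMeasure d) := by
  refine (continuous_geo x).integrable_of_hasCompactSupport ?_
  exact isCompact_univ.of_isClosed_subset (isClosed_tsupport _) (subset_univ _)

lemma integral_geo_eq_half (x : Sphere d) :
    ∫ y, geo x y ∂(sphereMeasure d) = 1 / 2 := by
  have hpi : 0 < Real.pi := Real.pi_pos
  set σ := sphereMeasure d
  set nege : E ≃ₗᵢ[ℝ] E := (LinearIsometryEquiv.neg ℝ : E ≃ₗᵢ[ℝ] E)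
  have hmp := measurePreserving_smap (d := d) nege
  have hcomp : ∫ y, geo x (smap nege y) ∂σ = ∫ y, geo x y ∂σ :=
    hmp.integral_comp (smapHomeo nege).measurableEmbedding _
  have hpt : ∀ y : Sphere d, geo x (smap nege y) = 1 - geo x y := by
    intro y
    have h1 : ip x (smap nege y) = -(ip x y) := by
      show ⟪(x:E), -(y:E)⟫ = -(⟪(x:E), (y:E)⟫)
      rw [inner_neg_right]
    rw [geo, geo, h1, Real.arccos_neg]
    field_simp
  have h2 : ∫ y, geo x (smap nege y) ∂σ = 1 - ∫ y, geo x y ∂σ := by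
    calc ∫ y, geo x (smap nege y) ∂σ = ∫ y, (1 - geo x y) ∂σ := by
          refine integral_congr_ae (Filter.Eventually.of_forall fun y => hpt y)
    _ = 1 - ∫ y, geo x y ∂σ := by
          rw [integral_sub (integrable_const 1) (integrable_geo x), integral_const]
          simp [measure_univ]
          rfl
  rw [h2] at hcomp
  linarith

lemma double_integral_geo :
    ∫ x, ∫ y, geo x y ∂(sphereMeasure d) ∂(sphereMeasure d) = 1 / 2 := by
  have : (fun x : Sphere d => ∫ y, geo x y ∂(sphereMeasure d)) = fun _ => (1/2:ℝ) :=
    funext fun x => integral_geo_eq_half x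
  rw [this, integral_const]
  simp [measure_univ]

lemma integrable_indicator_one {s : Set (Sphere d)} (hs : MeasurableSet s) :
    Integrable (fun x : Sphere d => Set.indicator s (1 : Sphere d → ℝ) x) (sphereMeasure d) :=
  (integrable_const (1:ℝ)).indicator hs

lemma indicator_swap (x w : Sphere d) :
    Set.indicator (hemi x) (1 : Sphere d → ℝ) w = Set.indicator (hemi w) (1 : Sphere d → ℝ) x := by
  have hmem : w ∈ hemi x ↔ x ∈ hemi w := by
    show 0 < ip x w ↔ 0 < ip w x
    rw [ip, ip, real_inner_comm]
  classical
  rw [Set.indicator_apply, Set.indicator_apply]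
  by_cases h : w ∈ hemi x
  · rw [if_pos h, if_pos (hmem.mp h)]
    rfl
  · rw [if_neg h, if_neg (fun h' => h (hmem.mpr h'))]

end Stolarsky

open Stolarsky

/-- **Stolarsky principle for hemispheres**: the squared `L²` hemisphere discrepancy of an
`N`-point configuration equals one half of the difference between the continuous and discrete
geodesic distance energies; moreover `∬ d(x,y) dσ dσ = 1/2`. -/
theorem stolarsky_hemisphere (d N : ℕ) (hd : 1 ≤ d) (hN : 1 ≤ N) (z : Fin N → Sphere d) :
    (∫ x, |(1 / N : ℝ) * ∑ j, Set.indicator (hemi x) (1 : Sphere d → ℝ) (z j) - 1 / 2| ^ 2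
        ∂(sphereMeasure d))
      = 1 / 2 * ((∫ x, ∫ y, geo x y ∂(sphereMeasure d) ∂(sphereMeasure d))
          - (1 / (N : ℝ) ^ 2) * ∑ i, ∑ j, geo (z i) (z j))
    ∧ (∫ x, ∫ y, geo x y ∂(sphereMeasure d) ∂(sphereMeasure d)) = 1 / 2 := by
  classical
  have hdouble := Stolarsky.double_integral_geo (d := d)
  refine ⟨?_, hdouble⟩
  rw [hdouble]
  have hN0 : (N:ℝ) ≠ 0 := Nat.cast_ne_zero.mpr (by omega)
  set σ := sphereMeasure d with hσ
  have hmeas : ∀ i j : Fin N, MeasurableSet (hemi (z i) ∩ hemi (z j)) := fun i j =>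
    (measurableSet_hemi _).inter (measurableSet_hemi _)
  -- pointwise expansion
  have hpt : ∀ x : Sphere d,
      |(1 / N : ℝ) * ∑ j, Set.indicator (hemi x) (1 : Sphere d → ℝ) (z j) - 1 / 2| ^ 2
      = (1/(N:ℝ))^2 * (∑ i, ∑ j, Set.indicator (hemi (z i) ∩ hemi (z j)) (1 : Sphere d → ℝ) x)
        - (1/(N:ℝ)) * (∑ j, Set.indicator (hemi (z j)) (1 : Sphere d → ℝ) x) + 1/4 := by
    intro x
    have hswap : (∑ j, Set.indicator (hemi x) (1 : Sphere d → ℝ) (z j))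
        = ∑ j, Set.indicator (hemi (z j)) (1 : Sphere d → ℝ) x :=
      Finset.sum_congr rfl fun j _ => indicator_swap x (z j)
    have hsq : (∑ j, Set.indicator (hemi (z j)) (1 : Sphere d → ℝ) x)^2
        = ∑ i, ∑ j, Set.indicator (hemi (z i) ∩ hemi (z j)) (1 : Sphere d → ℝ) x := by
      rw [sq, Finset.sum_mul_sum]
      refine Finset.sum_congr rfl fun i _ => Finset.sum_congr rfl fun j _ => ?_
      rw [← Set.inter_indicator_mul]
      congr 1
      funext y
      simp
    rw [sq_abs, hswap, ← hsq]
    ring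
  have hint_ind : ∀ i j : Fin N,
      Integrable (fun x : Sphere d =>
        Set.indicator (hemi (z i) ∩ hemi (z j)) (1 : Sphere d → ℝ) x) σ := fun i j =>
    integrable_indicator_one (hmeas i j)
  have hint_sum2 : Integrable (fun x : Sphere d =>
      (1/(N:ℝ))^2 * ∑ i, ∑ j, Set.indicator (hemi (z i) ∩ hemi (z j)) (1 : Sphere d → ℝ) x) σ :=
    (integrable_finset_sum _ fun i _ =>
      integrable_finset_sum _ fun j _ => hint_ind i j).const_mul _
  have hint_sum1 : Integrable (fun x : Sphere d =>
      (1/(N:ℝ)) * ∑ j, Set.indicator (hemi (z j)) (1 : Sphere d → ℝ) x) σ :=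
    (integrable_finset_sum _ fun j _ => integrable_indicator_one (measurableSet_hemi _)).const_mul _
  have hlune : ∀ i j : Fin N,
      ∫ x, Set.indicator (hemi (z i) ∩ hemi (z j)) (1 : Sphere d → ℝ) x ∂σ
        = 1/2 - geo (z i) (z j) / 2 := fun i j => by
    rw [integral_indicator_one (hmeas i j), measureReal_def, lune_toReal hd]
  have hhemI : ∀ j : Fin N,
      ∫ x, Set.indicator (hemi (z j)) (1 : Sphere d → ℝ) x ∂σ = 1/2 := fun j => by
    rw [integral_indicator_one (measurableSet_hemi _), measureReal_def, toReal_hemi]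
  calc (∫ x, |(1 / N : ℝ) * ∑ j, Set.indicator (hemi x) (1 : Sphere d → ℝ) (z j) - 1 / 2| ^ 2 ∂σ)
      = ∫ x, ((1/(N:ℝ))^2 * (∑ i, ∑ j,
            Set.indicator (hemi (z i) ∩ hemi (z j)) (1 : Sphere d → ℝ) x)
          - (1/(N:ℝ)) * (∑ j, Set.indicator (hemi (z j)) (1 : Sphere d → ℝ) x) + 1/4) ∂σ :=
        integral_congr_ae (Filter.Eventually.of_forall hpt)
    _ = (∫ x, ((1/(N:ℝ))^2 * (∑ i, ∑ j,
            Set.indicator (hemi (z i) ∩ hemi (z j)) (1 : Sphere d → ℝ) x)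
          - (1/(N:ℝ)) * (∑ j, Set.indicator (hemi (z j)) (1 : Sphere d → ℝ) x)) ∂σ)
          + ∫ _x, (1/4 : ℝ) ∂σ := integral_add (hint_sum2.sub hint_sum1) (integrable_const _)
    _ = (∫ x, (1/(N:ℝ))^2 * (∑ i, ∑ j,
            Set.indicator (hemi (z i) ∩ hemi (z j)) (1 : Sphere d → ℝ) x) ∂σ)
          - (∫ x, (1/(N:ℝ)) * (∑ j, Set.indicator (hemi (z j)) (1 : Sphere d → ℝ) x) ∂σ)
          + ∫ _x, (1/4 : ℝ) ∂σ := by rw [integral_sub hint_sum2 hint_sum1]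
    _ = (1/(N:ℝ))^2 * (∑ i, ∑ j, (1/2 - geo (z i) (z j) / 2))
          - (1/(N:ℝ)) * (∑ j : Fin N, (1/2 : ℝ)) + 1/4 := by
        rw [integral_const_mul, integral_const_mul, integral_const]
        rw [integral_finset_sum _ (fun i _ =>
          integrable_finset_sum _ fun j _ => hint_ind i j)]
        rw [integral_finset_sum _ (fun j _ =>
          integrable_indicator_one (measurableSet_hemi (z j)))]
        simp only [measure_univ, probReal_univ, ENNReal.toReal_one, one_smul]
        congr 1
        · congr 1
          · refine congrArg _ (Finset.sum_congr rfl fun i _ => ?_)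
            rw [integral_finset_sum _ (fun j _ => hint_ind i j)]
            exact Finset.sum_congr rfl fun j _ => hlune i j
          · exact congrArg _ (Finset.sum_congr rfl fun j _ => hhemI j)
    _ = 1 / 2 * (1 / 2 - (1 / (N : ℝ) ^ 2) * ∑ i, ∑ j, geo (z i) (z j)) := by
        have h1 : (∑ i : Fin N, ∑ j : Fin N, (1/2 - geo (z i) (z j) / 2))
            = (N:ℝ) * ((N:ℝ) * (1/2)) - (∑ i : Fin N, ∑ j : Fin N, geo (z i) (z j)) / 2 := by
          rw [Finset.sum_congr rfl (fun i (_ : i ∈ Finset.univ) => Finset.sum_sub_distrib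
            (f := fun _ => (1/2:ℝ)) (g := fun j => geo (z i) (z j) / 2)), Finset.sum_sub_distrib]
          simp only [Finset.sum_const, Finset.card_univ, Fintype.card_fin, nsmul_eq_mul,
            ← Finset.sum_div]
        have h2 : (∑ _j : Fin N, (1/2:ℝ)) = (N:ℝ)/2 := by
          simp only [Finset.sum_const, Finset.card_univ, Fintype.card_fin, nsmul_eq_mul]
          ring
        rw [h1, h2]
        field_simp
        ring
end
end

section
/- Let d ≥ 1. For any N-point multiset Z = {z_1, …, z_N} on S^d, the average pairwise geodesic distance satisfies (1/N²) Σ_{i,j=1}^N d(z_i, z_j) ≤ 1/2. -/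
open MeasureTheory Metric Set
open scoped RealInnerProductSpace ENNReal

noncomputable section

namespace GeoAux

open Real Filter

/-! ### A helper: functions with zero derivative on a convex set are constant -/

lemma const_of_hasDerivAt_zero {f : ℝ → ℝ} {s : Set ℝ} (hs : Convex ℝ s)
    (hf : ∀ x ∈ s, HasDerivAt f 0 x) {x y : ℝ} (hx : x ∈ s) (hy : y ∈ s) : f x = f y := by
  have hfd : ∀ a ∈ s, HasFDerivWithinAt f (0 : ℝ →L[ℝ] ℝ) s a := by
    intro a ha
    have h0 := (hf a ha).hasFDerivAt
    have he : ContinuousLinearMap.toSpanSingleton ℝ (0 : ℝ) = 0 := by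
      ext t
      simp
    rw [he] at h0
    exact h0.hasFDerivWithinAt
  have h := hs.norm_image_sub_le_of_norm_hasFDerivWithin_le (C := 0) hfd
    (fun a _ => by simp) hx hy
  have h2 : ‖f y - f x‖ ≤ 0 := by simpa using h
  have h3 := norm_le_zero_iff.mp h2
  linarith [sub_eq_zero.mp h3]

/-! ### The coefficients of the binomial series for `(1-y)^{-1/2}` -/

/-- `c k = C(2k,k)/4^k`, defined by its recurrence. -/
def c : ℕ → ℝ
  | 0 => 1
  | (k + 1) => c k * (2 * (k : ℝ) + 1) / (2 * (k : ℝ) + 2)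

lemma c_pos : ∀ k, 0 < c k
  | 0 => one_pos
  | (k + 1) => by
      have h := c_pos k
      show 0 < c k * (2 * (k : ℝ) + 1) / (2 * (k : ℝ) + 2)
      positivity

lemma c_le_one : ∀ k, c k ≤ 1
  | 0 => le_refl 1
  | (k + 1) => by
      have h := c_le_one k
      have hp := (c_pos k).le
      show c k * (2 * (k : ℝ) + 1) / (2 * (k : ℝ) + 2) ≤ 1
      rw [div_le_one (by positivity)]
      nlinarith [Nat.cast_nonneg (α := ℝ) k]

lemma c_rec (k : ℕ) : (2 * (k : ℝ) + 2) * c (k + 1) = (2 * (k : ℝ) + 1) * c k := by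
  show (2 * (k : ℝ) + 2) * (c k * (2 * (k : ℝ) + 1) / (2 * (k : ℝ) + 2)) = _
  have : (2 * (k : ℝ) + 2) ≠ 0 := by positivity
  field_simp

/-! ### Summability lemmas -/

lemma summable_c_pow {y : ℝ} (hy : |y| < 1) : Summable fun k => c k * y ^ k := by
  apply Summable.of_norm_bounded (summable_geometric_of_lt_one (abs_nonneg y) hy)
  intro k
  rw [norm_mul, norm_pow, Real.norm_eq_abs, Real.norm_eq_abs,
    abs_of_pos (c_pos k)]
  calc c k * |y| ^ k ≤ 1 * |y| ^ k := by
        apply mul_le_mul_of_nonneg_right (c_le_one k) (by positivity)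
    _ = |y| ^ k := one_mul _

lemma summable_k_geom {r : ℝ} (hr : 0 ≤ r) (h1 : r < 1) :
    Summable fun k : ℕ => (k : ℝ) * r ^ k := by
  have := summable_pow_mul_geometric_of_norm_lt_one (R := ℝ) 1
    (r := r) (by rwa [Real.norm_eq_abs, abs_of_nonneg hr])
  simpa using this

lemma summable_deriv_bound {r : ℝ} (hr : 0 ≤ r) (h1 : r < 1) :
    Summable fun k : ℕ => (k : ℝ) * r ^ (k - 1) := by
  rw [← summable_nat_add_iff 1]
  have h2 : Summable fun k : ℕ => ((k : ℝ) + 1) * r ^ k := by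
    have := (summable_k_geom hr h1).add (summable_geometric_of_lt_one hr h1)
    simpa [add_mul] using this
  refine h2.congr fun k => ?_
  push_cast
  simp

lemma summable_kc_pow {y : ℝ} (hy : |y| < 1) :
    Summable fun k : ℕ => (k : ℝ) * c k * y ^ k := by
  apply Summable.of_norm_bounded (summable_k_geom (abs_nonneg y) hy)
  intro k
  rw [Real.norm_eq_abs, abs_mul, abs_mul, abs_pow, Nat.abs_cast, abs_of_pos (c_pos k)]
  calc (k : ℝ) * c k * |y| ^ k ≤ (k : ℝ) * 1 * |y| ^ k := by
        apply mul_le_mul_of_nonneg_right _ (by positivity)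
        exact mul_le_mul_of_nonneg_left (c_le_one k) (Nat.cast_nonneg k)
    _ = (k : ℝ) * |y| ^ k := by ring

lemma summable_cderiv {y : ℝ} (hy : |y| < 1) :
    Summable fun k : ℕ => c k * ((k : ℝ) * y ^ (k - 1)) := by
  apply Summable.of_norm_bounded (summable_deriv_bound (abs_nonneg y) hy)
  intro k
  rw [Real.norm_eq_abs, abs_mul, abs_mul, abs_pow, Nat.abs_cast, abs_of_pos (c_pos k)]
  calc c k * ((k : ℝ) * |y| ^ (k - 1)) ≤ 1 * ((k : ℝ) * |y| ^ (k - 1)) :=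
        mul_le_mul_of_nonneg_right (c_le_one k) (by positivity)
    _ = (k : ℝ) * |y| ^ (k - 1) := one_mul _

/-! ### The function `Sf y = ∑ c k y^k = (1-y)^{-1/2}` -/

def Sf (y : ℝ) : ℝ := ∑' k, c k * y ^ k

def DSf (y : ℝ) : ℝ := ∑' k, c k * ((k : ℝ) * y ^ (k - 1))

lemma hasDerivAt_Sf {y : ℝ} (hy : |y| < 1) : HasDerivAt Sf (DSf y) y := by
  obtain ⟨r, hyr, hr1⟩ := exists_between hy
  have hr0 : 0 < r := lt_of_le_of_lt (abs_nonneg y) hyr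
  apply hasDerivAt_tsum_of_isPreconnected (u := fun k : ℕ => (k : ℝ) * r ^ (k - 1))
    (summable_deriv_bound hr0.le hr1) (isOpen_Ioo (a := -r) (b := r))
    (convex_Ioo _ _).isPreconnected
    (g := fun k y => c k * y ^ k) (g' := fun k y => c k * ((k : ℝ) * y ^ (k - 1)))
    (fun n x _ => (hasDerivAt_pow n x).const_mul (c n))
    ?_ (by constructor <;> simp [hr0] : (0:ℝ) ∈ Ioo (-r) r) ?_ (abs_lt.mp hyr)
  · intro n x hx
    have hxr : |x| ≤ r := (abs_lt.2 ⟨hx.1, hx.2⟩).le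
    rw [Real.norm_eq_abs, abs_mul, abs_mul, abs_pow, Nat.abs_cast, abs_of_pos (c_pos n)]
    calc c n * ((n : ℝ) * |x| ^ (n - 1)) ≤ 1 * ((n : ℝ) * r ^ (n - 1)) := by
          apply mul_le_mul (c_le_one n)
          · exact mul_le_mul_of_nonneg_left (pow_le_pow_left₀ (abs_nonneg x) hxr _)
              (Nat.cast_nonneg n)
          · positivity
          · norm_num
      _ = (n : ℝ) * r ^ (n - 1) := one_mul _
  · apply summable_of_ne_finset_zero (s := {0})
    intro k hk
    simp only [Finset.mem_singleton] at hk
    simp [zero_pow hk]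

lemma two_mul_DSf {y : ℝ} (hy : |y| < 1) : 2 * ((1 - y) * DSf y) = Sf y := by
  have hs := summable_c_pow hy
  have hks := summable_kc_pow hy
  have hds := summable_cderiv hy
  -- T = ∑ k c_k y^k
  set T : ℝ := ∑' k : ℕ, (k : ℝ) * c k * y ^ k with hT
  have hyDS : y * DSf y = T := by
    rw [DSf, ← tsum_mul_left]
    congr 1
    funext k
    rcases Nat.eq_zero_or_pos k with hk | hk
    · subst hk; simp
    · have : k - 1 + 1 = k := Nat.succ_pred_eq_of_pos hk
      rw [← this]
      push_cast
      ring
  have h2DS : 2 * DSf y = 2 * T + Sf y := by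
    have h1 : 2 * DSf y = ∑' k, 2 * (c k * ((k : ℝ) * y ^ (k - 1))) := by
      rw [DSf, tsum_mul_left]
    rw [h1, Summable.tsum_eq_zero_add (hds.mul_left 2)]
    simp only [Nat.cast_zero, zero_mul, mul_zero, zero_add, Nat.cast_add, Nat.cast_one,
      Nat.add_sub_cancel]
    have h2 : (fun k : ℕ => 2 * (c (k + 1) * (((k : ℝ) + 1) * y ^ k)))
        = fun k : ℕ => 2 * ((k : ℝ) * c k * y ^ k) + c k * y ^ k := by
      funext k
      have := c_rec k
      linear_combination y ^ k * this
    rw [h2, Summable.tsum_add (hks.mul_left 2) hs, tsum_mul_left, hT, Sf]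
  linarith [hyDS, h2DS]

lemma Sf_zero : Sf 0 = 1 := by
  rw [Sf, tsum_eq_single 0 (fun k hk => by simp [zero_pow hk])]
  simp [c]

lemma Sf_sq {y : ℝ} (hy : |y| < 1) : (1 - y) * Sf y ^ 2 = 1 := by
  have key : ∀ x ∈ Ioo (-1 : ℝ) 1, HasDerivAt (fun y => (1 - y) * Sf y ^ 2) 0 x := by
    intro x hx
    have hx1 : |x| < 1 := abs_lt.2 ⟨hx.1, hx.2⟩
    have hS := hasDerivAt_Sf hx1
    have h1 : HasDerivAt (fun y : ℝ => 1 - y) (-1) x := by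
      simpa using (hasDerivAt_id x).const_sub 1
    have h2 : HasDerivAt (fun y => Sf y ^ 2) (2 * Sf x * DSf x) x := by
      have h := hS.pow 2
      norm_num at h
      exact h
    have h3 := h1.mul h2
    refine h3.congr_deriv (Eq.symm ?_)
    have h2d := two_mul_DSf hx1
    linear_combination (-(Sf x)) * h2d
  have h01 : (0 : ℝ) ∈ Ioo (-1 : ℝ) 1 := by constructor <;> norm_num
  have hy1 : y ∈ Ioo (-1 : ℝ) 1 := abs_lt.1 hy
  have := const_of_hasDerivAt_zero (convex_Ioo (-1 : ℝ) 1) key hy1 h01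
  rw [this, Sf_zero]
  norm_num

lemma Sf_eq {y : ℝ} (h0 : 0 ≤ y) (h1 : y < 1) : Sf y = 1 / Real.sqrt (1 - y) := by
  have hy : |y| < 1 := by rwa [abs_of_nonneg h0]
  have hs := summable_c_pow hy
  have hge : 1 ≤ Sf y := by
    have := Summable.le_tsum hs 0 (fun k _ => mul_nonneg (c_pos k).le (pow_nonneg h0 k))
    simpa [c, Sf] using this
  have hsq := Sf_sq hy
  set t : ℝ := Real.sqrt (1 - y) * Sf y with htd
  have ht2 : t ^ 2 = 1 := by
    rw [htd, mul_pow, Real.sq_sqrt (by linarith)]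
    exact hsq
  have htpos : 0 < t := by
    apply mul_pos _ (by linarith)
    exact Real.sqrt_pos.2 (by linarith)
  have ht1 : t = 1 := by
    have hfac : (t - 1) * (t + 1) = 0 := by nlinarith
    rcases mul_eq_zero.mp hfac with h | h
    · linarith
    · linarith
  have hsqrt : Real.sqrt (1 - y) ≠ 0 := ne_of_gt (Real.sqrt_pos.2 (by linarith))
  field_simp
  linarith [ht1]

/-! ### The arcsin series -/

def a (k : ℕ) : ℝ := c k / (2 * (k : ℝ) + 1)

lemma a_pos (k : ℕ) : 0 < a k := by
  have := c_pos k
  rw [a]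
  positivity

lemma a_mul (k : ℕ) : a k * (2 * (k : ℝ) + 1) = c k := by
  rw [a]
  have : (2 * (k : ℝ) + 1) ≠ 0 := by positivity
  field_simp

lemma a_le_one (k : ℕ) : a k ≤ 1 := by
  rw [a, div_le_one (by positivity)]
  have := c_le_one k
  linarith [Nat.cast_nonneg (α := ℝ) k]

def Af (x : ℝ) : ℝ := ∑' k, a k * x ^ (2 * k + 1)

lemma summable_a_pow {x : ℝ} (hx : |x| < 1) : Summable fun k => a k * x ^ (2 * k + 1) := by
  apply Summable.of_norm_bounded
    (g := fun k => |x| * (|x| ^ 2) ^ k)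
    (Summable.mul_left _ (summable_geometric_of_lt_one (by positivity)
      (by nlinarith [abs_nonneg x])))
  intro k
  rw [Real.norm_eq_abs, abs_mul, abs_pow, abs_of_pos (a_pos k)]
  have : |x| ^ (2 * k + 1) = |x| * (|x| ^ 2) ^ k := by
    rw [← pow_mul, pow_succ, mul_comm (|x| ^ (2 * k)) (|x|), mul_comm 2 k]
  rw [this]
  exact mul_le_of_le_one_left (by positivity) (a_le_one k)

lemma hasDerivAt_Af {x : ℝ} (hx : |x| < 1) : HasDerivAt Af (Sf (x ^ 2)) x := by
  obtain ⟨r, hyr, hr1⟩ := exists_between hx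
  have hr0 : 0 < r := lt_of_le_of_lt (abs_nonneg x) hyr
  have key : HasDerivAt Af (∑' k, c k * x ^ (2 * k)) x := by
    have hform : ∀ (n : ℕ) (t : ℝ),
        a n * (((2 * n + 1 : ℕ) : ℝ) * t ^ (2 * n + 1 - 1)) = c n * t ^ (2 * n) := by
      intro n t
      have h1 : (2 * n + 1 - 1 : ℕ) = 2 * n := by omega
      rw [h1]
      push_cast
      rw [← a_mul n]
      ring
    have := hasDerivAt_tsum_of_isPreconnected (u := fun k : ℕ => (r ^ 2) ^ k)
      (summable_geometric_of_lt_one (by positivity) (by nlinarith))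
      (isOpen_Ioo (a := -r) (b := r)) (convex_Ioo _ _).isPreconnected
      (g := fun k t => a k * t ^ (2 * k + 1))
      (g' := fun k t => c k * t ^ (2 * k))
      (fun n t _ => by
        have h := (hasDerivAt_pow (2 * n + 1) t).const_mul (a n)
        rw [hform n t] at h
        exact h)
      ?_ (by constructor <;> simp [hr0] : (0:ℝ) ∈ Ioo (-r) r) ?_ (abs_lt.mp hyr)
    · exact this
    · intro n t ht
      have htr : |t| ≤ r := (abs_lt.2 ⟨ht.1, ht.2⟩).le
      rw [Real.norm_eq_abs, abs_mul, abs_pow, abs_of_pos (c_pos n)]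
      calc c n * |t| ^ (2 * n) ≤ 1 * r ^ (2 * n) := by
            apply mul_le_mul (c_le_one n) (pow_le_pow_left₀ (abs_nonneg t) htr _)
              (by positivity) (by norm_num)
        _ = (r ^ 2) ^ n := by rw [one_mul, ← pow_mul, mul_comm 2 n]
    · apply summable_of_ne_finset_zero (s := ∅)
      intro k _
      simp
  have heq : (∑' k, c k * x ^ (2 * k)) = Sf (x ^ 2) := by
    rw [Sf]
    congr 1
    funext k
    rw [← pow_mul]
  rwa [heq] at key

lemma Af_zero : Af 0 = 0 := by
  have : (fun k : ℕ => a k * (0 : ℝ) ^ (2 * k + 1)) = fun _ => (0 : ℝ) := by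
    funext k
    simp
  rw [Af, this, tsum_zero]

lemma Af_eq_arcsin {x : ℝ} (hx : |x| < 1) : Af x = Real.arcsin x := by
  have key : ∀ t ∈ Ioo (-1 : ℝ) 1, HasDerivAt (fun s => Af s - Real.arcsin s) 0 t := by
    intro t ht
    have ht1 : |t| < 1 := abs_lt.2 ⟨ht.1, ht.2⟩
    have h1 := hasDerivAt_Af ht1
    have h2 := Real.hasDerivAt_arcsin (ne_of_gt ht.1) (ne_of_lt ht.2)
    have h3 : Sf (t ^ 2) = 1 / Real.sqrt (1 - t ^ 2) :=
      Sf_eq (sq_nonneg t) (by nlinarith [ht.1, ht.2])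
    have h4 := h1.sub h2
    rw [h3, sub_self] at h4
    exact h4
  have hx1 : x ∈ Ioo (-1 : ℝ) 1 := abs_lt.1 hx
  have h01 : (0 : ℝ) ∈ Ioo (-1 : ℝ) 1 := by constructor <;> norm_num
  have := const_of_hasDerivAt_zero (convex_Ioo (-1 : ℝ) 1) key hx1 h01
  rw [Af_zero, Real.arcsin_zero, sub_zero] at this
  linarith [this]

/-! ### Positive-definiteness of odd powers of inner products -/

lemma sum_pow_coord_nonneg {n N M : ℕ} (w : Fin N → Fin n → ℝ) :
    0 ≤ ∑ i, ∑ j, (∑ cc, w i cc * w j cc) ^ M := by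
  classical
  set A : Fin N → (Fin M → Fin n) → ℝ := fun i p => ∏ k, w i (p k) with hA
  have key : ∀ i j, (∑ cc, w i cc * w j cc) ^ M = ∑ p : Fin M → Fin n, A i p * A j p := by
    intro i j
    calc (∑ cc, w i cc * w j cc) ^ M
        = ∏ _k : Fin M, (∑ cc, w i cc * w j cc) := by
          rw [Finset.prod_const, Finset.card_univ, Fintype.card_fin]
      _ = ∑ p ∈ Fintype.piFinset (fun _ : Fin M => Finset.univ),
            ∏ k, (w i (p k) * w j (p k)) := Finset.prod_univ_sum _ _
      _ = ∑ p : Fin M → Fin n, A i p * A j p := by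
          rw [Fintype.piFinset_univ]
          exact Finset.sum_congr rfl fun p _ => Finset.prod_mul_distrib
  calc (0:ℝ) ≤ ∑ p : Fin M → Fin n, (∑ i, A i p) ^ 2 :=
        Finset.sum_nonneg fun p _ => sq_nonneg _
    _ = ∑ p : Fin M → Fin n, (∑ i, A i p) * (∑ j, A j p) := by
        apply Finset.sum_congr rfl; intro p _; rw [sq]
    _ = ∑ p : Fin M → Fin n, ∑ i, (A i p * ∑ j, A j p) := by
        apply Finset.sum_congr rfl; intro p _; rw [Finset.sum_mul]
    _ = ∑ i, ∑ p : Fin M → Fin n, (A i p * ∑ j, A j p) := Finset.sum_comm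
    _ = ∑ i, ∑ p : Fin M → Fin n, ∑ j, A i p * A j p := by
        apply Finset.sum_congr rfl; intro i _
        apply Finset.sum_congr rfl; intro p _
        rw [Finset.mul_sum]
    _ = ∑ i, ∑ j, ∑ p : Fin M → Fin n, A i p * A j p := by
        apply Finset.sum_congr rfl; intro i _; exact Finset.sum_comm
    _ = ∑ i, ∑ j, (∑ cc, w i cc * w j cc) ^ M := by
        apply Finset.sum_congr rfl; intro i _
        apply Finset.sum_congr rfl; intro j _
        rw [key]

end GeoAux

/-- For any `N`-point configuration on `S^d`, the average pairwise normalized geodesic distance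
is at most `1/2`. -/
theorem geodesic_sum_le_half (d N : ℕ) (hd : 1 ≤ d) (hN : 1 ≤ N) (z : Fin N → Sphere d) :
    (1 / (N : ℝ) ^ 2) * ∑ i, ∑ j, geo (z i) (z j) ≤ 1 / 2 := by
  classical
  open GeoAux Real Filter in
  -- the Gram entries
  set t : Fin N → Fin N → ℝ := fun i j => ip (z i) (z j) with htdef
  have hnorm : ∀ i, ‖(z i : EuclideanSpace ℝ (Fin (d + 1)))‖ = 1 := fun i =>
    mem_sphere_zero_iff_norm.mp (z i).2
  have htle : ∀ i j, |t i j| ≤ 1 := by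
    intro i j
    have := abs_real_inner_le_norm
      (z i : EuclideanSpace ℝ (Fin (d + 1))) (z j : EuclideanSpace ℝ (Fin (d + 1)))
    rwa [hnorm i, hnorm j, one_mul] at this
  -- positivity of the power sums
  have hpow : ∀ M : ℕ, 0 ≤ ∑ i, ∑ j, (t i j) ^ M := by
    intro M
    have hcoord : ∀ i j, t i j = ∑ cc, (z i : EuclideanSpace ℝ (Fin (d + 1))) cc *
        (z j : EuclideanSpace ℝ (Fin (d + 1))) cc := by
      intro i j
      simp [htdef, ip, PiLp.inner_apply, RCLike.inner_apply, mul_comm]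
    simp_rw [hcoord]
    exact GeoAux.sum_pow_coord_nonneg _
  -- positivity of the arcsin sums at parameter l < 1
  have hpos : ∀ l ∈ Ioo (0 : ℝ) 1, 0 ≤ ∑ i, ∑ j, Real.arcsin (l * t i j) := by
    intro l hl
    have hl0 := hl.1
    have hl1 := hl.2
    have hlt : ∀ i j, |l * t i j| < 1 := by
      intro i j
      rw [abs_mul, abs_of_pos hl0]
      calc l * |t i j| ≤ l * 1 := mul_le_mul_of_nonneg_left (htle i j) hl0.le
        _ < 1 := by linarith
    have hrw : ∀ i j, Real.arcsin (l * t i j)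
        = ∑' k, (GeoAux.a k * l ^ (2 * k + 1)) * (t i j) ^ (2 * k + 1) := by
      intro i j
      rw [← GeoAux.Af_eq_arcsin (hlt i j), GeoAux.Af]
      congr 1
      funext k
      rw [mul_pow]
      ring
    simp_rw [hrw]
    have hsum : ∀ i j : Fin N,
        Summable fun k => (GeoAux.a k * l ^ (2 * k + 1)) * (t i j) ^ (2 * k + 1) := by
      intro i j
      have := GeoAux.summable_a_pow (hlt i j)
      convert this using 2 with k
      rw [mul_pow]
      ring
    have hswap1 : ∀ i : Fin N,
        (∑ j, ∑' k, (GeoAux.a k * l ^ (2 * k + 1)) * (t i j) ^ (2 * k + 1))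
        = ∑' k, ∑ j, (GeoAux.a k * l ^ (2 * k + 1)) * (t i j) ^ (2 * k + 1) := by
      intro i
      exact (Summable.tsum_finsetSum fun j _ => hsum i j).symm
    simp_rw [hswap1]
    have hswap2 :
        (∑ i, ∑' k, ∑ j, (GeoAux.a k * l ^ (2 * k + 1)) * (t i j) ^ (2 * k + 1))
        = ∑' k, ∑ i, ∑ j, (GeoAux.a k * l ^ (2 * k + 1)) * (t i j) ^ (2 * k + 1) := by
      exact (Summable.tsum_finsetSum fun i _ => summable_sum fun j _ => hsum i j).symm
    rw [hswap2]
    apply tsum_nonneg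
    intro k
    have h1 : ∑ i, ∑ j, (GeoAux.a k * l ^ (2 * k + 1)) * (t i j) ^ (2 * k + 1)
        = (GeoAux.a k * l ^ (2 * k + 1)) * ∑ i, ∑ j, (t i j) ^ (2 * k + 1) := by
      rw [Finset.mul_sum]
      apply Finset.sum_congr rfl
      intro i _
      rw [Finset.mul_sum]
    rw [h1]
    apply mul_nonneg
    · have := GeoAux.a_pos k
      positivity
    · exact hpow (2 * k + 1)
  -- pass to the limit l → 1⁻
  have harc0 : 0 ≤ ∑ i, ∑ j, Real.arcsin (t i j) := by
    have hcont : Continuous fun l : ℝ => ∑ i, ∑ j, Real.arcsin (l * t i j) := by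
      apply continuous_finset_sum
      intro i _
      apply continuous_finset_sum
      intro j _
      exact Real.continuous_arcsin.comp (continuous_id.mul continuous_const)
    have htend : Tendsto (fun l : ℝ => ∑ i, ∑ j, Real.arcsin (l * t i j))
        (nhdsWithin 1 (Iio 1)) (nhds (∑ i, ∑ j, Real.arcsin ((1:ℝ) * t i j))) :=
      (hcont.tendsto 1).mono_left nhdsWithin_le_nhds
    have hev : ∀ᶠ l in nhdsWithin (1:ℝ) (Iio 1),
        0 ≤ ∑ i, ∑ j, Real.arcsin (l * t i j) := by
      filter_upwards [Ioo_mem_nhdsLT_of_mem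
        (show (1:ℝ) ∈ Ioc (0:ℝ) 1 by constructor <;> norm_num)] with l hl
      exact hpos l hl
    have := ge_of_tendsto htend hev
    simpa using this
  -- rewrite geo in terms of arcsin
  have hπ : (0 : ℝ) < Real.pi := Real.pi_pos
  have hgeo : ∀ i j, geo (z i) (z j) = 1 / 2 - Real.arcsin (t i j) / Real.pi := by
    intro i j
    rw [geo, Real.arccos, sub_div]
    congr 1
    field_simp
  have hsum : ∑ i, ∑ j, geo (z i) (z j)
      = (N : ℝ) * ((N : ℝ) * (1 / 2)) - (∑ i, ∑ j, Real.arcsin (t i j)) / Real.pi := by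
    have e1 : ∀ i : Fin N, ∑ j, (1 / 2 - Real.arcsin (t i j) / Real.pi)
        = (N : ℝ) * (1 / 2) - (∑ j, Real.arcsin (t i j)) / Real.pi := by
      intro i
      rw [Finset.sum_sub_distrib, Finset.sum_const, Finset.card_univ, Fintype.card_fin,
        ← Finset.sum_div, nsmul_eq_mul]
    simp_rw [hgeo, e1]
    rw [Finset.sum_sub_distrib, Finset.sum_const, Finset.card_univ, Fintype.card_fin,
      ← Finset.sum_div, nsmul_eq_mul]
  have hN2 : (0 : ℝ) < (N : ℝ) ^ 2 := by
    have : (0 : ℝ) < (N : ℝ) := by exact_mod_cast hN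
    positivity
  rw [hsum]
  rw [div_mul_eq_mul_div, one_mul, div_le_div_iff₀ hN2 (by norm_num : (0:ℝ) < 2)]
  have harcdiv : 0 ≤ (∑ i, ∑ j, Real.arcsin (t i j)) / Real.pi := by positivity
  nlinarith [harcdiv, hN2]
end
end

section
/- Let d ≥ 1 and let N be even. For any N-point multiset Z = {z_1, …, z_N} on S^d, (1/N²) Σ_{i,j=1}^N d(z_i, z_j) ≤ 1/2, and equality holds if and only if Z is centrally symmetric, i.e., there exists a permutation π of {1,…,N} such that z_{π(i)} = −z_i for all i. -/
open MeasureTheory Metric Set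
open scoped RealInnerProductSpace ENNReal

noncomputable section

section AuxiliaryLemmas

open Finset Real MeasureTheory

lemma cb_refl (n : ℕ) :
    2 * ∑ i ∈ Finset.range (n+1), (2*i+1) * (Nat.centralBinom i * Nat.centralBinom (n-i))
      = (2*n+2) * ∑ i ∈ Finset.range (n+1), Nat.centralBinom i * Nat.centralBinom (n-i) := by
  have hrefl := Finset.sum_range_reflect
    (fun i => (2*i+1) * (Nat.centralBinom i * Nat.centralBinom (n-i))) (n+1)
  rw [two_mul]
  nth_rewrite 1 [← hrefl]
  rw [← Finset.sum_add_distrib, Finset.mul_sum]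
  apply Finset.sum_congr rfl
  intro i hi
  have hi' : i ≤ n := Nat.lt_succ_iff.mp (Finset.mem_range.mp hi)
  have h1 : n + 1 - 1 - i = n - i := by omega
  have h2 : n - (n - i) = i := by omega
  simp only [h1, h2]
  have h3 : 2*(n-i)+1 + (2*i+1) = 2*n+2 := by omega
  rw [mul_comm (Nat.centralBinom (n-i)) (Nat.centralBinom i), ← add_mul, h3]

lemma cb_half (m : ℕ) :
    2 * ∑ j ∈ Finset.range (m+1), j * (Nat.centralBinom j * Nat.centralBinom (m-j))
      = m * ∑ j ∈ Finset.range (m+1), Nat.centralBinom j * Nat.centralBinom (m-j) := by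
  have h := cb_refl m
  have expand : ∑ j ∈ Finset.range (m+1), (2*j+1) * (Nat.centralBinom j * Nat.centralBinom (m-j))
      = 2 * ∑ j ∈ Finset.range (m+1), j * (Nat.centralBinom j * Nat.centralBinom (m-j))
        + ∑ j ∈ Finset.range (m+1), Nat.centralBinom j * Nat.centralBinom (m-j) := by
    rw [Finset.mul_sum, ← Finset.sum_add_distrib]
    exact Finset.sum_congr rfl fun i _ => by ring
  rw [expand] at h
  set T := ∑ j ∈ Finset.range (m+1), j * (Nat.centralBinom j * Nat.centralBinom (m-j)) with hT
  set S := ∑ j ∈ Finset.range (m+1), Nat.centralBinom j * Nat.centralBinom (m-j) with hS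
  have h2 : 2 * (2 * T) + 2 * S = 2 * (m * S) + 2 * S := by
    calc 2 * (2 * T) + 2 * S = 2 * (2 * T + S) := by ring
    _ = (2*m+2) * S := h
    _ = 2 * (m * S) + 2 * S := by ring
  have h3 : 2 * (2 * T) = 2 * (m * S) := by omega
  omega

lemma cb_conv (n : ℕ) :
    ∑ i ∈ Finset.range (n+1), Nat.centralBinom i * Nat.centralBinom (n-i) = 4^n := by
  induction n with
  | zero => simp [Nat.centralBinom]
  | succ n ih =>
    have hs2 := cb_half (n+1)
    have hshift : ∑ j ∈ Finset.range (n+2), j * (Nat.centralBinom j * Nat.centralBinom (n+1-j))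
        = ∑ i ∈ Finset.range (n+1), (i+1) * (Nat.centralBinom (i+1) * Nat.centralBinom (n-i)) := by
      rw [Finset.sum_range_succ']
      simp [Nat.succ_sub_succ]
    have hrec : ∀ i : ℕ, (i+1) * (Nat.centralBinom (i+1) * Nat.centralBinom (n-i))
        = 2 * ((2*i+1) * (Nat.centralBinom i * Nat.centralBinom (n-i))) := by
      intro i
      rw [← mul_assoc, Nat.succ_mul_centralBinom_succ]
      ring
    have hsum : ∑ j ∈ Finset.range (n+2), j * (Nat.centralBinom j * Nat.centralBinom (n+1-j))
        = (2*n+2) * ∑ i ∈ Finset.range (n+1), Nat.centralBinom i * Nat.centralBinom (n-i) := by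
      rw [hshift]
      calc ∑ i ∈ Finset.range (n+1), (i+1) * (Nat.centralBinom (i+1) * Nat.centralBinom (n-i))
          = ∑ i ∈ Finset.range (n+1), 2 * ((2*i+1) * (Nat.centralBinom i * Nat.centralBinom (n-i))) :=
            Finset.sum_congr rfl fun i _ => hrec i
        _ = 2 * ∑ i ∈ Finset.range (n+1), (2*i+1) * (Nat.centralBinom i * Nat.centralBinom (n-i)) :=
            (Finset.mul_sum _ _ _).symm
        _ = (2*n+2) * ∑ i ∈ Finset.range (n+1), Nat.centralBinom i * Nat.centralBinom (n-i) := cb_refl n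
    rw [hsum, ih] at hs2
    have h4 : (n+1) * ∑ j ∈ Finset.range (n+2), Nat.centralBinom j * Nat.centralBinom (n+1-j)
        = (n+1) * (4 ^ (n+1)) := by
      rw [← hs2]; ring
    exact Nat.eq_of_mul_eq_mul_left (Nat.succ_pos n) h4

def aCoef (k : ℕ) : ℝ := (Nat.centralBinom k : ℝ) / 4 ^ k

lemma centralBinom_le_four_pow (k : ℕ) : Nat.centralBinom k ≤ 4 ^ k := by
  have h1 : Nat.centralBinom k ≤ ∑ m ∈ Finset.range (2*k + 1), (2*k).choose m := by
    rw [Nat.centralBinom_eq_two_mul_choose]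
    exact Finset.single_le_sum (f := fun m => (2*k).choose m) (fun _ _ => Nat.zero_le _)
      (Finset.mem_range.mpr (by omega))
  rw [Nat.sum_range_choose] at h1
  calc Nat.centralBinom k ≤ 2 ^ (2*k) := h1
  _ = 4 ^ k := by rw [pow_mul]; norm_num

lemma aCoef_pos (k : ℕ) : 0 < aCoef k :=
  div_pos (by exact_mod_cast Nat.centralBinom_pos k) (by positivity)

lemma aCoef_le_one (k : ℕ) : aCoef k ≤ 1 := by
  rw [aCoef, div_le_one (by positivity)]
  exact_mod_cast centralBinom_le_four_pow k

lemma hasSum_invSqrt {u : ℝ} (h0 : 0 ≤ u) (h1 : u < 1) :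
    HasSum (fun k => aCoef k * u ^ k) ((Real.sqrt (1 - u))⁻¹) := by
  have hterm : ∀ k, 0 ≤ aCoef k * u ^ k :=
    fun k => mul_nonneg (aCoef_pos k).le (pow_nonneg h0 k)
  have hle : ∀ k, aCoef k * u ^ k ≤ u ^ k :=
    fun k => mul_le_of_le_one_left (pow_nonneg h0 k) (aCoef_le_one k)
  have hsumm : Summable (fun k => aCoef k * u ^ k) :=
    Summable.of_nonneg_of_le hterm hle (summable_geometric_of_lt_one h0 h1)
  have hnorm : Summable (fun k => ‖aCoef k * u ^ k‖) := by
    simpa only [Real.norm_of_nonneg (hterm _)] using hsumm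
  have hprod := tsum_mul_tsum_eq_tsum_sum_range_of_summable_norm hnorm hnorm
  have hinner : ∀ n : ℕ, ∑ k ∈ Finset.range (n+1),
      (aCoef k * u^k) * (aCoef (n-k) * u^(n-k)) = u ^ n := by
    intro n
    have hterm' : ∀ k ∈ Finset.range (n+1), (aCoef k * u^k) * (aCoef (n-k) * u^(n-k))
        = ((Nat.centralBinom k * Nat.centralBinom (n-k) : ℕ) : ℝ) * (u^n / 4^n) := by
      intro k hk
      have hkn : k ≤ n := Nat.lt_succ_iff.mp (Finset.mem_range.mp hk)
      have h4 : (4:ℝ)^k * 4^(n-k) = 4^n := by rw [← pow_add, Nat.add_sub_cancel' hkn]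
      have hu : u^k * u^(n-k) = u^n := by rw [← pow_add, Nat.add_sub_cancel' hkn]
      have hr : (Nat.centralBinom k : ℝ)/4^k * u^k * ((Nat.centralBinom (n-k):ℝ)/4^(n-k) * u^(n-k))
          = ((Nat.centralBinom k : ℝ) * (Nat.centralBinom (n-k))) * ((u^k * u^(n-k)) / (4^k*4^(n-k))) := by
        ring
      rw [aCoef, aCoef, hr, hu, h4]
      push_cast
      ring
    rw [Finset.sum_congr rfl hterm', ← Finset.sum_mul]
    have hcast : ∑ k ∈ Finset.range (n+1),
        ((Nat.centralBinom k * Nat.centralBinom (n-k) : ℕ) : ℝ) = 4^n := by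
      rw [← Nat.cast_sum, cb_conv]
      push_cast
      ring
    rw [hcast]
    field_simp
  have hsq : (∑' k, aCoef k * u ^ k) * (∑' k, aCoef k * u ^ k) = (1 - u)⁻¹ := by
    rw [hprod, tsum_congr hinner, tsum_geometric_of_lt_one h0 h1]
  have hnn : 0 ≤ ∑' k, aCoef k * u ^ k := tsum_nonneg hterm
  have hval : ∑' k, aCoef k * u ^ k = (Real.sqrt (1-u))⁻¹ := by
    rw [← Real.sqrt_inv, ← hsq, Real.sqrt_mul_self hnn]
  exact hval ▸ hsumm.hasSum

lemma summable_asin {s : ℝ} (h0 : 0 ≤ s) (h1 : s < 1) :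
    Summable (fun k => aCoef k / (2*k+1) * s ^ (2*k+1)) := by
  have hsq : s^2 < 1 := by nlinarith
  refine Summable.of_nonneg_of_le
    (fun k => mul_nonneg (div_nonneg (aCoef_pos k).le (by positivity)) (pow_nonneg h0 _))
    (fun k => ?_)
    (((summable_geometric_of_lt_one (by positivity) hsq)).mul_right s)
  have h2 : s ^ (2*k+1) = (s^2)^k * s := by rw [pow_succ, pow_mul]
  rw [h2]
  apply mul_le_of_le_one_left (by positivity)
  have hd : aCoef k / (2*(k:ℝ)+1) ≤ aCoef k / 1 := by
    apply div_le_div_of_nonneg_left (aCoef_pos k).le one_pos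
    push_cast; linarith
  simpa using hd.trans (by simpa using aCoef_le_one k)

lemma hasSum_arcsin_of_nonneg {s : ℝ} (h0 : 0 ≤ s) (h1 : s < 1) :
    HasSum (fun k => aCoef k / (2*k+1) * s ^ (2*k+1)) (Real.arcsin s) := by
  have hderiv : ∀ x ∈ Set.uIcc (0:ℝ) s, HasDerivAt Real.arcsin ((Real.sqrt (1 - x^2))⁻¹) x := by
    intro x hx
    rw [Set.uIcc_of_le h0] at hx
    have hx1 : x < 1 := lt_of_le_of_lt hx.2 h1
    have hne : x ≠ -1 := by intro hc; rw [hc] at hx; linarith [hx.1]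
    simpa [one_div] using Real.hasDerivAt_arcsin hne (ne_of_lt hx1)
  have hcont : ContinuousOn (fun x : ℝ => (Real.sqrt (1 - x^2))⁻¹) (Set.uIcc (0:ℝ) s) := by
    apply ContinuousOn.inv₀
    · exact (Real.continuous_sqrt.comp (by continuity)).continuousOn
    · intro x hx
      rw [Set.uIcc_of_le h0] at hx
      have hx1 : x < 1 := lt_of_le_of_lt hx.2 h1
      have hpos : 0 < 1 - x^2 := by nlinarith [hx.1]
      exact ne_of_gt (Real.sqrt_pos.mpr hpos)
  have hFTC := intervalIntegral.integral_eq_sub_of_hasDerivAt hderiv hcont.intervalIntegrable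
  rw [Real.arcsin_zero, sub_zero] at hFTC
  have hio : ∫ x in (0:ℝ)..s, (Real.sqrt (1 - x^2))⁻¹
      = ∫ x in Set.Ioc (0:ℝ) s, (Real.sqrt (1 - x^2))⁻¹ := intervalIntegral.integral_of_le h0
  -- termwise integrals
  have hval : ∀ k : ℕ, ∫ x in Set.Ioc (0:ℝ) s, aCoef k * x^(2*k)
      = aCoef k / (2*k+1) * s^(2*k+1) := by
    intro k
    rw [← intervalIntegral.integral_of_le h0, intervalIntegral.integral_const_mul, integral_pow]
    rw [zero_pow (by omega)]
    push_cast
    ring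
  have hFint : ∀ k : ℕ, Integrable (fun x : ℝ => aCoef k * x^(2*k))
      (volume.restrict (Set.Ioc (0:ℝ) s)) := by
    intro k
    exact (continuous_const.mul (continuous_pow _)).integrableOn_Ioc
  have hnormval : ∀ k : ℕ, ∫ x in Set.Ioc (0:ℝ) s, ‖aCoef k * x^(2*k)‖
      = aCoef k / (2*k+1) * s^(2*k+1) := by
    intro k
    rw [← hval k]
    apply setIntegral_congr_fun measurableSet_Ioc
    intro x hx
    have : 0 ≤ aCoef k * x^(2*k) := mul_nonneg (aCoef_pos k).le (pow_nonneg hx.1.le _)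
    exact Real.norm_of_nonneg this
  have hFsum : Summable (fun k : ℕ => ∫ x in Set.Ioc (0:ℝ) s, ‖aCoef k * x^(2*k)‖) := by
    rw [funext hnormval]
    exact summable_asin h0 h1
  have hswap := MeasureTheory.integral_tsum_of_summable_integral_norm hFint hFsum
  have heq : ∫ x in Set.Ioc (0:ℝ) s, (Real.sqrt (1 - x^2))⁻¹
      = ∫ x in Set.Ioc (0:ℝ) s, (∑' k : ℕ, aCoef k * x^(2*k)) := by
    apply setIntegral_congr_fun measurableSet_Ioc
    intro x hx
    have hx1 : x < 1 := lt_of_le_of_lt hx.2 h1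
    have hu0 : (0:ℝ) ≤ x^2 := sq_nonneg x
    have hu1 : x^2 < 1 := by nlinarith [hx.1]
    have := (hasSum_invSqrt hu0 hu1).tsum_eq
    dsimp only
    rw [← this]
    exact (tsum_congr (fun k => by rw [← pow_mul])).symm
  have htsum : Real.arcsin s = ∑' k : ℕ, aCoef k / (2*k+1) * s^(2*k+1) := by
    rw [← hFTC, hio, heq, ← hswap, tsum_congr hval]
  exact ((summable_asin h0 h1).hasSum_iff).mpr htsum.symm

lemma hasSum_arcsin {s : ℝ} (h : |s| < 1) :
    HasSum (fun k => aCoef k / (2*k+1) * s ^ (2*k+1)) (Real.arcsin s) := by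
  rcases le_or_gt 0 s with hs | hs
  · exact hasSum_arcsin_of_nonneg hs (lt_of_abs_lt h)
  · have h' : 0 ≤ -s := by linarith
    have h1 : -s < 1 := by rw [abs_of_neg hs] at h; exact h
    have := (hasSum_arcsin_of_nonneg h' h1).neg
    rw [← Real.arcsin_neg, neg_neg] at this
    have hfun : (fun k => -(aCoef k / (2*(k:ℝ)+1) * (-s) ^ (2*k+1)))
        = (fun k => aCoef k / (2*(k:ℝ)+1) * s ^ (2*k+1)) := by
      funext k
      rw [Odd.neg_pow ⟨k, by ring⟩]
      ring
    rw [hfun] at this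
    exact this

-- Q nonneg
lemma sum_inner_pow_nonneg {n d' : ℕ} (x : Fin n → EuclideanSpace ℝ (Fin d')) (m : ℕ) :
    0 ≤ ∑ i, ∑ j, (⟪x i, x j⟫ : ℝ) ^ m := by
  have hin : ∀ i j, (⟪x i, x j⟫ : ℝ) = ∑ c, x i c * x j c := by
    intro i j
    simp [PiLp.inner_apply, RCLike.inner_apply, mul_comm]
  have hexp : ∀ i j, (⟪x i, x j⟫ : ℝ) ^ m
      = ∑ p : Fin m → Fin d', (∏ l, x i (p l)) * (∏ l, x j (p l)) := by
    intro i j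
    rw [hin, Fintype.sum_pow]
    exact Finset.sum_congr rfl fun p _ => by rw [← Finset.prod_mul_distrib]
  calc (0:ℝ) ≤ ∑ p : Fin m → Fin d', (∑ i, ∏ l, x i (p l)) ^ 2 := by positivity
    _ = ∑ p : Fin m → Fin d', ∑ i, ∑ j, (∏ l, x i (p l)) * (∏ l, x j (p l)) := by
        refine Finset.sum_congr rfl fun p _ => ?_
        rw [sq, Finset.sum_mul_sum]
    _ = ∑ i, ∑ j, (⟪x i, x j⟫ : ℝ) ^ m := by
        rw [Finset.sum_comm]
        refine Finset.sum_congr rfl fun i _ => ?_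
        rw [Finset.sum_comm]
        exact Finset.sum_congr rfl fun j _ => (hexp i j).symm

-- permutation from fiber cardinalities
lemma perm_of_fiber_card_eq {n : ℕ} {α : Type*} [DecidableEq α] (f g : Fin n → α)
    (h : ∀ a : α, (Finset.univ.filter fun i => f i = a).card
      = (Finset.univ.filter fun i => g i = a).card) :
    ∃ p : Equiv.Perm (Fin n), ∀ i, f (p i) = g i := by
  have e : ∀ a : α, {i // g i = a} ≃ {i // f i = a} := by
    intro a
    apply Fintype.equivOfCardEq
    rw [Fintype.card_subtype, Fintype.card_subtype]
    exact (h a).symm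
  refine ⟨((Equiv.sigmaFiberEquiv g).symm.trans
    (Equiv.sigmaCongrRight e)).trans (Equiv.sigmaFiberEquiv f), fun i => ?_⟩
  exact (e (g i) ⟨i, rfl⟩).2

-- multiplicity symmetry
lemma mult_symm {ι α : Type*} [Fintype ι] [DecidableEq α] [InvolutiveNeg α] (f : ι → α)
    (h : ∑ i, ∑ j, (if f i = f j then (1:ℝ) else 0)
       = ∑ i, ∑ j, (if f i = -(f j) then (1:ℝ) else 0)) :
    ∀ a : α, (Finset.univ.filter fun i => f i = a).card
      = (Finset.univ.filter fun i => f i = -a).card := by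
  classical
  set m : α → ℕ := fun a => (Finset.univ.filter fun i => f i = a).card with hm
  -- convert hypothesis to ℕ counts
  have hA : ∑ i, ∑ j, (if f i = f j then (1:ℝ) else 0) = ∑ i : ι, (m (f i) : ℝ) := by
    refine Finset.sum_congr rfl fun i _ => ?_
    rw [hm]
    push_cast [Finset.card_filter]
    exact Finset.sum_congr rfl fun j _ => by simp [eq_comm]
  have hB : ∑ i, ∑ j, (if f i = -(f j) then (1:ℝ) else 0) = ∑ i : ι, (m (-(f i)) : ℝ) := by
    refine Finset.sum_congr rfl fun i _ => ?_
    rw [hm]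
    push_cast [Finset.card_filter]
    refine Finset.sum_congr rfl fun j _ => ?_
    congr 1
    · simp only [eq_iff_iff]
      constructor
      · intro hfi; rw [hfi, neg_neg]
      · intro hfj; rw [hfj, neg_neg]
  have hAB : ∑ i : ι, m (f i) = ∑ i : ι, m (-(f i)) := by
    have := h
    rw [hA, hB] at this
    exact_mod_cast this
  -- group by fibers over J
  set J : Finset α := Finset.univ.image f ∪ (Finset.univ.image f).image Neg.neg with hJ
  have hmem : ∀ i : ι, f i ∈ J := fun i =>
    Finset.mem_union_left _ (Finset.mem_image_of_mem f (Finset.mem_univ i))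
  have hclosed : ∀ a ∈ J, -a ∈ J := by
    intro a ha
    rcases Finset.mem_union.mp ha with ha | ha
    · exact Finset.mem_union_right _ (Finset.mem_image_of_mem _ ha)
    · rcases Finset.mem_image.mp ha with ⟨b, hb, rfl⟩
      rw [neg_neg]
      exact Finset.mem_union_left _ hb
  have hgroup : ∀ F : α → ℕ, ∑ i : ι, F (f i) = ∑ v ∈ J, m v * F v := by
    intro F
    rw [← Finset.sum_fiberwise_of_maps_to' (fun i _ => hmem i) F]
    refine Finset.sum_congr rfl fun v _ => ?_
    rw [Finset.sum_const, hm]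
    simp [mul_comm]
  have hgA : ∑ i : ι, m (f i) = ∑ v ∈ J, m v * m v := hgroup m
  have hgB : ∑ i : ι, m (-(f i)) = ∑ v ∈ J, m v * m (-v) := hgroup (fun v => m (-v))
  have hgC : ∑ v ∈ J, m (-v) * m (-v) = ∑ v ∈ J, m v * m v := by
    apply Finset.sum_nbij' (fun v => -v) (fun v => -v)
    · exact fun a ha => hclosed a ha
    · exact fun a ha => hclosed a ha
    · intro a _; exact neg_neg a
    · intro a _; exact neg_neg a
    · intro a _; rfl
  have hz : ∑ v ∈ J, ((m v : ℤ) - m (-v))^2 = 0 := by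
    have hexp : ∀ v ∈ J, ((m v : ℤ) - m (-v))^2
        = (m v * m v : ℕ) - 2 * (m v * m (-v) : ℕ) + (m (-v) * m (-v) : ℕ) := by
      intro v _; push_cast; ring
    rw [Finset.sum_congr rfl hexp]
    rw [Finset.sum_add_distrib, Finset.sum_sub_distrib]
    have e1 : ∑ v ∈ J, ((m v * m v : ℕ) : ℤ) = ((∑ i : ι, m (f i) : ℕ) : ℤ) := by
      rw [hgA]; push_cast; ring
    have e2 : ∑ v ∈ J, ((2:ℤ) * (m v * m (-v) : ℕ)) = 2 * ((∑ i : ι, m (-(f i)) : ℕ) : ℤ) := by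
      rw [hgB]; push_cast [Finset.mul_sum]; ring
    have e3 : ∑ v ∈ J, ((m (-v) * m (-v) : ℕ) : ℤ) = ((∑ i : ι, m (f i) : ℕ) : ℤ) := by
      rw [hgA, ← hgC]; push_cast; ring
    rw [e1, e2, e3, hAB]
    push_cast
    ring
  have hv : ∀ v ∈ J, m v = m (-v) := by
    intro v hv'
    have := (Finset.sum_eq_zero_iff_of_nonneg (fun v _ => sq_nonneg _)).mp hz v hv'
    have h2 : ((m v : ℤ) - m (-v)) = 0 := by
      exact pow_eq_zero_iff (n := 2) (by norm_num) |>.mp this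
    omega
  intro a
  by_cases ha : a ∈ J
  · exact hv a ha
  · have h1 : (Finset.univ.filter fun i => f i = a).card = 0 := by
      rw [Finset.card_eq_zero, Finset.filter_eq_empty_iff]
      intro i _ hfa
      exact ha (hfa ▸ hmem i)
    have h2 : (Finset.univ.filter fun i => f i = -a).card = 0 := by
      rw [Finset.card_eq_zero, Finset.filter_eq_empty_iff]
      intro i _ hfa
      apply ha
      have : -a ∈ J := hfa ▸ hmem i
      have := hclosed _ this
      rwa [neg_neg] at this
    rw [h1, h2]

end AuxiliaryLemmas

set_option maxHeartbeats 1000000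

/-- For even `N`, the average pairwise geodesic distance of an `N`-point configuration is at most
`1/2`, with equality if and only if the configuration is centrally symmetric (some permutation
sends each point to its antipode). -/
theorem geodesic_sum_max_even (d N : ℕ) (hd : 1 ≤ d) (hN : 1 ≤ N) (hNe : Even N)
    (z : Fin N → Sphere d) :
    (1 / (N : ℝ) ^ 2) * ∑ i, ∑ j, geo (z i) (z j) ≤ 1 / 2
    ∧ ((1 / (N : ℝ) ^ 2) * ∑ i, ∑ j, geo (z i) (z j) = 1 / 2
        ↔ ∃ π : Equiv.Perm (Fin N), ∀ i, z (π i) = -(z i)) := by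
  classical
  have hpi : (0:ℝ) < Real.pi := Real.pi_pos
  have hNpos : (0:ℝ) < (N:ℝ) := by exact_mod_cast hN
  set x : Fin N → EuclideanSpace ℝ (Fin (d+1)) := fun i => (z i : EuclideanSpace ℝ (Fin (d+1)))
    with hx
  have hnorm : ∀ i, ‖x i‖ = 1 := by
    intro i
    have h2 := (z i).2
    rwa [mem_sphere_zero_iff_norm] at h2
  set t : Fin N → Fin N → ℝ := fun i j => ip (z i) (z j) with ht
  have ht_inner : ∀ i j, t i j = (⟪x i, x j⟫ : ℝ) := fun i j => rfl
  have habs : ∀ i j, |t i j| ≤ 1 := by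
    intro i j
    rw [ht_inner]
    have h2 := abs_real_inner_le_norm (x i) (x j)
    rwa [hnorm, hnorm, mul_one] at h2
  set E : ℝ := ∑ i, ∑ j, Real.arcsin (t i j) with hE
  -- geo in terms of arcsin
  have hgeo : ∀ i j, geo (z i) (z j) = 1/2 - Real.arcsin (t i j) / Real.pi := by
    intro i j
    show Real.arccos (t i j) / Real.pi = _
    rw [Real.arccos_eq_pi_div_two_sub_arcsin]
    field_simp
  have hsum : ∑ i, ∑ j, geo (z i) (z j) = (N:ℝ)^2 / 2 - E / Real.pi := by
    calc ∑ i, ∑ j, geo (z i) (z j)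
        = ∑ i : Fin N, ∑ j : Fin N, (1/2 - Real.arcsin (t i j) / Real.pi) :=
          Finset.sum_congr rfl fun i _ => Finset.sum_congr rfl fun j _ => hgeo i j
      _ = (N:ℝ)^2 / 2 - E / Real.pi := by
          rw [hE]
          simp only [Finset.sum_sub_distrib, Finset.sum_const, Finset.card_univ,
            Fintype.card_fin, nsmul_eq_mul, ← Finset.sum_div]
          ring
  have hP : (1 / (N : ℝ) ^ 2) * ∑ i, ∑ j, geo (z i) (z j)
      = 1/2 - E / (Real.pi * (N:ℝ)^2) := by
    rw [hsum]
    field_simp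
  -- Q nonneg
  have hQ : ∀ m : ℕ, 0 ≤ ∑ i, ∑ j, (t i j)^m := by
    intro m
    have := sum_inner_pow_nonneg x m
    simpa only [← ht_inner] using this
  set c : ℕ → ℝ := fun k => aCoef k / (2*k+1) with hc
  have hcpos : ∀ k, 0 < c k := fun k => div_pos (aCoef_pos k) (by positivity)
  -- HasSum for scaled configuration
  have hG : ∀ r : ℝ, 0 ≤ r → r < 1 →
      HasSum (fun k => c k * r^(2*k+1) * ∑ i, ∑ j, (t i j)^(2*k+1))
        (∑ i, ∑ j, Real.arcsin (r * t i j)) := by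
    intro r h0 h1
    have hij : ∀ i j : Fin N,
        HasSum (fun k => c k * (r * t i j)^(2*k+1)) (Real.arcsin (r * t i j)) := by
      intro i j
      apply hasSum_arcsin
      rw [abs_mul, abs_of_nonneg h0]
      calc r * |t i j| ≤ r * 1 := mul_le_mul_of_nonneg_left (habs i j) h0
        _ < 1 := by rwa [mul_one]
    have hrow : ∀ i : Fin N, HasSum (fun k => ∑ j, c k * (r * t i j)^(2*k+1))
        (∑ j, Real.arcsin (r * t i j)) := fun i => hasSum_sum (fun j _ => hij i j)
    have htot : HasSum (fun k => ∑ i, ∑ j, c k * (r * t i j)^(2*k+1))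
        (∑ i, ∑ j, Real.arcsin (r * t i j)) := hasSum_sum (fun i _ => hrow i)
    have hfun : (fun k => ∑ i, ∑ j, c k * (r * t i j)^(2*k+1))
        = (fun k => c k * r^(2*k+1) * ∑ i, ∑ j, (t i j)^(2*k+1)) := by
      funext k
      simp only [Finset.mul_sum, mul_pow]
      exact Finset.sum_congr rfl fun i _ => Finset.sum_congr rfl fun j _ => by ring
    rwa [hfun] at htot
  have hGnonneg : ∀ r : ℝ, 0 ≤ r → r < 1 →
      0 ≤ ∑ i, ∑ j, Real.arcsin (r * t i j) := by
    intro r h0 h1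
    refine hasSum_le (fun k => ?_) hasSum_zero (hG r h0 h1)
    exact mul_nonneg (mul_nonneg (hcpos k).le (pow_nonneg h0 _)) (hQ _)
  have hcontG : Continuous (fun r : ℝ => ∑ i : Fin N, ∑ j : Fin N, Real.arcsin (r * t i j)) := by
    apply continuous_finset_sum
    intro i _
    apply continuous_finset_sum
    intro j _
    exact Real.continuous_arcsin.comp (continuous_id.mul continuous_const)
  have htend : Filter.Tendsto (fun r : ℝ => ∑ i : Fin N, ∑ j : Fin N, Real.arcsin (r * t i j))
      (nhdsWithin (1:ℝ) (Set.Iio 1)) (nhds E) := by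
    have h1 : E = ∑ i : Fin N, ∑ j : Fin N, Real.arcsin ((1:ℝ) * t i j) := by
      rw [hE]
      simp only [one_mul]
    rw [h1]
    exact (hcontG.tendsto 1).mono_left nhdsWithin_le_nhds
  have hE0 : 0 ≤ E := by
    refine ge_of_tendsto htend ?_
    filter_upwards [Ioo_mem_nhdsLT_of_mem
      (show (1:ℝ) ∈ Set.Ioc (0:ℝ) 1 by constructor <;> norm_num)] with r hr
    exact hGnonneg r hr.1.le hr.2
  -- equality implies odd moments vanish
  have hQzero : E = 0 → ∀ k : ℕ, ∑ i, ∑ j, (t i j)^(2*k+1) = 0 := by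
    intro hEeq k
    have hhalf : ∑ i, ∑ j, Real.arcsin ((1/2 : ℝ) * t i j) ≤ 0 := by
      rw [← hEeq]
      refine ge_of_tendsto htend ?_
      filter_upwards [Ioo_mem_nhdsLT_of_mem
        (show (1:ℝ) ∈ Set.Ioc (1/2:ℝ) 1 by constructor <;> norm_num)] with r hr
      refine hasSum_le (fun k' => ?_) (hG (1/2) (by norm_num) (by norm_num))
        (hG r (by linarith [hr.1]) hr.2)
      have hpw := pow_le_pow_left₀ (by norm_num : (0:ℝ) ≤ 1/2) hr.1.le (2*k'+1)
      exact mul_le_mul_of_nonneg_right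
        (mul_le_mul_of_nonneg_left hpw (hcpos k').le) (hQ _)
    have hzero : ∑ i, ∑ j, Real.arcsin ((1/2:ℝ) * t i j) = 0 :=
      le_antisymm hhalf (hGnonneg (1/2) (by norm_num) (by norm_num))
    have hterm := le_hasSum (hG (1/2) (by norm_num) (by norm_num)) k
      (fun k' _ => mul_nonneg (mul_nonneg (hcpos k').le (by positivity)) (hQ _))
    rw [hzero] at hterm
    have hge : 0 ≤ c k * (1/2:ℝ)^(2*k+1) * ∑ i, ∑ j, (t i j)^(2*k+1) :=
      mul_nonneg (mul_nonneg (hcpos k).le (by positivity)) (hQ _)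
    have heq0 : c k * (1/2:ℝ)^(2*k+1) * ∑ i, ∑ j, (t i j)^(2*k+1) = 0 :=
      le_antisymm hterm hge
    have hfac : c k * (1/2:ℝ)^(2*k+1) ≠ 0 := by
      have := hcpos k
      positivity
    rcases mul_eq_zero.mp heq0 with h' | h'
    · exact absurd h' hfac
    · exact h'
  -- characterize t = ±1
  have hiff1 : ∀ i j, t i j = 1 ↔ z i = z j := by
    intro i j
    rw [ht_inner]
    constructor
    · intro h'
      exact Subtype.coe_injective ((inner_eq_one_iff_of_norm_eq_one (hnorm i) (hnorm j)).mp h')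
    · intro h'
      have hxx : x i = x j :=
        congrArg (fun w : Sphere d => (w : EuclideanSpace ℝ (Fin (d+1)))) h'
      rw [hxx, real_inner_self_eq_norm_sq, hnorm, one_pow]
  have hiff2 : ∀ i j, t i j = -1 ↔ z i = -(z j) := by
    intro i j
    rw [ht_inner]
    have hninner : (⟪x i, -(x j)⟫ : ℝ) = - ⟪x i, x j⟫ := inner_neg_right _ _
    constructor
    · intro h'
      have h1 : (⟪x i, -(x j)⟫ : ℝ) = 1 := by rw [hninner, h']; ring
      have h2 := (inner_eq_one_iff_of_norm_eq_one (hnorm i)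
        (by rw [norm_neg]; exact hnorm j)).mp h1
      apply Subtype.coe_injective
      show (z i : EuclideanSpace ℝ (Fin (d+1)))
        = ((-(z j) : Sphere d) : EuclideanSpace ℝ (Fin (d+1)))
      rw [coe_neg_sphere]
      exact h2
    · intro h'
      have hcoe : x i = -(x j) := by
        rw [hx]
        show ((z i : EuclideanSpace ℝ (Fin (d+1)))) = _
        rw [h', coe_neg_sphere]
      rw [hcoe, inner_neg_left, real_inner_self_eq_norm_sq, hnorm, one_pow]
  -- limits of power sums
  have hlim : ∀ (w : Fin N → Fin N → ℝ), (∀ i j, 0 ≤ w i j) → (∀ i j, w i j ≤ 1) →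
      Filter.Tendsto (fun M : ℕ => ∑ i, ∑ j, (w i j)^M) Filter.atTop
        (nhds (∑ i, ∑ j, (if w i j = 1 then (1:ℝ) else 0))) := by
    intro w h0 h1
    apply tendsto_finset_sum
    intro i _
    apply tendsto_finset_sum
    intro j _
    by_cases hw : w i j = 1
    · rw [if_pos hw, hw]
      exact (tendsto_const_nhds (x := (1:ℝ)) (f := Filter.atTop (α := ℕ))).congr
        (fun M => (one_pow M).symm)
    · rw [if_neg hw]
      exact tendsto_pow_atTop_nhds_zero_of_lt_one (h0 i j)
        (lt_of_le_of_ne (h1 i j) hw)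
  constructor
  · -- inequality
    rw [hP]
    have h1 : 0 ≤ E / (Real.pi * (N:ℝ)^2) := div_nonneg hE0 (by positivity)
    linarith
  constructor
  · -- equality → symmetric
    intro heq
    have hEeq : E = 0 := by
      rw [hP] at heq
      have h1 : E / (Real.pi * (N:ℝ)^2) = 0 := by linarith
      have h2 : Real.pi * (N:ℝ)^2 ≠ 0 := by positivity
      field_simp at h1
      simpa using h1
    have hQz := hQzero hEeq
    -- binomial expansion: power sums of p and q agree
    set p : Fin N → Fin N → ℝ := fun i j => (1 + t i j)/2 with hp
    set q : Fin N → Fin N → ℝ := fun i j => (1 - t i j)/2 with hq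
    have hp0 : ∀ i j, 0 ≤ p i j := by
      intro i j
      have := abs_le.mp (habs i j)
      rw [hp]
      dsimp only
      linarith [this.1]
    have hp1 : ∀ i j, p i j ≤ 1 := by
      intro i j
      have := abs_le.mp (habs i j)
      rw [hp]; dsimp only; linarith [this.2]
    have hq0 : ∀ i j, 0 ≤ q i j := by
      intro i j
      have := abs_le.mp (habs i j)
      rw [hq]; dsimp only; linarith [this.2]
    have hq1 : ∀ i j, q i j ≤ 1 := by
      intro i j
      have := abs_le.mp (habs i j)
      rw [hq]; dsimp only; linarith [this.1]
    have hPQ : ∀ M : ℕ, (∑ i, ∑ j, (p i j)^M) = ∑ i, ∑ j, (q i j)^M := by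
      intro M
      rw [← sub_eq_zero, ← Finset.sum_sub_distrib]
      simp only [← Finset.sum_sub_distrib]
      have hterm : ∀ i j, (p i j)^M - (q i j)^M
          = ∑ m ∈ Finset.range (M+1),
              ((t i j)^m - (-(t i j))^m) * (M.choose m) / 2^M := by
        intro i j
        rw [hp, hq]
        dsimp only
        rw [div_pow, div_pow, div_sub_div_same]
        rw [show (1 + t i j) = t i j + 1 by ring, add_pow]
        rw [show (1 - t i j) = -(t i j) + 1 by ring, add_pow]
        simp only [one_pow, mul_one]
        rw [← Finset.sum_sub_distrib, Finset.sum_div]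
        exact Finset.sum_congr rfl fun m _ => by ring
      calc ∑ i, ∑ j, ((p i j)^M - (q i j)^M)
          = ∑ i : Fin N, ∑ j : Fin N, ∑ m ∈ Finset.range (M+1),
              ((t i j)^m - (-(t i j))^m) * (M.choose m) / 2^M :=
            Finset.sum_congr rfl fun i _ => Finset.sum_congr rfl fun j _ => hterm i j
        _ = ∑ i : Fin N, ∑ m ∈ Finset.range (M+1), ∑ j : Fin N,
              ((t i j)^m - (-(t i j))^m) * (M.choose m) / 2^M :=
            Finset.sum_congr rfl fun i _ => Finset.sum_comm
        _ = ∑ m ∈ Finset.range (M+1), ∑ i : Fin N, ∑ j : Fin N,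
              ((t i j)^m - (-(t i j))^m) * (M.choose m) / 2^M := Finset.sum_comm
        _ = 0 := by
            apply Finset.sum_eq_zero
            intro m _
            rcases Nat.even_or_odd m with he | ho
            · apply Finset.sum_eq_zero
              intro i _
              apply Finset.sum_eq_zero
              intro j _
              rw [he.neg_pow]
              ring
            · obtain ⟨k, hk⟩ := ho
              have hstep : ∀ i j : Fin N, ((t i j)^m - (-(t i j))^m) * (M.choose m) / 2^M
                  = (t i j)^m * (2 * (M.choose m) / 2^M) := by
                intro i j
                rw [Odd.neg_pow ⟨k, hk⟩]
                ring
              calc ∑ i : Fin N, ∑ j : Fin N,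
                    ((t i j)^m - (-(t i j))^m) * (M.choose m) / 2^M
                  = ∑ i : Fin N, ∑ j : Fin N, (t i j)^m * (2 * (M.choose m) / 2^M) :=
                    Finset.sum_congr rfl fun i _ => Finset.sum_congr rfl fun j _ => hstep i j
                _ = (∑ i, ∑ j, (t i j)^m) * (2 * (M.choose m) / 2^M) := by
                    rw [Finset.sum_mul]
                    exact Finset.sum_congr rfl fun i _ => by rw [Finset.sum_mul]
                _ = 0 := by
                    rw [hk] at *
                    rw [show 2*k+1 = 2*k+1 from rfl]
                    rw [hQz k]
                    ring
    have hA := hlim p hp0 hp1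
    have hB := hlim q hq0 hq1
    rw [funext hPQ] at hA
    have hABr := tendsto_nhds_unique hA hB
    -- rewrite indicators
    have hArw : (∑ i, ∑ j, (if p i j = 1 then (1:ℝ) else 0))
        = ∑ i, ∑ j, (if z i = z j then (1:ℝ) else 0) := by
      refine Finset.sum_congr rfl fun i _ => Finset.sum_congr rfl fun j _ => ?_
      congr 1
      simp only [eq_iff_iff]
      rw [← hiff1 i j, hp]
      dsimp only
      constructor
      · intro h'; linarith
      · intro h'; rw [h']; norm_num
    have hBrw : (∑ i, ∑ j, (if q i j = 1 then (1:ℝ) else 0))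
        = ∑ i, ∑ j, (if z i = -(z j) then (1:ℝ) else 0) := by
      refine Finset.sum_congr rfl fun i _ => Finset.sum_congr rfl fun j _ => ?_
      congr 1
      simp only [eq_iff_iff]
      rw [← hiff2 i j, hq]
      dsimp only
      constructor
      · intro h'; linarith
      · intro h'; rw [h']; norm_num
    rw [hArw, hBrw] at hABr
    have hfib := mult_symm z hABr
    have hcards : ∀ a : Sphere d, (Finset.univ.filter fun i => z i = a).card
        = (Finset.univ.filter fun i => (fun i => -(z i)) i = a).card := by
      intro a
      rw [hfib a]
      congr 1
      apply Finset.filter_congr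
      intro i _
      simp only [eq_iff_iff]
      constructor
      · intro h'; rw [h', neg_neg]
      · intro h'; rw [← h', neg_neg]
    exact perm_of_fiber_card_eq z (fun i => -(z i)) hcards
  · -- symmetric → equality
    rintro ⟨pp, hpp⟩
    have hneg : ∀ i j, t i (pp j) = - t i j := by
      intro i j
      show ip (z i) (z (pp j)) = -(ip (z i) (z j))
      rw [hpp j]
      show (⟪x i, ((-(z j) : Sphere d) : EuclideanSpace ℝ (Fin (d+1)))⟫ : ℝ) = _
      rw [coe_neg_sphere]
      exact inner_neg_right _ _
    have h1 : E = -E := by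
      nth_rewrite 1 [hE]
      calc ∑ i, ∑ j, Real.arcsin (t i j)
          = ∑ i : Fin N, ∑ j : Fin N, Real.arcsin (t i (pp j)) := by
            refine Finset.sum_congr rfl fun i _ => ?_
            exact (Equiv.sum_comp pp (fun j => Real.arcsin (t i j))).symm
        _ = ∑ i : Fin N, ∑ j : Fin N, (- Real.arcsin (t i j)) := by
            refine Finset.sum_congr rfl fun i _ => Finset.sum_congr rfl fun j _ => ?_
            rw [hneg, Real.arcsin_neg]
        _ = -E := by
            rw [hE]
            simp only [Finset.sum_neg_distrib]
    have hEeq : E = 0 := by linarith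
    rw [hP, hEeq]
    simp
end
end

section
/- (Spherical Sylvester–Gallai theorem) Let d ≥ 2 and let Z be a finite set of points on S^d containing no pair of antipodal points, and suppose that for every two distinct points x, y ∈ Z the great circle passing through x and y contains at least one point of Z other than x and y (i.e., there exists z ∈ Z with z ∉ {x,y} and z in the linear span of {x,y}). Then all points of Z lie on one great circle: there exists a two-dimensional linear subspace V of ℝ^{d+1} with Z ⊆ V ∩ S^d. -/
set_option maxHeartbeats 2000000

open MeasureTheory Metric Set
open scoped RealInnerProductSpace ENNReal

noncomputable section

section Aux

variable {E : Type*} [NormedAddCommGroup E] [InnerProductSpace ℝ E] [FiniteDimensional ℝ E]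

set_option linter.unusedSectionVars false

lemma SG.exists_coords (V : Submodule ℝ E) (hV : Module.finrank ℝ V = 2) :
    ∃ e₁ e₂ : E, ∀ x ∈ V, ∀ y ∈ V, ⟪x,y⟫ = ⟪x,e₁⟫*⟪y,e₁⟫ + ⟪x,e₂⟫*⟪y,e₂⟫ := by
  let b := (stdOrthonormalBasis ℝ V).reindex (finCongr hV)
  refine ⟨b 0, b 1, ?_⟩
  have he₁ : ‖(b 0 : E)‖ = 1 := by exact b.orthonormal.1 0
  have he₂ : ‖(b 1 : E)‖ = 1 := by exact b.orthonormal.1 1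
  have he12 : ⟪(b 0 : E), (b 1 : E)⟫ = 0 := by
    have := b.orthonormal.2 (i := 0) (j := 1) (by norm_num)
    exact this
  have hdec : ∀ x ∈ V, x = ⟪x, (b 0 : E)⟫ • (b 0 : E) + ⟪x, (b 1 : E)⟫ • (b 1 : E) := by
    intro x hx
    have hsum := b.sum_repr ⟨x, hx⟩
    rw [Fin.sum_univ_two] at hsum
    have h0 : b.repr ⟨x, hx⟩ 0 = ⟪(b 0 : E), x⟫ := b.repr_apply_apply ⟨x, hx⟩ 0
    have h1 : b.repr ⟨x, hx⟩ 1 = ⟪(b 1 : E), x⟫ := b.repr_apply_apply ⟨x, hx⟩ 1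
    have := congrArg (Subtype.val) hsum
    simp only [Submodule.coe_add, Submodule.coe_smul, h0, h1] at this
    simpa [real_inner_comm] using this.symm
  have hee : ⟪(b 0 : E), (b 0 : E)⟫ = 1 := by
    rw [real_inner_self_eq_norm_sq, he₁]; norm_num
  have hee' : ⟪(b 1 : E), (b 1 : E)⟫ = 1 := by
    rw [real_inner_self_eq_norm_sq, he₂]; norm_num
  have he21 : ⟪(b 1 : E), (b 0 : E)⟫ = 0 := by rw [real_inner_comm]; exact he12
  intro x hx y hy
  conv_lhs => rw [hdec x hx, hdec y hy]
  simp [inner_add_add_self, inner_add_left, inner_add_right, real_inner_smul_left,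
    real_inner_smul_right, hee, hee', he12, he21, he₁, he₂]
  ring

lemma SG.sub1 (u1 u2 v1 v2 : ℝ) (hu : u1^2+u2^2=1) (hv : v1^2+v2^2=1)
    (hu2 : 0 ≤ u2) (hv2 : 0 ≤ v2) (h : 0 ≤ v1) (h' : v1 ≤ u1) :
    v1 ≤ u1*v1+u2*v2 := by
  have h1u : u1 ≤ 1 := by nlinarith [sq_nonneg u2, sq_nonneg (u1-1)]
  have h1v : v1 ≤ 1 := by nlinarith [sq_nonneg v2, sq_nonneg (v1-1)]
  have hA : 0 ≤ u2*v2 := mul_nonneg hu2 hv2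
  have hB : 0 ≤ v1*(1-u1) := mul_nonneg h (by linarith)
  have hfac : 0 ≤ 1+u1-2*v1^2 := by nlinarith
  have hsq : (v1*(1-u1))^2 ≤ (u2*v2)^2 := by nlinarith [mul_nonneg (sub_nonneg.2 h1u) hfac]
  nlinarith [sq_nonneg (u2*v2 - v1*(1-u1)), sq_nonneg (u2*v2 + v1*(1-u1))]

lemma SG.lemA_sorted (p a1 a2 b1 b2 c1 c2 : ℝ) (hp : 0 ≤ p) (hp1 : p < 1)
    (ha : a1^2+a2^2=1) (hb : b1^2+b2^2=1) (hc : c1^2+c2^2=1)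
    (ha2 : 0 ≤ a2) (hb2 : 0 ≤ b2) (hc2 : 0 ≤ c2)
    (hab : b1 ≤ a1) (hbc : c1 ≤ b1)
    (cab : (a1*b1+a2*b2)^2 ≤ p^2*b1^2)
    (ccb : (c1*b1+c2*b2)^2 ≤ p^2*b1^2)
    (cac : (a1*c1+a2*c2)^2 ≤ p^2*a1^2) : False := by
  have hp2 : p^2 < 1 := by nlinarith
  rcases le_or_gt 0 b1 with hb1 | hb1
  · have h1 : b1 ≤ a1*b1+a2*b2 := SG.sub1 a1 a2 b1 b2 ha hb ha2 hb2 hb1 hab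
    have hs1 : b1^2 ≤ (a1*b1+a2*b2)^2 := by nlinarith [mul_self_le_mul_self hb1 h1]
    have hb1sq : b1^2 ≤ 0 := by nlinarith
    have hb10 : b1 = 0 := by
      have := sq_nonneg b1; have : b1^2 = 0 := le_antisymm hb1sq this
      exact pow_eq_zero_iff (by norm_num) |>.mp this
    have hsab : a1*b1+a2*b2 = 0 := by
      have h0 : (a1*b1+a2*b2)^2 ≤ 0 := by nlinarith
      have := sq_nonneg (a1*b1+a2*b2)
      exact pow_eq_zero_iff (two_ne_zero) |>.mp (le_antisymm h0 this)
    have hscb : c1*b1+c2*b2 = 0 := by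
      have h0 : (c1*b1+c2*b2)^2 ≤ 0 := by nlinarith
      have := sq_nonneg (c1*b1+c2*b2)
      exact pow_eq_zero_iff (two_ne_zero) |>.mp (le_antisymm h0 this)
    have hb2' : b2 = 1 := by
      have hfac : (b2-1)*(b2+1) = 0 := by linear_combination hb - (b1+0)*hb10
      rcases mul_eq_zero.mp hfac with h | h
      · linarith
      · linarith
    have ha2' : a2 = 0 := by linear_combination hsab - a1*hb10 - a2*hb2'
    have hc2' : c2 = 0 := by linear_combination hscb - c1*hb10 - c2*hb2'
    have ha1 : a1^2 = 1 := by linear_combination ha - a2*ha2'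
    have hc1 : c1^2 = 1 := by linear_combination hc - c2*hc2'
    have e : (a1*c1+a2*c2)^2 = 1 := by
      linear_combination c1^2*ha1 + hc1 + (2*a1*c1*c2+a2*c2^2)*ha2'
    have e2 : p^2*a1^2 = p^2 := by rw [ha1]; ring
    linarith [cac, e, e2, hp2]
  · have h1 : -b1 ≤ (-c1)*(-b1)+c2*b2 :=
      SG.sub1 (-c1) c2 (-b1) b2 (by linear_combination hc) (by linear_combination hb)
        hc2 hb2 (by linarith) (by linarith)
    have h2 : (-b1)*(-b1) ≤ ((-c1)*(-b1)+c2*b2)*((-c1)*(-b1)+c2*b2) :=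
      mul_self_le_mul_self (by linarith) h1
    nlinarith [h2, ccb, mul_pos (neg_pos.2 hb1) (neg_pos.2 hb1), hp2]

lemma SG.lemA_pos (p a1 a2 b1 b2 c1 c2 : ℝ) (hp : 0 ≤ p) (hp1 : p < 1)
    (ha : a1^2+a2^2=1) (hb : b1^2+b2^2=1) (hc : c1^2+c2^2=1)
    (ha2 : 0 ≤ a2) (hb2 : 0 ≤ b2) (hc2 : 0 ≤ c2)
    (cab_a : (a1*b1+a2*b2)^2 ≤ p^2*a1^2) (cab_b : (a1*b1+a2*b2)^2 ≤ p^2*b1^2)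
    (cac_a : (a1*c1+a2*c2)^2 ≤ p^2*a1^2) (cac_c : (a1*c1+a2*c2)^2 ≤ p^2*c1^2)
    (cbc_b : (b1*c1+b2*c2)^2 ≤ p^2*b1^2) (cbc_c : (b1*c1+b2*c2)^2 ≤ p^2*c1^2) :
    False := by
  rcases le_total b1 a1 with h1 | h1
  · rcases le_total c1 b1 with h2 | h2
    · exact SG.lemA_sorted p a1 a2 b1 b2 c1 c2 hp hp1 ha hb hc ha2 hb2 hc2 h1 h2
        (by linarith) (by linarith) (by linarith)
    · rcases le_total c1 a1 with h3 | h3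
      · exact SG.lemA_sorted p a1 a2 c1 c2 b1 b2 hp hp1 ha hc hb ha2 hc2 hb2 h3 h2
          (by linarith) (by linarith) (by linarith)
      · exact SG.lemA_sorted p c1 c2 a1 a2 b1 b2 hp hp1 hc ha hb hc2 ha2 hb2 h3 h1
          (by linarith) (by linarith) (by linarith)
  · rcases le_total c1 a1 with h2 | h2
    · exact SG.lemA_sorted p b1 b2 a1 a2 c1 c2 hp hp1 hb ha hc hb2 ha2 hc2 h1 h2
        (by linarith) (by linarith) (by linarith)
    · rcases le_total c1 b1 with h3 | h3
      · exact SG.lemA_sorted p b1 b2 c1 c2 a1 a2 hp hp1 hb hc ha hb2 hc2 ha2 h3 h2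
          (by linarith) (by linarith) (by linarith)
      · exact SG.lemA_sorted p c1 c2 b1 b2 a1 a2 hp hp1 hc hb ha hc2 hb2 ha2 h3 h1
          (by linarith) (by linarith) (by linarith)

lemma SG.lemA_flip (p a1 a2 b1 b2 c1 c2 : ℝ) (hp : 0 ≤ p) (hp1 : p < 1)
    (ha : a1^2+a2^2=1) (hb : b1^2+b2^2=1) (hc : c1^2+c2^2=1)
    (cab_a : (a1*b1+a2*b2)^2 ≤ p^2*a1^2) (cab_b : (a1*b1+a2*b2)^2 ≤ p^2*b1^2)
    (cac_a : (a1*c1+a2*c2)^2 ≤ p^2*a1^2) (cac_c : (a1*c1+a2*c2)^2 ≤ p^2*c1^2)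
    (cbc_b : (b1*c1+b2*c2)^2 ≤ p^2*b1^2) (cbc_c : (b1*c1+b2*c2)^2 ≤ p^2*c1^2) :
    False := by
  obtain ⟨ea, hea, hea2⟩ : ∃ e : ℝ, e^2 = 1 ∧ 0 ≤ e*a2 := by
    rcases le_total 0 a2 with h|h
    exacts [⟨1, by norm_num, by simpa⟩, ⟨-1, by norm_num, by nlinarith⟩]
  obtain ⟨eb, heb, heb2⟩ : ∃ e : ℝ, e^2 = 1 ∧ 0 ≤ e*b2 := by
    rcases le_total 0 b2 with h|h
    exacts [⟨1, by norm_num, by simpa⟩, ⟨-1, by norm_num, by nlinarith⟩]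
  obtain ⟨ec, hec, hec2⟩ : ∃ e : ℝ, e^2 = 1 ∧ 0 ≤ e*c2 := by
    rcases le_total 0 c2 with h|h
    exacts [⟨1, by norm_num, by simpa⟩, ⟨-1, by norm_num, by nlinarith⟩]
  refine SG.lemA_pos p (ea*a1) (ea*a2) (eb*b1) (eb*b2) (ec*c1) (ec*c2) hp hp1
    (by linear_combination (a1^2+a2^2)*hea + ha) (by linear_combination (b1^2+b2^2)*heb + hb)
    (by linear_combination (c1^2+c2^2)*hec + hc) hea2 heb2 hec2 ?_ ?_ ?_ ?_ ?_ ?_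
  · rw [show ((ea*a1)*(eb*b1)+(ea*a2)*(eb*b2))^2 = (a1*b1+a2*b2)^2 by
      linear_combination (eb^2*(a1*b1+a2*b2)^2)*hea + ((a1*b1+a2*b2)^2)*heb,
      show p^2*(ea*a1)^2 = p^2*a1^2 by linear_combination (p^2*a1^2)*hea]
    exact cab_a
  · rw [show ((ea*a1)*(eb*b1)+(ea*a2)*(eb*b2))^2 = (a1*b1+a2*b2)^2 by
      linear_combination (eb^2*(a1*b1+a2*b2)^2)*hea + ((a1*b1+a2*b2)^2)*heb,
      show p^2*(eb*b1)^2 = p^2*b1^2 by linear_combination (p^2*b1^2)*heb]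
    exact cab_b
  · rw [show ((ea*a1)*(ec*c1)+(ea*a2)*(ec*c2))^2 = (a1*c1+a2*c2)^2 by
      linear_combination (ec^2*(a1*c1+a2*c2)^2)*hea + ((a1*c1+a2*c2)^2)*hec,
      show p^2*(ea*a1)^2 = p^2*a1^2 by linear_combination (p^2*a1^2)*hea]
    exact cac_a
  · rw [show ((ea*a1)*(ec*c1)+(ea*a2)*(ec*c2))^2 = (a1*c1+a2*c2)^2 by
      linear_combination (ec^2*(a1*c1+a2*c2)^2)*hea + ((a1*c1+a2*c2)^2)*hec,
      show p^2*(ec*c1)^2 = p^2*c1^2 by linear_combination (p^2*c1^2)*hec]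
    exact cac_c
  · rw [show ((eb*b1)*(ec*c1)+(eb*b2)*(ec*c2))^2 = (b1*c1+b2*c2)^2 by
      linear_combination (ec^2*(b1*c1+b2*c2)^2)*heb + ((b1*c1+b2*c2)^2)*hec,
      show p^2*(eb*b1)^2 = p^2*b1^2 by linear_combination (p^2*b1^2)*heb]
    exact cbc_b
  · rw [show ((eb*b1)*(ec*c1)+(eb*b2)*(ec*c2))^2 = (b1*c1+b2*c2)^2 by
      linear_combination (ec^2*(b1*c1+b2*c2)^2)*heb + ((b1*c1+b2*c2)^2)*hec,
      show p^2*(ec*c1)^2 = p^2*c1^2 by linear_combination (p^2*c1^2)*hec]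
    exact cbc_c

lemma SG.lemA_num (P1 P2 a1 a2 b1 b2 c1 c2 : ℝ) (hP : P1^2+P2^2 < 1)
    (ha : a1^2+a2^2=1) (hb : b1^2+b2^2=1) (hc : c1^2+c2^2=1)
    (cab_a : (a1*b1+a2*b2)^2 ≤ (P1*a1+P2*a2)^2) (cab_b : (a1*b1+a2*b2)^2 ≤ (P1*b1+P2*b2)^2)
    (cac_a : (a1*c1+a2*c2)^2 ≤ (P1*a1+P2*a2)^2) (cac_c : (a1*c1+a2*c2)^2 ≤ (P1*c1+P2*c2)^2)
    (cbc_b : (b1*c1+b2*c2)^2 ≤ (P1*b1+P2*b2)^2) (cbc_c : (b1*c1+b2*c2)^2 ≤ (P1*c1+P2*c2)^2) :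
    False := by
  set p : ℝ := Real.sqrt (P1^2+P2^2) with hpdef
  have hPP : 0 ≤ P1^2+P2^2 := by positivity
  have hp2 : p^2 = P1^2+P2^2 := Real.sq_sqrt hPP
  have hp : 0 ≤ p := Real.sqrt_nonneg _
  have hp1 : p < 1 := by
    rw [hpdef, Real.sqrt_lt' one_pos]; simpa using hP
  by_cases hp0 : p = 0
  · have h0 : P1^2+P2^2 = 0 := by rw [← hp2, hp0]; ring
    have hP1 : P1 = 0 := by
      have h1 : P1^2 = 0 := le_antisymm (by linarith [sq_nonneg P2]) (sq_nonneg P1)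
      exact pow_eq_zero_iff two_ne_zero |>.mp h1
    have hP2 : P2 = 0 := by
      have h1 : P2^2 = 0 := le_antisymm (by linarith [sq_nonneg P1]) (sq_nonneg P2)
      exact pow_eq_zero_iff two_ne_zero |>.mp h1
    have hz : ∀ s t u : ℝ, s^2 ≤ (P1*t+P2*u)^2 → s = 0 := by
      intro s t u hs
      rw [hP1, hP2] at hs
      have h1 : s^2 ≤ 0 := by nlinarith [hs]
      have := sq_nonneg s
      exact pow_eq_zero_iff two_ne_zero |>.mp (le_antisymm h1 this)
    have hab : a1*b1+a2*b2 = 0 := hz _ _ _ cab_a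
    have hac : a1*c1+a2*c2 = 0 := hz _ _ _ cac_a
    have hbc : b1*c1+b2*c2 = 0 := hz _ _ _ cbc_b
    have e1 : (a1*b2-a2*b1)*(a1*c2-a2*c1) = 0 := by
      linear_combination (b1*c1+b2*c2)*ha + hbc - (a1*c1+a2*c2)*hab
    have e2 : (a1*b2-a2*b1)^2 = 1 := by
      linear_combination (b1^2+b2^2)*ha + hb - (a1*b1+a2*b2)*hab
    have e3 : (a1*c2-a2*c1)^2 = 1 := by
      linear_combination (c1^2+c2^2)*ha + hc - (a1*c1+a2*c2)*hac
    have e4 : (0:ℝ) = 1 := by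
      linear_combination ((a1*c2-a2*c1)^2)*e2 + e3 - ((a1*b2-a2*b1)*(a1*c2-a2*c1))*e1
    norm_num at e4
  · have hpne : p ≠ 0 := hp0
    have hSab : ((P1*a1+P2*a2)/p)*((P1*b1+P2*b2)/p) + ((P1*a2-P2*a1)/p)*((P1*b2-P2*b1)/p)
        = a1*b1+a2*b2 := by
      field_simp
      linear_combination -(a1*b1+a2*b2)*hp2
    have hSac : ((P1*a1+P2*a2)/p)*((P1*c1+P2*c2)/p) + ((P1*a2-P2*a1)/p)*((P1*c2-P2*c1)/p)
        = a1*c1+a2*c2 := by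
      field_simp
      linear_combination -(a1*c1+a2*c2)*hp2
    have hSbc : ((P1*b1+P2*b2)/p)*((P1*c1+P2*c2)/p) + ((P1*b2-P2*b1)/p)*((P1*c2-P2*c1)/p)
        = b1*c1+b2*c2 := by
      field_simp
      linear_combination -(b1*c1+b2*c2)*hp2
    have hRa : p^2*((P1*a1+P2*a2)/p)^2 = (P1*a1+P2*a2)^2 := by field_simp
    have hRb : p^2*((P1*b1+P2*b2)/p)^2 = (P1*b1+P2*b2)^2 := by field_simp
    have hRc : p^2*((P1*c1+P2*c2)/p)^2 = (P1*c1+P2*c2)^2 := by field_simp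
    refine SG.lemA_flip p ((P1*a1+P2*a2)/p) ((P1*a2-P2*a1)/p) ((P1*b1+P2*b2)/p) ((P1*b2-P2*b1)/p)
      ((P1*c1+P2*c2)/p) ((P1*c2-P2*c1)/p) hp hp1 ?_ ?_ ?_ ?_ ?_ ?_ ?_ ?_ ?_
    · field_simp
      linear_combination (P1^2+P2^2)*ha - hp2
    · field_simp
      linear_combination (P1^2+P2^2)*hb - hp2
    · field_simp
      linear_combination (P1^2+P2^2)*hc - hp2
    · rw [hSab, hRa]; exact cab_a
    · rw [hSab, hRb]; exact cab_b
    · rw [hSac, hRa]; exact cac_a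
    · rw [hSac, hRc]; exact cac_c
    · rw [hSbc, hRb]; exact cbc_b
    · rw [hSbc, hRc]; exact cbc_c

lemma SG.lemA (V : Submodule ℝ E) (hV : Module.finrank ℝ V = 2) (P a b c : E)
    (hPV : P ∈ V) (haV : a ∈ V) (hbV : b ∈ V) (hcV : c ∈ V)
    (hP : ‖P‖ < 1) (ha : ‖a‖ = 1) (hb : ‖b‖ = 1) (hc : ‖c‖ = 1) :
    ⟪P,a⟫^2 < ⟪a,b⟫^2 ∨ ⟪P,b⟫^2 < ⟪a,b⟫^2 ∨ ⟪P,a⟫^2 < ⟪a,c⟫^2 ∨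
    ⟪P,c⟫^2 < ⟪a,c⟫^2 ∨ ⟪P,b⟫^2 < ⟪b,c⟫^2 ∨ ⟪P,c⟫^2 < ⟪b,c⟫^2 := by
  by_contra hcon
  push_neg at hcon
  obtain ⟨h1, h2, h3, h4, h5, h6⟩ := hcon
  obtain ⟨e₁, e₂, hinner⟩ := SG.exists_coords V hV
  have hna : ⟪a,e₁⟫^2 + ⟪a,e₂⟫^2 = 1 := by
    have := hinner a haV a haV
    rw [real_inner_self_eq_norm_sq, ha] at this
    nlinarith [this]
  have hnb : ⟪b,e₁⟫^2 + ⟪b,e₂⟫^2 = 1 := by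
    have := hinner b hbV b hbV
    rw [real_inner_self_eq_norm_sq, hb] at this
    nlinarith [this]
  have hnc : ⟪c,e₁⟫^2 + ⟪c,e₂⟫^2 = 1 := by
    have := hinner c hcV c hcV
    rw [real_inner_self_eq_norm_sq, hc] at this
    nlinarith [this]
  have hnP : ⟪P,e₁⟫^2 + ⟪P,e₂⟫^2 < 1 := by
    have h := hinner P hPV P hPV
    rw [real_inner_self_eq_norm_sq] at h
    nlinarith [h, norm_nonneg P]
  refine SG.lemA_num ⟪P,e₁⟫ ⟪P,e₂⟫ ⟪a,e₁⟫ ⟪a,e₂⟫ ⟪b,e₁⟫ ⟪b,e₂⟫ ⟪c,e₁⟫ ⟪c,e₂⟫ hnP hna hnb hnc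
    ?_ ?_ ?_ ?_ ?_ ?_
  · have := h1; rw [hinner P hPV a haV, hinner a haV b hbV] at this; linarith
  · have := h2; rw [hinner P hPV b hbV, hinner a haV b hbV] at this; linarith
  · have := h3; rw [hinner P hPV a haV, hinner a haV c hcV] at this; linarith
  · have := h4; rw [hinner P hPV c hcV, hinner a haV c hcV] at this; linarith
  · have := h5; rw [hinner P hPV b hbV, hinner b hbV c hcV] at this; linarith
  · have := h6; rw [hinner P hPV c hcV, hinner b hbV c hcV] at this; linarith

lemma SG.keyid (u1 u2 v1 v2 P1 P2 : ℝ) (hu : u1^2+u2^2 = 1) (hv : v1^2+v2^2 = 1) :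
    ((u1*P1+u2*P2) - (u1*v1+u2*v2)*(P1*v1+P2*v2))^2
      = (1 - (u1*v1+u2*v2)^2)*((P1^2+P2^2) - (P1*v1+P2*v2)^2) := by
  have g1 : (u1*P1+u2*P2) - (u1*v1+u2*v2)*(P1*v1+P2*v2) = (u1*v2-u2*v1)*(P1*v2-P2*v1) := by
    linear_combination (-(u1*P1+u2*P2))*hv
  have g2 : 1 - (u1*v1+u2*v2)^2 = (u1*v2-u2*v1)^2 := by
    linear_combination (-(v1^2+v2^2))*hu - hv
  have g3 : (P1^2+P2^2) - (P1*v1+P2*v2)^2 = (P1*v2-P2*v1)^2 := by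
    linear_combination (-(P1^2+P2^2))*hv
  rw [g1, g2, g3]; ring

lemma SG.cauchy_eq (V : Submodule ℝ E) (hV : Module.finrank ℝ V = 2) (u v P : E)
    (huV : u ∈ V) (hvV : v ∈ V) (hPV : P ∈ V) (hu1 : ‖u‖ = 1) (hv1 : ‖v‖ = 1) :
    (⟪u,P⟫ - ⟪u,v⟫*⟪P,v⟫)^2 = (1 - ⟪u,v⟫^2)*(‖P‖^2 - ⟪P,v⟫^2) := by
  obtain ⟨e₁, e₂, hinner⟩ := SG.exists_coords V hV
  have hnu : ⟪u,e₁⟫^2 + ⟪u,e₂⟫^2 = 1 := by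
    have := hinner u huV u huV
    rw [real_inner_self_eq_norm_sq, hu1] at this
    nlinarith [this]
  have hnv : ⟪v,e₁⟫^2 + ⟪v,e₂⟫^2 = 1 := by
    have := hinner v hvV v hvV
    rw [real_inner_self_eq_norm_sq, hv1] at this
    nlinarith [this]
  have hnP : ‖P‖^2 = ⟪P,e₁⟫^2 + ⟪P,e₂⟫^2 := by
    have := hinner P hPV P hPV
    rw [real_inner_self_eq_norm_sq] at this
    nlinarith [this]
  rw [hinner u huV P hPV, hinner u huV v hvV, hinner P hPV v hvV, hnP]
  exact SG.keyid _ _ _ _ _ _ hnu hnv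

lemma SG.proj_min (K : Submodule ℝ E) (x q : E) (hq : q ∈ K) :
    ‖x - (Submodule.orthogonalProjectionOnto K x : E)‖ ≤ ‖x - q‖ := by
  set P : E := (Submodule.orthogonalProjectionOnto K x : E) with hP
  have hPK : P ∈ K := SetLike.coe_mem _
  have horth : ⟪P - q, x - P⟫ = 0 :=
    (Submodule.mem_orthogonal K _).mp (Submodule.sub_starProjection_mem_orthogonal (K := K) x) _
      (Submodule.sub_mem K hPK hq)
  have hsq : ‖x - q‖^2 = ‖x - P‖^2 + ‖P - q‖^2 := by
    have hd : x - q = (x - P) + (P - q) := by abel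
    rw [hd, norm_add_sq_real, real_inner_comm, horth]
    ring
  nlinarith [norm_nonneg (x - q), norm_nonneg (x - P), sq_nonneg ‖P - q‖]

lemma SG.normP_lt_one (V : Submodule ℝ E) (z : E) (hz1 : ‖z‖ = 1) (hzV : z ∉ V) :
    ‖(Submodule.orthogonalProjectionOnto V z : E)‖ < 1 ∧
      ‖z - (Submodule.orthogonalProjectionOnto V z : E)‖^2 = 1 - ‖(Submodule.orthogonalProjectionOnto V z : E)‖^2 := by
  set P : E := (Submodule.orthogonalProjectionOnto V z : E) with hP
  have hPV : P ∈ V := SetLike.coe_mem _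
  have horth : ⟪P, z - P⟫ = 0 :=
    (Submodule.mem_orthogonal V _).mp (Submodule.sub_starProjection_mem_orthogonal (K := V) z) _ hPV
  have hpyth : 1 = ‖P‖^2 + ‖z - P‖^2 := by
    calc (1:ℝ) = ‖z‖^2 := by rw [hz1]; norm_num
      _ = ‖P + (z - P)‖^2 := by rw [show P + (z - P) = z from by abel]
      _ = ‖P‖^2 + 2*⟪P, z - P⟫ + ‖z - P‖^2 := norm_add_sq_real _ _
      _ = ‖P‖^2 + ‖z - P‖^2 := by rw [horth]; ring
  have hne : z - P ≠ 0 := by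
    intro h
    exact hzV (by rw [show z = P from by rwa [sub_eq_zero] at h]; exact hPV)
  have hpos : 0 < ‖z - P‖ := norm_pos_iff.mpr hne
  exact ⟨by nlinarith [norm_nonneg P], by linarith⟩

lemma SG.step (V : Submodule ℝ E) (hV : Module.finrank ℝ V = 2) (z u v : E)
    (hz1 : ‖z‖ = 1) (hu1 : ‖u‖ = 1) (hv1 : ‖v‖ = 1)
    (huV : u ∈ V) (hvV : v ∈ V) (hzV : z ∉ V)
    (huv : u ≠ v) (huv' : u ≠ -v)
    (hA : ⟪(Submodule.orthogonalProjectionOnto V z : E), v⟫^2 < ⟪u,v⟫^2) :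
    u ∉ Submodule.span ℝ ({z, v} : Set E) ∧
      ‖u - (Submodule.orthogonalProjectionOnto (Submodule.span ℝ ({z, v} : Set E)) u : E)‖ <
        ‖z - (Submodule.orthogonalProjectionOnto V z : E)‖ := by
  set P : E := (Submodule.orthogonalProjectionOnto V z : E) with hPdef
  have hPV : P ∈ V := SetLike.coe_mem _
  have horthall : ∀ w ∈ V, ⟪w, z - P⟫ = 0 :=
    fun w hw => (Submodule.mem_orthogonal V _).mp (Submodule.sub_starProjection_mem_orthogonal (K := V) z) _ hw
  obtain ⟨hm1, hdelta⟩ := SG.normP_lt_one V z hz1 hzV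
  rw [← hPdef] at hm1 hdelta
  set W : Submodule ℝ E := Submodule.span ℝ ({z, v} : Set E) with hWdef
  have hzW : z ∈ W := Submodule.subset_span (Set.mem_insert _ _)
  have hvW : v ∈ W := Submodule.subset_span (Set.mem_insert_of_mem _ rfl)
  have hunotW : u ∉ W := by
    intro hmem
    obtain ⟨s, t, hst⟩ := Submodule.mem_span_pair.mp hmem
    by_cases hs : s = 0
    · rw [hs, zero_smul, zero_add] at hst
      have habs : |t| = 1 := by
        have h : ‖t • v‖ = 1 := by rw [hst, hu1]
        rwa [norm_smul, hv1, mul_one, Real.norm_eq_abs] at h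
      rcases (abs_eq (by norm_num : (0:ℝ) ≤ 1)).mp habs with h | h
      · exact huv (by rw [← hst, h, one_smul])
      · exact huv' (by rw [← hst, h, neg_one_smul])
    · apply hzV
      have h1 : s • z = u - t • v := by rw [← hst]; abel
      have h2 : z = s⁻¹ • (u - t • v) := by
        rw [← h1, smul_smul, inv_mul_cancel₀ hs, one_smul]
      rw [h2]
      exact V.smul_mem _ (V.sub_mem huV (V.smul_mem _ hvV))
  have hzv_eq : ⟪z,v⟫ = ⟪P,v⟫ := by
    have h := horthall v hvV
    rw [inner_sub_right] at h
    have h' := sub_eq_zero.mp h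
    rw [real_inner_comm v z, real_inner_comm v P]
    exact h'
  have huz_eq : ⟪u,z⟫ = ⟪u,P⟫ := by
    have h := horthall u huV
    rw [inner_sub_right] at h
    exact sub_eq_zero.mp h
  set z' : E := z - ⟪z,v⟫ • v with hz'def
  have hz'W : z' ∈ W := W.sub_mem hzW (W.smul_mem _ hvW)
  have hvz' : ⟪v,z'⟫ = 0 := by
    rw [hz'def, inner_sub_right, real_inner_smul_right, real_inner_self_eq_norm_sq, hv1,
      real_inner_comm v z]
    ring
  have hn : ‖z'‖^2 = 1 - ⟪z,v⟫^2 := by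
    rw [hz'def, norm_sub_sq_real, real_inner_smul_right, norm_smul, hz1, hv1,
      Real.norm_eq_abs]
    rw [mul_one, sq_abs]
    ring
  have hz'ne : z' ≠ 0 := by
    intro h
    apply hzV
    have hzz : z = ⟪z,v⟫ • v := by rw [hz'def] at h; rwa [sub_eq_zero] at h
    rw [hzz]
    exact V.smul_mem _ hvV
  have hn0 : 0 < ‖z'‖^2 := pow_pos (norm_pos_iff.mpr hz'ne) 2
  have hiuz' : ⟪u,z'⟫ = ⟪u,P⟫ - ⟪u,v⟫*⟪P,v⟫ := by
    rw [hz'def, inner_sub_right, real_inner_smul_right, huz_eq, hzv_eq]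
    ring
  set q : E := ⟪u,v⟫ • v + (⟪u,z'⟫/‖z'‖^2) • z' with hqdef
  have hqW : q ∈ W := W.add_mem (W.smul_mem _ hvW) (W.smul_mem _ hz'W)
  have huq : ‖u - q‖^2 = 1 - ⟪u,v⟫^2 - ⟪u,z'⟫^2/‖z'‖^2 := by
    have hA1 : ‖u - ⟪u,v⟫•v‖^2 = 1 - ⟪u,v⟫^2 := by
      rw [norm_sub_sq_real, real_inner_smul_right, norm_smul, hu1, hv1, Real.norm_eq_abs]
      rw [mul_one, sq_abs]
      ring
    have hsplit : u - q = (u - ⟪u,v⟫•v) - (⟪u,z'⟫/‖z'‖^2) • z' := by rw [hqdef]; abel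
    have hinn : ⟪u - ⟪u,v⟫•v, (⟪u,z'⟫/‖z'‖^2) • z'⟫ = (⟪u,z'⟫/‖z'‖^2) * ⟪u,z'⟫ := by
      rw [real_inner_smul_right, inner_sub_left, real_inner_smul_left, hvz']
      ring
    have hns : ‖(⟪u,z'⟫/‖z'‖^2) • z'‖^2 = (⟪u,z'⟫/‖z'‖^2)^2 * ‖z'‖^2 := by
      rw [norm_smul, Real.norm_eq_abs, mul_pow, sq_abs]
    rw [hsplit, norm_sub_sq_real, hA1, hinn, hns]
    field_simp
    ring
  have hfin : ‖u - q‖^2 < ‖z - P‖^2 := by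
    rw [huq, hdelta, hiuz', SG.cauchy_eq V hV u v P huV hvV hPV hu1 hv1]
    have hn0' : 0 < 1 - ⟪P,v⟫^2 := by rw [← hzv_eq, ← hn]; exact hn0
    have hm0 : 0 < 1 - ‖P‖^2 := by nlinarith [norm_nonneg P]
    rw [hn, hzv_eq]
    have hdiv : (1 - ⟪u,v⟫^2)*(‖P‖^2 - ⟪P,v⟫^2)/(1 - ⟪P,v⟫^2)*(1 - ⟪P,v⟫^2)
        = (1 - ⟪u,v⟫^2)*(‖P‖^2 - ⟪P,v⟫^2) := div_mul_cancel₀ _ hn0'.ne'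
    nlinarith [hA, hm0, hn0', hdiv, mul_pos (sub_pos.mpr hA) hm0]
  have hle := SG.proj_min W u q hqW
  refine ⟨hunotW, ?_⟩
  nlinarith [norm_nonneg (u - (Submodule.orthogonalProjectionOnto W u : E)), norm_nonneg (u - q),
    norm_nonneg (z - P), hle, hfin]

lemma SG.pair_indep (a b : E) (ha : ‖a‖ = 1) (hb : ‖b‖ = 1) (hne : a ≠ b) (hne' : a ≠ -b) :
    LinearIndependent ℝ ![a, b] := by
  rw [linearIndependent_fin2]
  simp only [Matrix.cons_val_one, Matrix.head_cons, Matrix.cons_val_zero]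
  refine ⟨fun h => ?_, fun c h => ?_⟩
  · rw [h] at hb; simp at hb
  · have habs : |c| = 1 := by
      have h1 : ‖c • b‖ = 1 := by rw [h, ha]
      rwa [norm_smul, hb, mul_one, Real.norm_eq_abs] at h1
    rcases (abs_eq (by norm_num : (0:ℝ) ≤ 1)).mp habs with h1 | h1
    · exact hne (by rw [← h, h1, one_smul])
    · exact hne' (by rw [← h, h1, neg_one_smul])

lemma SG.span_pair_two (a b : E) (ha : ‖a‖ = 1) (hb : ‖b‖ = 1) (hne : a ≠ b) (hne' : a ≠ -b) :
    Module.finrank ℝ (Submodule.span ℝ ({a, b} : Set E)) = 2 := by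
  have hi := SG.pair_indep a b ha hb hne hne'
  have hr : ({a, b} : Set E) = Set.range ![a, b] := by
    simp [Matrix.range_cons, Matrix.range_empty]
    exact Set.pair_comm a b
  rw [hr, finrank_span_eq_card hi]
  simp

lemma SG.exists_plane (hd3 : 3 ≤ Module.finrank ℝ E) (v : E) (hv : v ≠ 0) :
    ∃ V : Submodule ℝ E, Module.finrank ℝ V = 2 ∧ v ∈ V := by
  have hne : Submodule.span ℝ ({v} : Set E) ≠ ⊤ := by
    intro h
    have h1 : Module.finrank ℝ (Submodule.span ℝ ({v} : Set E)) = 1 :=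
      finrank_span_singleton hv
    rw [h, finrank_top] at h1
    omega
  obtain ⟨w, -, hw⟩ := SetLike.exists_of_lt
    (show Submodule.span ℝ ({v} : Set E) < ⊤ from lt_top_iff_ne_top.mpr hne)
  have hi : LinearIndependent ℝ ![v, w] := by
    rw [linearIndependent_fin2]
    simp only [Matrix.cons_val_one, Matrix.head_cons, Matrix.cons_val_zero]
    refine ⟨fun h => hw ?_, fun c h => hw ?_⟩
    · rw [h]; exact Submodule.zero_mem _
    · by_cases hc : c = 0
      · rw [hc, zero_smul] at h
        exact (hv h.symm).elim
      · have hww : w = c⁻¹ • v := by rw [← h, smul_smul, inv_mul_cancel₀ hc, one_smul]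
        rw [hww]
        exact Submodule.smul_mem _ c⁻¹ (Submodule.mem_span_singleton_self v)
  refine ⟨Submodule.span ℝ ({v, w} : Set E), ?_, Submodule.subset_span (Set.mem_insert _ _)⟩
  have hr : ({v, w} : Set E) = Set.range ![v, w] := by
    simp [Matrix.range_cons, Matrix.range_empty]
    exact Set.pair_comm v w
  rw [hr, finrank_span_eq_card hi]
  simp

end Aux

/-- **Spherical Sylvester–Gallai theorem**: if a finite set of points on `S^d` (`d ≥ 2`) contains
no pair of antipodal points, and for every two distinct points of the set the great circle through
them (the intersection of the sphere with the linear span of the two points) contains a third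
point of the set, then all points lie on one great circle. -/
theorem spherical_sylvester_gallai (d : ℕ) (hd : 2 ≤ d) (Z : Finset (Sphere d))
    (hanti : ∀ x ∈ Z, ∀ y ∈ Z,
      (y : EuclideanSpace ℝ (Fin (d + 1))) ≠ -(x : EuclideanSpace ℝ (Fin (d + 1))))
    (hcol : ∀ x ∈ Z, ∀ y ∈ Z, x ≠ y → ∃ w ∈ Z, w ≠ x ∧ w ≠ y ∧
      (w : EuclideanSpace ℝ (Fin (d + 1))) ∈ Submodule.span ℝ
        ({(x : EuclideanSpace ℝ (Fin (d + 1))), (y : EuclideanSpace ℝ (Fin (d + 1)))} :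
          Set (EuclideanSpace ℝ (Fin (d + 1))))) :
    ∃ V : Submodule ℝ (EuclideanSpace ℝ (Fin (d + 1))), Module.finrank ℝ V = 2 ∧
      ∀ w ∈ Z, (w : EuclideanSpace ℝ (Fin (d + 1))) ∈ V := by
  classical
  by_contra hcon
  have hnorm : ∀ w : Sphere d, ‖(w : EuclideanSpace ℝ (Fin (d + 1)))‖ = 1 :=
    fun w => mem_sphere_zero_iff_norm.mp w.2
  have hfrE : Module.finrank ℝ (EuclideanSpace ℝ (Fin (d + 1))) = d + 1 :=
    finrank_euclideanSpace_fin
  have hd3 : 3 ≤ Module.finrank ℝ (EuclideanSpace ℝ (Fin (d + 1))) := by rw [hfrE]; omega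
  have hcoe_ne : ∀ {u v : Sphere d}, u ≠ v →
      (u : EuclideanSpace ℝ (Fin (d + 1))) ≠ (v : EuclideanSpace ℝ (Fin (d + 1))) :=
    fun h h' => h (Subtype.ext h')
  by_cases hpair : ∃ x ∈ Z, ∃ y ∈ Z, x ≠ y
  swap
  · push_neg at hpair
    rcases Finset.eq_empty_or_nonempty Z with hZ | ⟨z₀, hz₀⟩
    · have : Nontrivial (EuclideanSpace ℝ (Fin (d + 1))) :=
        Module.nontrivial_of_finrank_pos (R := ℝ) (by omega)
      obtain ⟨v, hv⟩ := exists_ne (0 : EuclideanSpace ℝ (Fin (d + 1)))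
      obtain ⟨V, hV2, -⟩ := SG.exists_plane hd3 v hv
      exact hcon ⟨V, hV2, by simp [hZ]⟩
    · have hz0 : (z₀ : EuclideanSpace ℝ (Fin (d + 1))) ≠ 0 := by
        intro h
        have := hnorm z₀
        rw [h] at this
        simp at this
      obtain ⟨V, hV2, hmem⟩ := SG.exists_plane hd3 _ hz0
      refine hcon ⟨V, hV2, fun w hw => ?_⟩
      have hwz : w = z₀ := hpair w hw z₀ hz₀
      rw [hwz]; exact hmem
  obtain ⟨x₀, hx₀, y₀, hy₀, hxy₀⟩ := hpair
  have hspan2 : ∀ x ∈ Z, ∀ y ∈ Z, x ≠ y →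
      Module.finrank ℝ (Submodule.span ℝ
        ({(x : EuclideanSpace ℝ (Fin (d + 1))), (y : EuclideanSpace ℝ (Fin (d + 1)))} :
          Set (EuclideanSpace ℝ (Fin (d + 1))))) = 2 :=
    fun x hx y hy hne => SG.span_pair_two _ _ (hnorm x) (hnorm y) (hcoe_ne hne) (hanti y hy x hx)
  have hex : ∃ z ∈ Z, (z : EuclideanSpace ℝ (Fin (d + 1))) ∉ Submodule.span ℝ
      ({(x₀ : EuclideanSpace ℝ (Fin (d + 1))), (y₀ : EuclideanSpace ℝ (Fin (d + 1)))} :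
        Set (EuclideanSpace ℝ (Fin (d + 1)))) := by
    by_contra hall
    push_neg at hall
    exact hcon ⟨_, hspan2 x₀ hx₀ y₀ hy₀ hxy₀, hall⟩
  obtain ⟨z₀, hz₀Z, hz₀⟩ := hex
  set f : Sphere d × Sphere d × Sphere d → ℝ := fun t =>
    ‖(t.1 : EuclideanSpace ℝ (Fin (d + 1))) -
      (Submodule.orthogonalProjectionOnto (Submodule.span ℝ
        ({(t.2.1 : EuclideanSpace ℝ (Fin (d + 1))), (t.2.2 : EuclideanSpace ℝ (Fin (d + 1)))} :
          Set (EuclideanSpace ℝ (Fin (d + 1)))))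
        (t.1 : EuclideanSpace ℝ (Fin (d + 1))) : EuclideanSpace ℝ (Fin (d + 1)))‖ with hf
  set T : Finset (Sphere d × Sphere d × Sphere d) :=
    (Z ×ˢ Z ×ˢ Z).filter (fun t => t.2.1 ≠ t.2.2 ∧
      (t.1 : EuclideanSpace ℝ (Fin (d + 1))) ∉ Submodule.span ℝ
        ({(t.2.1 : EuclideanSpace ℝ (Fin (d + 1))), (t.2.2 : EuclideanSpace ℝ (Fin (d + 1)))} :
          Set (EuclideanSpace ℝ (Fin (d + 1))))) with hT
  have hTne : T.Nonempty := by
    refine ⟨(z₀, x₀, y₀), ?_⟩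
    rw [hT, Finset.mem_filter]
    refine ⟨?_, hxy₀, hz₀⟩
    simp only [Finset.mem_product]
    exact ⟨hz₀Z, hx₀, hy₀⟩
  obtain ⟨t, htT, hmin⟩ := T.exists_min_image f hTne
  obtain ⟨z, x, y⟩ := t
  rw [hT, Finset.mem_filter] at htT
  obtain ⟨hprod, hxyne, hznot⟩ := htT
  simp only [Finset.mem_product] at hprod
  obtain ⟨hzZ, hxZ, hyZ⟩ := hprod
  set V : Submodule ℝ (EuclideanSpace ℝ (Fin (d + 1))) := Submodule.span ℝ
    ({(x : EuclideanSpace ℝ (Fin (d + 1))), (y : EuclideanSpace ℝ (Fin (d + 1)))} :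
      Set (EuclideanSpace ℝ (Fin (d + 1)))) with hVdef
  have hV2 : Module.finrank ℝ V = 2 := hspan2 x hxZ y hyZ hxyne
  obtain ⟨w, hwZ, hwx, hwy, hwV⟩ := hcol x hxZ y hyZ hxyne
  set P : EuclideanSpace ℝ (Fin (d + 1)) :=
    (Submodule.orthogonalProjectionOnto V (z : EuclideanSpace ℝ (Fin (d + 1))) :
      EuclideanSpace ℝ (Fin (d + 1))) with hPdef
  have hPm : ‖P‖ < 1 := by
    rw [hPdef]
    exact (SG.normP_lt_one V _ (hnorm z) hznot).1
  have hxV : (x : EuclideanSpace ℝ (Fin (d + 1))) ∈ V := Submodule.subset_span (mem_insert _ _)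
  have hyV : (y : EuclideanSpace ℝ (Fin (d + 1))) ∈ V :=
    Submodule.subset_span (mem_insert_of_mem _ rfl)
  have key : ∀ u v : Sphere d, u ∈ Z → v ∈ Z →
      (u : EuclideanSpace ℝ (Fin (d + 1))) ∈ V → (v : EuclideanSpace ℝ (Fin (d + 1))) ∈ V →
      u ≠ v →
      ⟪P, (v : EuclideanSpace ℝ (Fin (d + 1)))⟫^2 <
        ⟪(u : EuclideanSpace ℝ (Fin (d + 1))), (v : EuclideanSpace ℝ (Fin (d + 1)))⟫^2 →
      False := by
    intro u v huZ hvZ huV hvV huvne hA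
    obtain ⟨hnot, hlt⟩ := SG.step V hV2 _ _ _ (hnorm z) (hnorm u) (hnorm v)
      huV hvV hznot (hcoe_ne huvne) (hanti v hvZ u huZ) hA
    have hzv : z ≠ v := by
      intro h
      exact hznot (by rw [h]; exact hvV)
    have hmemT : (u, z, v) ∈ T := by
      rw [hT, Finset.mem_filter]
      refine ⟨?_, hzv, hnot⟩
      simp only [Finset.mem_product]
      exact ⟨huZ, hzZ, hvZ⟩
    have hcomp := hmin _ hmemT
    rw [hf] at hcomp
    simp only at hcomp
    rw [← hVdef, ← hPdef] at hcomp
    exact absurd (lt_of_lt_of_le hlt hcomp) (lt_irrefl _)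
  have comm : ∀ a b : EuclideanSpace ℝ (Fin (d + 1)), ⟪a,b⟫^2 = ⟪b,a⟫^2 :=
    fun a b => by rw [real_inner_comm]
  have hlem := SG.lemA V hV2 P
    (x : EuclideanSpace ℝ (Fin (d + 1))) (y : EuclideanSpace ℝ (Fin (d + 1)))
    (w : EuclideanSpace ℝ (Fin (d + 1)))
    (by rw [hPdef]; exact SetLike.coe_mem _) hxV hyV hwV hPm (hnorm x) (hnorm y) (hnorm w)
  rcases hlem with h|h|h|h|h|h
  · refine key y x hyZ hxZ hyV hxV (fun e => hxyne e.symm) ?_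
    rw [comm (y : EuclideanSpace ℝ (Fin (d + 1))) (x : EuclideanSpace ℝ (Fin (d + 1)))]
    exact h
  · exact key x y hxZ hyZ hxV hyV hxyne h
  · refine key w x hwZ hxZ hwV hxV hwx ?_
    rw [comm (w : EuclideanSpace ℝ (Fin (d + 1))) (x : EuclideanSpace ℝ (Fin (d + 1)))]
    exact h
  · exact key x w hxZ hwZ hxV hwV (fun e => hwx e.symm) h
  · refine key w y hwZ hyZ hwV hyV hwy ?_
    rw [comm (w : EuclideanSpace ℝ (Fin (d + 1))) (y : EuclideanSpace ℝ (Fin (d + 1)))]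
    exact h
  · exact key y w hyZ hwZ hyV hwV (fun e => hwy e.symm) h
end
end
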